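/- arXiv:1410.6601 — 5 statements merged into one kernel-verified Lean document; each statement's English description precedes it below -/
import Mathlib

section
/- If p(x) = a_0 + a_1 x + ... + a_n x^n is a polynomial with nonnegative real coefficients all of whose roots are real, then the sequence b_k = a_k / C(n,k) is log-concave: b_k^2 ≥ b_{k-1} b_{k+1} for all 1 ≤ k ≤ n-1. -/
open Polynomial

/-- The derivative of a real polynomial that splits also splits (Rolle). -/
lemma splits_derivative_of_splits {p : ℝ[X]} (hp : p.Splits) :
    (derivative p).Splits := by
  by_cases hd : derivative p = 0
  · rw [hd]; exact Splits.zero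
  have hdn : p.natDegree ≠ 0 := by
    intro h
    exact hd (by rw [eq_C_of_natDegree_eq_zero h]; simp)
  have h1 : Multiset.card p.roots = p.natDegree := splits_iff_card_roots.mp hp
  have h2 := p.card_roots_le_derivative
  have h3 : Multiset.card (derivative p).roots ≤ (derivative p).natDegree := card_roots' _
  have h4 : (derivative p).natDegree ≤ p.natDegree - 1 := natDegree_derivative_le p
  exact splits_iff_card_roots.mpr (by omega)

lemma splits_iterate_derivative_of_splits (t : ℕ) {p : ℝ[X]}
    (hp : p.Splits) :
    (derivative^[t] p).Splits := by
  induction t with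
  | zero => exact hp
  | succ t ih =>
    rw [Function.iterate_succ_apply']
    exact splits_derivative_of_splits ih

/-- Reflection of a splitting polynomial splits. -/
lemma splits_reflect_of_splits :
    ∀ (d : ℕ) (p : ℝ[X]), p.natDegree = d → ∀ N, p.natDegree ≤ N →
      p.Splits → (reflect N p).Splits := by
  intro d
  induction d using Nat.strong_induction_on with
  | _ d ih =>
    intro p hd N hN hp
    by_cases h0 : p.natDegree = 0
    · obtain ⟨c, rfl⟩ := natDegree_eq_zero.mp h0
      rw [reflect_C]
      exact Splits.mul (Splits.C _) (Splits.X_pow _)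
    · have hp0 : p ≠ 0 := fun h => h0 (by simp [h])
      have hdeg : p.degree ≠ 0 := degree_ne_of_natDegree_ne h0
      obtain ⟨x, hx⟩ := Splits.exists_eval_eq_zero hp hdeg
      have hx' : p.IsRoot x := by simpa using hx
      set q := p /ₘ (X - C x) with hq
      have hfac : (X - C x) * q = p := (mul_divByMonic_eq_iff_isRoot).mpr hx'
      have hqd : q.natDegree = p.natDegree - 1 := by
        rw [hq, natDegree_divByMonic p (monic_X_sub_C x), natDegree_X_sub_C]
      have hN1 : 1 ≤ N := le_trans (by omega) hN
      have hsplit_q : q.Splits := by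
        have := (splits_mul (X_sub_C_ne_zero x) (right_ne_zero_of_mul (show (X - C x) * q ≠ 0 by rw [hfac]; exact hp0))).mp (show ((X - C x) * q).Splits by rw [hfac]; exact hp)
        exact this.2
      have hrefl : reflect N p = reflect 1 (X - C x) * reflect (N - 1) q := by
        have hm := reflect_mul (X - C x) q (F := 1) (G := N - 1)
          (le_of_eq (natDegree_X_sub_C x)) (by omega)
        rw [show 1 + (N - 1) = N by omega] at hm
        rw [← hfac]
        exact hm
      rw [hrefl]
      refine Splits.mul (Splits.of_natDegree_le_one ?_) ?_
      · rw [natDegree_le_iff_coeff_eq_zero]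
        intro i hi
        rw [coeff_reflect, revAt_eq_self_of_lt hi]
        exact coeff_eq_zero_of_natDegree_lt (by rw [natDegree_X_sub_C]; omega)
      · exact ih (p.natDegree - 1) (by omega) q hqd (N - 1) (by omega) hsplit_q

/-- A real polynomial all of whose complex roots are real splits over ℝ. -/
lemma splits_of_complex_roots_real :
    ∀ (d : ℕ) (p : ℝ[X]), p.natDegree = d →
      (∀ z : ℂ, aeval z p = 0 → z.im = 0) → p.Splits := by
  intro d
  induction d using Nat.strong_induction_on with
  | _ d ih =>
    intro p hd hroots
    by_cases h0 : p.natDegree = 0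
    · exact Splits.of_natDegree_le_one (by omega)
    · have hp0 : p ≠ 0 := fun h => h0 (by simp [h])
      have hdegpos : 0 < (p.map (algebraMap ℝ ℂ)).degree := by
        rw [degree_map]
        exact natDegree_pos_iff_degree_pos.mp (Nat.pos_of_ne_zero h0)
      obtain ⟨z, hz⟩ := Complex.exists_root hdegpos
      have hz0 : aeval z p = 0 := by
        rw [aeval_def, ← eval_map]; exact hz
      have him : z.im = 0 := hroots z hz0
      have hzre : z = ((z.re : ℝ) : ℂ) := Complex.ext rfl (by simp [him])
      have hx : p.IsRoot z.re := by
        have h2 : ((p.eval z.re : ℝ) : ℂ) = 0 := by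
          have h3 := hz0
          rw [hzre, aeval_def] at h3
          rwa [show ((z.re : ℝ) : ℂ) = algebraMap ℝ ℂ z.re from rfl,
            eval₂_at_apply] at h3
        exact_mod_cast h2
      set x := z.re
      set q := p /ₘ (X - C x) with hq
      have hfac : (X - C x) * q = p := (mul_divByMonic_eq_iff_isRoot).mpr hx
      have hqd : q.natDegree = p.natDegree - 1 := by
        rw [hq, natDegree_divByMonic p (monic_X_sub_C x), natDegree_X_sub_C]
      have hqroots : ∀ w : ℂ, aeval w q = 0 → w.im = 0 := by
        intro w hw
        refine hroots w ?_
        rw [← hfac, map_mul, hw, mul_zero]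
      have hsq : q.Splits :=
        ih (p.natDegree - 1) (by omega) q hqd hqroots
      rw [← hfac]
      exact Splits.mul (Splits.X_sub_C _) hsq

/-- A real polynomial of degree at most two that splits has nonnegative
discriminant. -/
lemma discrim_nonneg_of_splits (s : ℝ[X]) (hs : s.Splits)
    (hdeg : s.natDegree ≤ 2) :
    4 * (s.coeff 0 * s.coeff 2) ≤ s.coeff 1 ^ 2 := by
  by_cases hc2 : s.coeff 2 = 0
  · rw [hc2, mul_zero, mul_zero]; positivity
  · have hd2 : s.natDegree = 2 :=
      le_antisymm hdeg (le_natDegree_of_ne_zero hc2)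
    have hs0 : s ≠ 0 := fun h => hc2 (by simp [h])
    have hcard : Multiset.card s.roots = 2 := by
      rw [splits_iff_card_roots.mp hs, hd2]
    obtain ⟨r1, r2, hr⟩ := Multiset.card_eq_two.mp hcard
    have hrepr := hs.eq_prod_roots
    rw [hr] at hrepr
    simp only [Multiset.insert_eq_cons, Multiset.map_cons, Multiset.map_singleton,
      Multiset.prod_cons, Multiset.prod_singleton] at hrepr
    have hlc : s.leadingCoeff = s.coeff 2 := by
      rw [leadingCoeff, hd2]
    rw [hlc] at hrepr
    have hexp : s = C (s.coeff 2) * X ^ 2 - C (s.coeff 2 * (r1 + r2)) * X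
        + C (s.coeff 2 * (r1 * r2)) := by
      conv_lhs => rw [hrepr]
      simp only [C_mul, C_add]
      ring
    have h0 : s.coeff 0 = s.coeff 2 * (r1 * r2) := by
      conv_lhs => rw [hexp]
      simp
    have h1 : s.coeff 1 = -(s.coeff 2 * (r1 + r2)) := by
      conv_lhs => rw [hexp]
      simp [coeff_X_pow]
    rw [h0, h1]
    nlinarith [sq_nonneg (s.coeff 2 * (r1 - r2))]

theorem normalized_coeffs_log_concave_of_real_rooted
    (n : ℕ) (a : ℕ → ℝ) (ha : ∀ k, k ≤ n → 0 ≤ a k)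
    (hroots : ∀ z : ℂ,
      aeval z (∑ k ∈ Finset.range (n + 1), C (a k) * X ^ k) = 0 → z.im = 0)
    (k : ℕ) (hk : 1 ≤ k) (hkn : k ≤ n - 1) :
    (a (k - 1) / (n.choose (k - 1) : ℝ)) * (a (k + 1) / (n.choose (k + 1) : ℝ)) ≤
      (a k / (n.choose k : ℝ)) ^ 2 := by
  -- Reindex: k = j + 1, n = j + t + 2
  obtain ⟨j, rfl⟩ : ∃ j, k = j + 1 := ⟨k - 1, by omega⟩
  obtain ⟨t, rfl⟩ : ∃ t, n = j + t + 2 := ⟨n - j - 2, by omega⟩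
  set n := j + t + 2 with hn
  set p : ℝ[X] := ∑ i ∈ Finset.range (n + 1), C (a i) * X ^ i with hp
  have hcoeff : ∀ i, i ≤ n → p.coeff i = a i := by
    intro i hi
    rw [hp, finset_sum_coeff]
    simp only [coeff_C_mul, coeff_X_pow, mul_ite, mul_one, mul_zero]
    rw [Finset.sum_ite_eq (Finset.range (n + 1)) i a]
    simp [Nat.lt_succ_of_le hi]
  have hdeg : p.natDegree ≤ n := by
    refine natDegree_sum_le_of_forall_le _ _ fun i hi => ?_
    refine (natDegree_C_mul_X_pow_le (a i) i).trans ?_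
    simp only [Finset.mem_range] at hi; omega
  have hsplits : p.Splits :=
    splits_of_complex_roots_real p.natDegree p rfl hroots
  -- q = p^{(j)}
  set q : ℝ[X] := derivative^[j] p with hq
  have hqdeg : q.natDegree ≤ t + 2 := by
    refine (natDegree_iterate_derivative _ _).trans ?_
    omega
  have hqs : q.Splits := splits_iterate_derivative_of_splits j hsplits
  set r : ℝ[X] := reflect (t + 2) q with hr
  have hrdeg : r.natDegree ≤ t + 2 := by
    rw [natDegree_le_iff_coeff_eq_zero]
    intro i hi
    rw [hr, coeff_reflect, revAt_eq_self_of_lt hi]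
    exact coeff_eq_zero_of_natDegree_lt (by omega)
  have hrs : r.Splits :=
    splits_reflect_of_splits q.natDegree q rfl (t + 2) hqdeg hqs
  set s : ℝ[X] := derivative^[t] r with hs
  have hsdeg : s.natDegree ≤ 2 := by
    refine (natDegree_iterate_derivative _ _).trans ?_
    omega
  have hss : s.Splits := splits_iterate_derivative_of_splits t hrs
  have key := discrim_nonneg_of_splits s hss hsdeg
  -- coefficients of q
  have hqc : ∀ i : ℕ, i + j ≤ n →
      q.coeff i = ((i + j).descFactorial j : ℝ) * a (i + j) := by
    intro i hi
    rw [hq, coeff_iterate_derivative, nsmul_eq_mul, hcoeff _ hi]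
  have hq0 : q.coeff 0 = (j.factorial : ℝ) * a j := by
    rw [hqc 0 (by omega)]
    norm_num [Nat.descFactorial_self]
  have hq1 : q.coeff 1 = ((j + 1).factorial : ℝ) * a (j + 1) := by
    rw [hqc 1 (by omega)]
    have h := Nat.factorial_mul_descFactorial (show j ≤ j + 1 by omega)
    rw [show j + 1 - j = 1 by omega] at h
    simp only [Nat.factorial_one, one_mul] at h
    rw [show 1 + j = j + 1 by omega, h]
  have hq2 : q.coeff 2 = ((j + 2).descFactorial j : ℝ) * a (j + 2) := by
    rw [hqc 2 (by omega), show 2 + j = j + 2 by omega]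
  have hdf2j : ((j + 2).factorial : ℝ) = 2 * ((j + 2).descFactorial j : ℝ) := by
    have h := Nat.factorial_mul_descFactorial (show j ≤ j + 2 by omega)
    rw [show j + 2 - j = 2 by omega, show (2 : ℕ).factorial = 2 by decide] at h
    exact_mod_cast h.symm
  -- coefficients of r
  have hr0 : r.coeff (0 + t) = q.coeff 2 := by
    rw [hr, coeff_reflect, revAt_le (by omega : 0 + t ≤ t + 2)]
    congr 1; omega
  have hr1 : r.coeff (1 + t) = q.coeff 1 := by
    rw [hr, coeff_reflect, revAt_le (by omega : 1 + t ≤ t + 2)]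
    congr 1; omega
  have hr2 : r.coeff (2 + t) = q.coeff 0 := by
    rw [hr, coeff_reflect, revAt_le (by omega : 2 + t ≤ t + 2)]
    congr 1; omega
  -- coefficients of s
  have hs0 : s.coeff 0 = (t.factorial : ℝ) * q.coeff 2 := by
    rw [hs, coeff_iterate_derivative, nsmul_eq_mul, hr0]
    norm_num [Nat.descFactorial_self]
  have hs1 : s.coeff 1 = ((t + 1).factorial : ℝ) * q.coeff 1 := by
    rw [hs, coeff_iterate_derivative, nsmul_eq_mul, hr1]
    have h := Nat.factorial_mul_descFactorial (show t ≤ t + 1 by omega)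
    rw [show t + 1 - t = 1 by omega] at h
    simp only [Nat.factorial_one, one_mul] at h
    rw [show 1 + t = t + 1 by omega, h]
  have hs2 : s.coeff 2 = ((t + 2).descFactorial t : ℝ) * q.coeff 0 := by
    rw [hs, coeff_iterate_derivative, nsmul_eq_mul, hr2, show 2 + t = t + 2 by omega]
  have hdf2t : ((t + 2).factorial : ℝ) = 2 * ((t + 2).descFactorial t : ℝ) := by
    have h := Nat.factorial_mul_descFactorial (show t ≤ t + 2 by omega)
    rw [show t + 2 - t = 2 by omega, show (2 : ℕ).factorial = 2 by decide] at h
    exact_mod_cast h.symm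
  -- the central inequality
  have hI : ((t.factorial : ℝ) * ((j + 2).factorial : ℝ)
        * (((t + 2).factorial : ℝ) * (j.factorial : ℝ))) * (a j * a (j + 2)) ≤
      ((((t + 1).factorial : ℝ) * ((j + 1).factorial : ℝ)) * a (j + 1)) ^ 2 := by
    calc ((t.factorial : ℝ) * ((j + 2).factorial : ℝ)
        * (((t + 2).factorial : ℝ) * (j.factorial : ℝ))) * (a j * a (j + 2))
        = 4 * (s.coeff 0 * s.coeff 2) := by
          rw [hs0, hs2, hq0, hq2, hdf2j, hdf2t]; ring
      _ ≤ s.coeff 1 ^ 2 := key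
      _ = ((((t + 1).factorial : ℝ) * ((j + 1).factorial : ℝ)) * a (j + 1)) ^ 2 := by
          rw [hs1, hq1]; ring
  -- choose identities
  have e0 : n.choose j * j.factorial * (t + 2).factorial = n.factorial := by
    have h := Nat.choose_mul_factorial_mul_factorial (show j ≤ n by omega)
    rwa [show n - j = t + 2 by omega] at h
  have e1 : n.choose (j + 1) * (j + 1).factorial * (t + 1).factorial = n.factorial := by
    have h := Nat.choose_mul_factorial_mul_factorial (show j + 1 ≤ n by omega)
    rwa [show n - (j + 1) = t + 1 by omega] at h
  have e2 : n.choose (j + 2) * (j + 2).factorial * t.factorial = n.factorial := by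
    have h := Nat.choose_mul_factorial_mul_factorial (show j + 2 ≤ n by omega)
    rwa [show n - (j + 2) = t by omega] at h
  have e0' : ((n.choose j : ℝ)) * (j.factorial : ℝ) * ((t + 2).factorial : ℝ)
      = (n.factorial : ℝ) := by exact_mod_cast congrArg (Nat.cast (R := ℝ)) e0
  have e1' : ((n.choose (j + 1) : ℝ)) * ((j + 1).factorial : ℝ) * ((t + 1).factorial : ℝ)
      = (n.factorial : ℝ) := by exact_mod_cast congrArg (Nat.cast (R := ℝ)) e1
  have e2' : ((n.choose (j + 2) : ℝ)) * ((j + 2).factorial : ℝ) * (t.factorial : ℝ)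
      = (n.factorial : ℝ) := by exact_mod_cast congrArg (Nat.cast (R := ℝ)) e2
  -- reduce the goal
  rw [show j + 1 - 1 = j by omega, show j + 1 + 1 = j + 2 by omega]
  have hc0 : (0 : ℝ) < (n.choose j : ℝ) := by
    exact_mod_cast Nat.choose_pos (show j ≤ n by omega)
  have hc1 : (0 : ℝ) < (n.choose (j + 1) : ℝ) := by
    exact_mod_cast Nat.choose_pos (show j + 1 ≤ n by omega)
  have hc2 : (0 : ℝ) < (n.choose (j + 2) : ℝ) := by
    exact_mod_cast Nat.choose_pos (show j + 2 ≤ n by omega)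
  rw [div_mul_div_comm, div_pow, div_le_div_iff₀ (by positivity) (by positivity)]
  -- final manipulation
  have hEqR : ((n.choose (j + 1) : ℝ)) ^ 2
        * (((t + 1).factorial : ℝ) * ((j + 1).factorial : ℝ)) ^ 2
      = ((n.choose j : ℝ) * (n.choose (j + 2) : ℝ))
        * (((j.factorial : ℝ) * ((t + 2).factorial : ℝ))
          * (((j + 2).factorial : ℝ) * (t.factorial : ℝ))) := by
    calc ((n.choose (j + 1) : ℝ)) ^ 2
        * (((t + 1).factorial : ℝ) * ((j + 1).factorial : ℝ)) ^ 2
        = ((n.choose (j + 1) : ℝ) * ((j + 1).factorial : ℝ) * ((t + 1).factorial : ℝ)) ^ 2 := by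
          ring
      _ = (n.factorial : ℝ) ^ 2 := by rw [e1']
      _ = ((n.choose j : ℝ) * (j.factorial : ℝ) * ((t + 2).factorial : ℝ))
          * ((n.choose (j + 2) : ℝ) * ((j + 2).factorial : ℝ) * (t.factorial : ℝ)) := by
          rw [e0', e2']; ring
      _ = _ := by ring
  set P : ℝ := ((j.factorial : ℝ) * ((t + 2).factorial : ℝ))
    * (((j + 2).factorial : ℝ) * (t.factorial : ℝ)) with hP
  have hPpos : 0 < P := by positivity
  refine le_of_mul_le_mul_right ?_ hPpos
  calc a j * a (j + 2) * ((n.choose (j + 1) : ℝ)) ^ 2 * P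
      = ((n.choose (j + 1) : ℝ)) ^ 2
        * (((t.factorial : ℝ) * ((j + 2).factorial : ℝ)
          * (((t + 2).factorial : ℝ) * (j.factorial : ℝ))) * (a j * a (j + 2))) := by
        rw [hP]; ring
    _ ≤ ((n.choose (j + 1) : ℝ)) ^ 2
        * (((((t + 1).factorial : ℝ) * ((j + 1).factorial : ℝ)) * a (j + 1)) ^ 2) := by
        exact mul_le_mul_of_nonneg_left hI (sq_nonneg _)
    _ = a (j + 1) ^ 2 * ((n.choose j : ℝ) * (n.choose (j + 2) : ℝ)) * P := by
        rw [hP]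
        linear_combination (a (j + 1)) ^ 2 * hEqR
end

section
/- For every n ≥ 1, the polynomial E_n(x) = Σ_{k=1}^n k!·S(n,k)·x^k has only real roots, all lying in the interval [-1,0]. -/
open Polynomial

/-- Stirling numbers of the second kind. -/
def stirling2 : ℕ → ℕ → ℕ
  | 0, 0 => 1
  | 0, _ + 1 => 0
  | _ + 1, 0 => 0
  | n + 1, k + 1 => (k + 1) * stirling2 n (k + 1) + stirling2 n k

lemma stirling2_succ_succ (n k : ℕ) :
    stirling2 (n + 1) (k + 1) = (k + 1) * stirling2 n (k + 1) + stirling2 n k := rfl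

lemma stirling2_zero_right (n : ℕ) (hn : 1 ≤ n) : stirling2 n 0 = 0 := by
  cases n with
  | zero => omega
  | succ m => rfl

lemma stirling2_eq_zero_of_lt : ∀ {n k : ℕ}, n < k → stirling2 n k = 0
  | 0, k + 1, _ => rfl
  | n + 1, k + 1, h => by
    rw [stirling2_succ_succ, stirling2_eq_zero_of_lt (by omega),
      stirling2_eq_zero_of_lt (by omega)]
    simp

lemma stirling2_self : ∀ n : ℕ, stirling2 n n = 1
  | 0 => rfl
  | n + 1 => by
    rw [stirling2_succ_succ, stirling2_self n, stirling2_eq_zero_of_lt (lt_add_one n)]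
    simp

/-- The polynomial `E_n`. -/
noncomputable def Pn (n : ℕ) : ℝ[X] :=
  ∑ k ∈ Finset.Icc 1 n, C ((k.factorial * stirling2 n k : ℕ) : ℝ) * X ^ k

lemma coeff_Pn (n : ℕ) (hn : 1 ≤ n) (j : ℕ) :
    (Pn n).coeff j = ((j.factorial * stirling2 n j : ℕ) : ℝ) := by
  rw [Pn, finset_sum_coeff]
  simp only [coeff_C_mul, coeff_X_pow, mul_ite, mul_one, mul_zero]
  rw [Finset.sum_ite_eq (Finset.Icc 1 n) j]
  by_cases hj : j ∈ Finset.Icc 1 n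
  · rw [if_pos hj]
  · rw [if_neg hj]
    rw [Finset.mem_Icc] at hj
    rcases Nat.lt_or_ge j 1 with h1 | h1
    · interval_cases j
      rw [stirling2_zero_right n hn]
      simp
    · rw [stirling2_eq_zero_of_lt (by omega)]
      simp

lemma Pn_one : Pn 1 = X := by
  have h : stirling2 1 1 = 1 := rfl
  simp [Pn, h]

lemma Pn_succ (n : ℕ) (hn : 1 ≤ n) :
    Pn (n + 1) = X * derivative ((X + 1) * Pn n) := by
  ext j
  cases j with
  | zero =>
    rw [coeff_Pn (n + 1) (by omega) 0, stirling2_zero_right (n + 1) (by omega)]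
    simp [mul_coeff_zero]
  | succ j =>
    rw [coeff_Pn (n + 1) (by omega) (j + 1), coeff_X_mul, coeff_derivative, add_mul, one_mul,
      coeff_add, coeff_X_mul, coeff_Pn n hn j, coeff_Pn n hn (j + 1), stirling2_succ_succ]
    push_cast [Nat.factorial_succ]
    ring

/-- Sign lemma for `t` bigger than all roots. -/
lemma eval_prod_pos (t : ℝ) (s : Multiset ℝ) (hs : ∀ r ∈ s, r < t) :
    0 < (s.map (fun r => X - C r)).prod.eval t ∧
      0 ≤ (derivative (s.map (fun r => X - C r)).prod).eval t ∧
      (s ≠ 0 → 0 < (derivative (s.map (fun r => X - C r)).prod).eval t) := by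
  induction s using Multiset.induction with
  | empty => simp
  | cons r s ih =>
    obtain ⟨h1, h2, _⟩ := ih (fun x hx => hs x (Multiset.mem_cons_of_mem hx))
    have hr : r < t := hs r (Multiset.mem_cons_self r s)
    simp only [Multiset.map_cons, Multiset.prod_cons, derivative_mul, derivative_sub,
      derivative_X, derivative_C, sub_zero, one_mul, eval_add, eval_mul, eval_sub, eval_X, eval_C]
    have hpos : 0 < (t - r) := sub_pos.2 hr
    refine ⟨mul_pos hpos h1, ?_, ?_⟩
    · nlinarith
    · intro _
      nlinarith

/-- Sign lemma for `t` smaller than all roots. -/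
lemma eval_prod_sign (t : ℝ) (s : Multiset ℝ) (hs : ∀ r ∈ s, t < r) :
    0 < (-1 : ℝ) ^ (Multiset.card s) * (s.map (fun r => X - C r)).prod.eval t ∧
      0 ≤ (-1 : ℝ) ^ (Multiset.card s + 1) *
        (derivative (s.map (fun r => X - C r)).prod).eval t ∧
      (s ≠ 0 → 0 < (-1 : ℝ) ^ (Multiset.card s + 1) *
        (derivative (s.map (fun r => X - C r)).prod).eval t) := by
  induction s using Multiset.induction with
  | empty => simp
  | cons r s ih =>
    obtain ⟨h1, h2, _⟩ := ih (fun x hx => hs x (Multiset.mem_cons_of_mem hx))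
    have hr : t < r := hs r (Multiset.mem_cons_self r s)
    simp only [Multiset.map_cons, Multiset.prod_cons, derivative_mul, derivative_sub,
      derivative_X, derivative_C, sub_zero, one_mul, eval_add, eval_mul, eval_sub, eval_X, eval_C,
      Multiset.card_cons, pow_succ]
    have hpos : 0 < (r - t) := sub_pos.2 hr
    rw [pow_succ] at h2
    refine ⟨by nlinarith [mul_pos hpos h1], by nlinarith [mul_nonneg hpos.le h2, h1],
      fun _ => by nlinarith [mul_nonneg hpos.le h2, h1]⟩

lemma Pn_props : ∀ n : ℕ, 1 ≤ n →
    (Pn n).natDegree = n ∧ Multiset.card (Pn n).roots = n ∧ Pn n ≠ 0 ∧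
      ∀ r ∈ (Pn n).roots, -1 ≤ r ∧ r ≤ 0 := by
  intro n hn
  induction n with
  | zero => omega
  | succ m ih =>
    rcases Nat.lt_or_ge m 1 with hm | hm
    · interval_cases m
      refine ⟨?_, ?_, ?_, ?_⟩ <;> simp [Pn_one, roots_X]
    · obtain ⟨hdeg, hcard, hne, hroots⟩ := ih hm
      set f : ℝ[X] := (X + 1) * Pn m with hf
      have hx1 : (X + 1 : ℝ[X]) = X + C 1 := by simp
      have hx1ne : (X + 1 : ℝ[X]) ≠ 0 := by
        rw [hx1]; exact X_add_C_ne_zero 1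
      have hfne : f ≠ 0 := mul_ne_zero hx1ne hne
      have hfdeg : f.natDegree = m + 1 := by
        rw [hf, natDegree_mul hx1ne hne, hx1, natDegree_X_add_C, hdeg, add_comm]
      have hxroots : (X + 1 : ℝ[X]).roots = {-1} := by
        have h : (X + 1 : ℝ[X]) = X - C (-1) := by
          rw [C_neg, C_1, sub_neg_eq_add]
        rw [h, roots_X_sub_C]
      have hfroots : f.roots = {-1} + (Pn m).roots := by
        rw [hf, roots_mul (hf ▸ hfne), hxroots]
      have hfcard : Multiset.card f.roots = m + 1 := by
        rw [hfroots, Multiset.card_add, hcard]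
        simp [add_comm]
      have hfmem : ∀ r ∈ f.roots, -1 ≤ r ∧ r ≤ 0 := by
        intro r hr
        rw [hfroots, Multiset.mem_add] at hr
        rcases hr with hr | hr
        · rw [Multiset.mem_singleton] at hr
          subst hr; constructor <;> norm_num
        · exact hroots r hr
      have hfsplits : f.Splits := by
        rw [splits_iff_card_roots, hfcard, hfdeg]
      have hfeq : f = C f.leadingCoeff * (f.roots.map (fun a => X - C a)).prod :=
        Splits.eq_prod_roots hfsplits
      have hlc : f.leadingCoeff ≠ 0 := leadingCoeff_ne_zero.2 hfne
      set g : ℝ[X] := derivative f with hg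
      -- count roots of g
      have hgcount : m + 1 ≤ Multiset.card g.roots + 1 := by
        rw [← hfcard]; exact card_roots_le_derivative f
      have hgne : g ≠ 0 := by
        intro h
        rw [h, roots_zero] at hgcount
        simp at hgcount
        omega
      have hgdegle : g.natDegree ≤ m := by
        have := natDegree_derivative_le f
        rw [hfdeg] at this
        simp only [Nat.add_sub_cancel] at this
        exact this
      have hgcard : Multiset.card g.roots = m := by
        have h1 : Multiset.card g.roots ≤ g.natDegree := card_roots' g
        omega
      have hgdeg : g.natDegree = m := le_antisymm hgdegle (by
        have h1 : Multiset.card g.roots ≤ g.natDegree := card_roots' g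
        omega)
      -- roots of g are in [-1, 0]
      have hgmem : ∀ r ∈ g.roots, -1 ≤ r ∧ r ≤ 0 := by
        intro t ht
        have htroot : g.eval t = 0 := (mem_roots hgne).1 ht
        have heval : (derivative ((f.roots.map (fun a => X - C a)).prod)).eval t = 0 := by
          have : g = C f.leadingCoeff * derivative ((f.roots.map (fun a => X - C a)).prod) := by
            rw [hg]
            conv_lhs => rw [hfeq]
            rw [derivative_mul, derivative_C, zero_mul, zero_add]
          rw [this, eval_mul, eval_C] at htroot
          exact (mul_eq_zero.1 htroot).resolve_left hlc
        have hsne : f.roots ≠ 0 := by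
          intro h
          rw [h] at hfcard
          simp at hfcard
        by_contra hcon
        push_neg at hcon
        rcases le_or_gt (-1 : ℝ) t with h1 | h1
        · have h2 : 0 < t := hcon h1
          have := (eval_prod_pos t f.roots
            (fun r hr => lt_of_le_of_lt (hfmem r hr).2 h2)).2.2 hsne
          rw [heval] at this
          exact lt_irrefl 0 this
        · -- t < -1
          have := (eval_prod_sign t f.roots (fun r hr => lt_of_lt_of_le h1 (hfmem r hr).1)).2.2
            hsne
          rw [heval, mul_zero] at this
          exact lt_irrefl 0 this
      -- now assemble for m + 1
      have hPeq : Pn (m + 1) = X * g := Pn_succ m hm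
      have hXg : (X : ℝ[X]) * g ≠ 0 := mul_ne_zero X_ne_zero hgne
      refine ⟨?_, ?_, ?_, ?_⟩
      · rw [hPeq, natDegree_mul X_ne_zero hgne, natDegree_X, hgdeg]
        omega
      · rw [hPeq, roots_mul hXg, roots_X, Multiset.card_add, hgcard]
        simp only [Multiset.card_singleton]
        omega

      · rw [hPeq]; exact hXg
      · intro r hr
        rw [hPeq, roots_mul hXg, roots_X, Multiset.mem_add] at hr
        rcases hr with hr | hr
        · rw [Multiset.mem_singleton] at hr
          subst hr; constructor <;> norm_num
        · exact hgmem r hr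

theorem En_real_rooted_in_unit_interval (n : ℕ) (hn : 1 ≤ n) :
    ∀ z : ℂ,
      aeval z (∑ k ∈ Finset.Icc 1 n,
          C ((k.factorial * stirling2 n k : ℕ) : ℝ) * X ^ k) = 0 →
      z.im = 0 ∧ -1 ≤ z.re ∧ z.re ≤ 0 := by
  intro z hz
  obtain ⟨hdeg, hcard, hne, hroots⟩ := Pn_props n hn
  have hsplits : (Pn n).Splits := by
    rw [splits_iff_card_roots, hcard, hdeg]
  have hz' : eval z ((Pn n).map (algebraMap ℝ ℂ)) = 0 := by
    rw [eval_map, ← aeval_def]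
    exact hz
  have hmapne : (Pn n).map (algebraMap ℝ ℂ) ≠ 0 := by
    refine (Polynomial.map_ne_zero_iff ?_).2 hne
    exact (algebraMap ℝ ℂ).injective
  have hzroot : z ∈ ((Pn n).map (algebraMap ℝ ℂ)).roots :=
    (mem_roots hmapne).2 hz'
  rw [hsplits.roots_map, Multiset.mem_map] at hzroot
  obtain ⟨r, hr, hrz⟩ := hzroot
  obtain ⟨hr1, hr2⟩ := hroots r hr
  subst hrz
  refine ⟨rfl, ?_, ?_⟩ <;> simpa
end

section
/- If h(x) = Σ_{k=0}^d h_k x^k is a polynomial with nonnegative coefficients, symmetric in the sense that h_k = h_{d-k} for all k, and all roots of h are real, then h is γ-nonnegative: h(x) = Σ_{k=0}^{⌊d/2⌋} γ_k x^k (1+x)^{d-2k} with all γ_k ≥ 0. -/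
open Polynomial

private lemma pair_expand {θ : ℝ} (hθ0 : θ ≠ 0) :
    (X + C θ) * (X + C θ⁻¹) = (1 + X) ^ 2 + C (θ + θ⁻¹ - 2) * X := by
  have hC : (C θ : ℝ[X]) * C θ⁻¹ = 1 := by
    rw [← C_mul, mul_inv_cancel₀ hθ0, map_one]
  rw [map_sub, map_add]
  rw [map_ofNat]
  linear_combination hC

private lemma reverse_X_add_C' (c : ℝ) : (X + C c).reverse = 1 + C c * X := by
  unfold Polynomial.reverse
  rw [natDegree_X_add_C, reflect_add]
  have h1 : reflect 1 (X : ℝ[X]) = 1 := by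
    have := reflect_monomial 1 1 (R := ℝ)
    simpa [revAt_le] using this
  have h2 : reflect 1 (C c : ℝ[X]) = C c * X := by
    have : (C c : ℝ[X]) = C c * X ^ 0 := by ring
    rw [this, reflect_C_mul_X_pow]
    simp [revAt_le]
  rw [h1, h2]

private lemma gamma_main (n : ℕ) : ∀ g : Polynomial ℝ,
    g.natDegree = n → g ≠ 0 → 0 < g.leadingCoeff → g.reverse = g →
    (∀ x : ℝ, 0 ≤ x → g.eval x ≠ 0) →
    (∀ z : ℂ, aeval z g = 0 → z.im = 0) →
    ∃ γ : ℕ → ℝ, (∀ k, 0 ≤ γ k) ∧ (∀ k, n / 2 < k → γ k = 0) ∧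
      g = ∑ k ∈ Finset.range (n / 2 + 1), C (γ k) * X ^ k * (1 + X) ^ (n - 2 * k) := by
  induction n using Nat.strong_induction_on with
  | _ n IH =>
    intro g hdeg hg0 hlead hrev hpos hroots
    by_cases hex : ∃ x : ℝ, g.IsRoot x ∧ x ≠ -1
    · obtain ⟨x, hx, hx1⟩ := hex
      have hxneg : x < 0 := by
        rcases lt_or_ge x 0 with h' | h'
        · exact h'
        · exact absurd hx (hpos x h')
      set θ : ℝ := -x with hθdef
      have hθpos : 0 < θ := by simp only [hθdef]; linarith
      have hθ0 : θ ≠ 0 := hθpos.ne'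
      have hθ1 : θ ≠ 1 := by
        intro hc
        exact hx1 (by rw [← neg_neg x, ← hθdef, hc])
      have hroot1 : g.IsRoot (-θ) := by simpa [hθdef] using hx
      have hroot2 : g.IsRoot (-θ⁻¹) := by
        haveI : Invertible (-θ : ℝ) := invertibleOfNonzero (by simpa using hθ0)
        have h2 : eval₂ (RingHom.id ℝ) (⅟(-θ : ℝ)) (reverse g) = 0 :=
          (eval₂_reverse_eq_zero_iff (RingHom.id ℝ) (-θ) g).mpr hroot1
        rw [hrev] at h2
        have h3 : (⅟(-θ : ℝ)) = -θ⁻¹ := by rw [invOf_eq_inv, inv_neg]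
        rw [h3] at h2
        exact h2
      obtain ⟨q, hq⟩ : (X + C θ) ∣ g := by
        have := (dvd_iff_isRoot (p := g) (a := -θ)).mpr hroot1
        rwa [map_neg, sub_neg_eq_add] at this
      have hqroot : q.IsRoot (-θ⁻¹) := by
        have he : g.eval (-θ⁻¹) = (X + C θ).eval (-θ⁻¹) * q.eval (-θ⁻¹) := by
          rw [hq, eval_mul]
        have hne : (X + C θ).eval (-θ⁻¹) ≠ 0 := by
          simp only [eval_add, eval_X, eval_C]
          intro hc
          have hinv : θ * θ⁻¹ = 1 := mul_inv_cancel₀ hθ0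
          have hsq : θ * θ = 1 := by
            have : θ⁻¹ = θ := by linarith
            nlinarith
          rcases lt_or_gt_of_ne hθ1 with h | h
          · nlinarith
          · nlinarith
        have := hroot2
        rw [IsRoot, he] at this
        exact (mul_eq_zero.mp this).resolve_left hne
      obtain ⟨p, hp⟩ : (X + C θ⁻¹) ∣ q := by
        have := (dvd_iff_isRoot (p := q) (a := -θ⁻¹)).mpr hqroot
        rwa [map_neg, sub_neg_eq_add] at this
      set a : ℝ := θ + θ⁻¹ - 2 with hadef
      have hinv : θ * θ⁻¹ = 1 := mul_inv_cancel₀ hθ0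
      have ha : 0 ≤ a := by
        have h1 : 0 ≤ (θ - 1)^2 * θ⁻¹ :=
          mul_nonneg (sq_nonneg _) (le_of_lt (inv_pos.mpr hθpos))
        have h2 : (θ - 1)^2 * θ⁻¹ = θ - 2 + θ⁻¹ := by field_simp; ring
        rw [h2] at h1
        rw [hadef]
        linarith
      have hgfac : g = (X + C θ) * (X + C θ⁻¹) * p := by rw [hq, hp, mul_assoc]
      have hfac : g = ((1 + X) ^ 2 + C a * X) * p := by
        rw [hgfac, pair_expand hθ0]
      have hp0 : p ≠ 0 := by rintro rfl; rw [mul_zero] at hfac; exact hg0 hfac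
      set m := p.natDegree with hmdef
      have hnm : n = m + 2 := by
        rw [← hdeg, hgfac, natDegree_mul (mul_ne_zero (X_add_C_ne_zero θ)
          (X_add_C_ne_zero θ⁻¹)) hp0,
          natDegree_mul (X_add_C_ne_zero θ) (X_add_C_ne_zero θ⁻¹),
          natDegree_X_add_C, natDegree_X_add_C]
        ring
      have hpl : 0 < p.leadingCoeff := by
        have : g.leadingCoeff = p.leadingCoeff := by
          rw [hgfac, leadingCoeff_mul, leadingCoeff_mul, leadingCoeff_X_add_C,
            leadingCoeff_X_add_C]
          ring
        rwa [this] at hlead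
      have hrevp : p.reverse = p := by
        have hC : (C θ : ℝ[X]) * C θ⁻¹ = 1 := by
          rw [← C_mul, hinv, map_one]
        have h1 : g.reverse = (X + C θ) * (X + C θ⁻¹) * p.reverse := by
          rw [hgfac, reverse_mul_of_domain, reverse_mul_of_domain,
            reverse_X_add_C', reverse_X_add_C']
          have : ((1 : ℝ[X]) + C θ * X) * (1 + C θ⁻¹ * X) = (X + C θ) * (X + C θ⁻¹) := by
            linear_combination (X^2 - 1 : ℝ[X]) * hC
          rw [this]
        rw [hrev, hgfac] at h1
        have hpair0 : ((X + C θ) * (X + C θ⁻¹) : ℝ[X]) ≠ 0 :=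
          mul_ne_zero (X_add_C_ne_zero θ) (X_add_C_ne_zero θ⁻¹)
        exact (mul_left_cancel₀ hpair0 h1.symm)
      have hppos : ∀ x : ℝ, 0 ≤ x → p.eval x ≠ 0 := by
        intro x hx0 hc
        apply hpos x hx0
        rw [hfac, eval_mul, hc, mul_zero]
      have hproots : ∀ z : ℂ, aeval z p = 0 → z.im = 0 := by
        intro z hz
        apply hroots z
        rw [hfac, map_mul, hz, mul_zero]
      obtain ⟨γ', hγ1, hγ2, hγ3⟩ := IH m (by omega) p rfl hp0 hpl hrevp hppos hproots
      refine ⟨fun k => γ' k + a * (if k = 0 then 0 else γ' (k - 1)), ?_, ?_, ?_⟩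
      · intro k
        dsimp only
        rcases eq_or_ne k 0 with rfl | hk
        · simpa using hγ1 0
        · rw [if_neg hk]
          exact add_nonneg (hγ1 k) (mul_nonneg ha (hγ1 _))
      · intro k hk
        dsimp only
        have h1 : γ' k = 0 := hγ2 k (by omega)
        have h2 : γ' (k - 1) = 0 := hγ2 (k - 1) (by omega)
        have hk0 : k ≠ 0 := by omega
        rw [h1, if_neg hk0, h2, mul_zero, add_zero]
      · have hn2 : n / 2 = m / 2 + 1 := by omega
        rw [hfac, hγ3, add_mul, Finset.mul_sum, Finset.mul_sum]
        have hE1 : ∑ j ∈ Finset.range (m / 2 + 1),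
            (1 + X) ^ 2 * (C (γ' j) * X ^ j * (1 + X) ^ (m - 2 * j)) =
            ∑ k ∈ Finset.range (n / 2 + 1), C (γ' k) * X ^ k * (1 + X) ^ (n - 2 * k) := by
          conv_rhs => rw [hn2, Finset.sum_range_succ]
          have hz : γ' (m / 2 + 1) = 0 := hγ2 _ (by omega)
          rw [hz, map_zero, zero_mul, zero_mul, add_zero]
          apply Finset.sum_congr rfl
          intro j hj
          have hjm : 2 * j ≤ m := by
            have := Finset.mem_range.mp hj; omega
          rw [show n - 2 * j = 2 + (m - 2 * j) by omega, pow_add]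
          ring
        have hE2 : ∑ j ∈ Finset.range (m / 2 + 1),
            C a * X * (C (γ' j) * X ^ j * (1 + X) ^ (m - 2 * j)) =
            ∑ k ∈ Finset.range (n / 2 + 1),
              C (a * (if k = 0 then 0 else γ' (k - 1))) * X ^ k * (1 + X) ^ (n - 2 * k) := by
          conv_rhs => rw [hn2, Finset.sum_range_succ']
          have hz : C (a * (if (0:ℕ) = 0 then (0:ℝ) else γ' (0 - 1))) * X ^ 0 *
              (1 + X) ^ (n - 2 * 0) = 0 := by simp
          rw [hz, add_zero]
          apply Finset.sum_congr rfl
          intro j hj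
          have hjm : 2 * j ≤ m := by
            have := Finset.mem_range.mp hj; omega
          have : (if j + 1 = 0 then (0:ℝ) else γ' (j + 1 - 1)) = γ' j := by simp
          rw [this, show n - 2 * (j + 1) = m - 2 * j by omega, map_mul]
          ring
        rw [hE1, hE2]
        rw [← Finset.sum_add_distrib]
        apply Finset.sum_congr rfl
        intro k _
        rw [map_add]
        ring
    · -- all roots equal -1
      push_neg at hex
      set f := algebraMap ℝ ℂ
      have hfinj : Function.Injective f := f.injective
      set G := g.map f with hGdef
      have hG0 : G ≠ 0 := (Polynomial.map_ne_zero_iff hfinj).mpr hg0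
      have hGdeg : G.natDegree = n := by rw [hGdef, natDegree_map, hdeg]
      have hcard : Multiset.card G.roots = G.natDegree :=
        splits_iff_card_roots.mp (IsAlgClosed.splits G)
      have hallroots : ∀ z ∈ G.roots, z = -1 := by
        intro z hz
        have hzroot : aeval z g = 0 := by
          have h5 : eval z G = 0 := (mem_roots hG0).mp hz
          rw [hGdef, eval_map, ← aeval_def] at h5
          exact h5
        have him : z.im = 0 := hroots z hzroot
        have hzre : (z.re : ℂ) = z := by
          apply Complex.ext <;> simp [him]
        have : aeval ((z.re : ℂ)) g = 0 := by rw [hzre]; exact hzroot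
        rw [show ((z.re : ℂ)) = f z.re from rfl,
          aeval_algebraMap_apply_eq_algebraMap_eval] at this
        have hre : g.eval z.re = 0 := by
          have := this
          simpa [f, Complex.ofReal_eq_zero] using this
        have := hex z.re hre
        rw [← hzre, this]
        norm_num
      have hGrep : G.roots = Multiset.replicate n (-1) := by
        apply Multiset.eq_replicate.mpr
        exact ⟨by rw [hcard, hGdeg], hallroots⟩
      have hGfac : G = C G.leadingCoeff * (1 + X) ^ n := by
        have h7 := C_leadingCoeff_mul_prod_multiset_X_sub_C (p := G) hcard
        rw [hGrep, Multiset.map_replicate, Multiset.prod_replicate,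
          show (X - C (-1 : ℂ)) = 1 + X by
            rw [map_neg, map_one, sub_neg_eq_add, add_comm]] at h7
        exact h7.symm
      have hglead : G.leadingCoeff = f g.leadingCoeff := by
        rw [hGdef, leadingCoeff_map]
      have hgfac : g = C g.leadingCoeff * (1 + X) ^ n := by
        apply Polynomial.map_injective f hfinj
        rw [← hGdef, hGfac, hglead]
        simp [Polynomial.map_mul, Polynomial.map_pow, Polynomial.map_add]
      refine ⟨fun k => if k = 0 then g.leadingCoeff else 0, ?_, ?_, ?_⟩
      · intro k
        dsimp only
        rcases eq_or_ne k 0 with rfl | hk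
        · rw [if_pos rfl]; exact hlead.le
        · rw [if_neg hk]
      · intro k hk
        dsimp only
        rw [if_neg (by omega)]
      · rw [Finset.sum_eq_single_of_mem 0 (Finset.mem_range.mpr (by omega))]
        · simpa using hgfac
        · intro k _ hk
          simp [if_neg hk]

theorem gamma_nonneg_of_symmetric_real_rooted
    (d : ℕ) (h : Polynomial ℝ)
    (hdeg : h.natDegree ≤ d)
    (hnonneg : ∀ k, 0 ≤ h.coeff k)
    (hsym : ∀ k, k ≤ d → h.coeff k = h.coeff (d - k))
    (hroots : ∀ z : ℂ, aeval z h = 0 → z.im = 0) :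
    ∃ γ : ℕ → ℝ, (∀ k, k ≤ d / 2 → 0 ≤ γ k) ∧
      h = ∑ k ∈ Finset.range (d / 2 + 1), C (γ k) * X ^ k * (1 + X) ^ (d - 2 * k) := by
  by_cases hh0 : h = 0
  · refine ⟨fun _ => 0, fun k _ => le_refl 0, ?_⟩
    rw [hh0]
    simp
  · set n := h.natDegree with hndef
    have hlead : 0 < h.coeff n := by
      rcases (hnonneg n).lt_or_eq with h' | h'
      · exact h'
      · exact absurd (leadingCoeff_eq_zero.mp
          (by rw [leadingCoeff, ← hndef]; exact h'.symm)) hh0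
    have hd2n : d ≤ 2 * n := by
      by_contra hc
      push_neg at hc
      have h1 : d - n ≤ d := Nat.sub_le d n
      have h2 : h.coeff (d - n) = h.coeff n := by
        rw [hsym (d - n) h1, show d - (d - n) = n by omega]
      have h3 : n < d - n := by omega
      have := coeff_eq_zero_of_natDegree_lt (p := h) (n := d - n) (by omega)
      rw [this] at h2
      exact hlead.ne h2
    set r := d - n with hrdef
    obtain ⟨g, hg⟩ : (X : ℝ[X]) ^ r ∣ h := by
      rw [X_pow_dvd_iff]
      intro i hi
      rw [hsym i (by omega)]
      exact coeff_eq_zero_of_natDegree_lt (by omega)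
    have hg0 : g ≠ 0 := by rintro rfl; rw [mul_zero] at hg; exact hh0 hg
    set m := g.natDegree with hmdef
    have hnm : n = r + m := by
      rw [hndef, hg, natDegree_mul (pow_ne_zero r X_ne_zero) hg0, natDegree_pow,
        natDegree_X, mul_one, ← hmdef]
    have hcoeffg : ∀ j, g.coeff j = h.coeff (j + r) := by
      intro j
      rw [hg, coeff_X_pow_mul]
    have hrevg : g.reverse = g := by
      ext i
      rcases le_or_gt i m with hi | hi
      · rw [coeff_reverse, ← hmdef, revAt_le hi, hcoeffg, hcoeffg,
          show m - i + r = d - (r + i) by omega, ← hsym (r + i) (by omega), add_comm r i]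
      · have h6 : g.reverse.natDegree ≤ m := by rw [hmdef]; exact g.reverse_natDegree_le
        rw [coeff_eq_zero_of_natDegree_lt (lt_of_le_of_lt h6 hi),
          coeff_eq_zero_of_natDegree_lt (show g.natDegree < i by omega)]
    have hgl : 0 < g.leadingCoeff := by
      have : g.leadingCoeff = h.coeff n := by
        rw [leadingCoeff, ← hmdef, hcoeffg, show m + r = n by omega]
      rwa [this]
    have hevalh : ∀ x : ℝ, 0 < x → 0 < h.eval x := by
      intro x hx
      rw [eval_eq_sum_range]
      apply Finset.sum_pos'
      · intro i _
        exact mul_nonneg (hnonneg i) (le_of_lt (pow_pos hx i))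
      · exact ⟨n, Finset.mem_range.mpr (by omega), mul_pos hlead (pow_pos hx n)⟩
    have hgpos : ∀ x : ℝ, 0 ≤ x → g.eval x ≠ 0 := by
      intro x hx0
      rcases eq_or_lt_of_le hx0 with rfl | hx
      · rw [← coeff_zero_eq_eval_zero, hcoeffg, zero_add, hsym r (by omega),
          show d - r = n by omega]
        exact hlead.ne'
      · intro hc
        have : h.eval x = 0 := by rw [hg, eval_mul, hc, mul_zero]
        exact (hevalh x hx).ne' this
    have hgroots : ∀ z : ℂ, aeval z g = 0 → z.im = 0 := by
      intro z hz
      apply hroots z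
      rw [hg, map_mul, hz, mul_zero]
    obtain ⟨γ', hγ1, hγ2, hγ3⟩ := gamma_main m g rfl hg0 hgl hrevg hgpos hgroots
    have hd2 : d / 2 = m / 2 + r := by omega
    refine ⟨fun k => if r ≤ k then γ' (k - r) else 0, ?_, ?_⟩
    · intro k _
      dsimp only
      rcases le_or_gt r k with hk | hk
      · rw [if_pos hk]; exact hγ1 _
      · rw [if_neg (not_le.mpr hk)]
    · have hsum : ∑ k ∈ Finset.range (d / 2 + 1),
          C (if r ≤ k then γ' (k - r) else 0) * X ^ k * (1 + X) ^ (d - 2 * k)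
          = X ^ r * ∑ j ∈ Finset.range (m / 2 + 1),
              C (γ' j) * X ^ j * (1 + X) ^ (m - 2 * j) := by
        rw [show Finset.range (d / 2 + 1) = Finset.Ico 0 (d / 2 + 1) from Finset.range_eq_Ico _,
          ← Finset.sum_Ico_consecutive _ (Nat.zero_le r) (show r ≤ d / 2 + 1 by omega)]
        have hzero : ∑ k ∈ Finset.Ico 0 r,
            C (if r ≤ k then γ' (k - r) else 0) * X ^ k * (1 + X) ^ (d - 2 * k) = 0 := by
          apply Finset.sum_eq_zero
          intro k hk
          have := (Finset.mem_Ico.mp hk).2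
          rw [if_neg (by omega), map_zero, zero_mul, zero_mul]
        rw [hzero, zero_add, Finset.sum_Ico_eq_sum_range,
          show d / 2 + 1 - r = m / 2 + 1 by omega, Finset.mul_sum]
        apply Finset.sum_congr rfl
        intro j hj
        have hjm : 2 * j ≤ m := by
          have := Finset.mem_range.mp hj; omega
        rw [if_pos (by omega), show r + j - r = j by omega,
          show d - 2 * (r + j) = m - 2 * j by omega]
        ring
      dsimp only
      rw [hsum, hg, hγ3]
end

section
/- Let T ⊆ S_n be a set of permutations invariant under the Foata–Strehl Z_2^n-action via the maps φ_S. Then Σ_{π∈T} x^{des(π)} = Σ_i γ_i(T) x^i (1+x)^{n-1-2i} where γ_i(T) = 2^{-n+1+2i}·|{π ∈ T : peak(π) = i}|; in particular the descent polynomial of T is γ-nonnegative. -/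
/-- The letters of the word `w` with the boundary convention `a₀ = a_{n+1} = n+1`:
`ext n w i` is `aᵢ` for `1 ≤ i ≤ n` and `n+1` for `i = 0` and `i = n+1`. -/
def ext (n : ℕ) (w : List ℕ) (i : ℕ) : ℕ := (((n + 1) :: w) ++ [n + 1]).getD i 0

/-- The number of descents of the word `w`: indices `i ∈ [n]` with `aᵢ > a_{i+1}`. -/
def des (n : ℕ) (w : List ℕ) : ℕ :=
  ((Finset.Icc 1 n).filter (fun i => ext n w (i + 1) < ext n w i)).card

/-- The number of peaks of the word `w`: indices `i ∈ [n]` with `a_{i-1} < aᵢ > a_{i+1}`. -/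
def peak (n : ℕ) (w : List ℕ) : ℕ :=
  ((Finset.Icc 1 n).filter
    (fun i => ext n w (i - 1) < ext n w i ∧ ext n w (i + 1) < ext n w i)).card

/-- The Foata–Strehl (valley-hopping) involution `φₓ`. -/
def phi (n x : ℕ) (w : List ℕ) : List ℕ :=
  let l := w.takeWhile (· ≠ x)
  let r := (w.dropWhile (· ≠ x)).tail
  let prev := l.getLastD (n + 1)
  let next := r.headD (n + 1)
  if x < prev ∧ next < x then
    l ++ r.takeWhile (· < x) ++ x :: r.dropWhile (· < x)
  else if prev < x ∧ x < next then
    (l.reverse.dropWhile (· < x)).reverse ++ x :: ((l.reverse.takeWhile (· < x)).reverse ++ r)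
  else w

/-! ### Auxiliary development -/

def prv (n : ℕ) (w : List ℕ) (y : ℕ) : ℕ := (w.takeWhile (· ≠ y)).getLastD (n + 1)
def nxt (n : ℕ) (w : List ℕ) (y : ℕ) : ℕ := ((w.dropWhile (· ≠ y)).tail).headD (n + 1)

lemma takeWhile_decomp {y : ℕ} {A B : List ℕ} (hA : y ∉ A) :
    (A ++ y :: B).takeWhile (· ≠ y) = A := by
  induction A with
  | nil => simp [List.takeWhile]
  | cons a A ih =>
    simp only [List.mem_cons, not_or] at hA
    have h1 : a ≠ y := fun h => hA.1 h.symm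
    rw [List.cons_append, List.takeWhile_cons_of_pos (by simp [h1]), ih hA.2]

lemma dropWhile_decomp {y : ℕ} {A B : List ℕ} (hA : y ∉ A) :
    (A ++ y :: B).dropWhile (· ≠ y) = y :: B := by
  induction A with
  | nil => simp [List.dropWhile]
  | cons a A ih =>
    simp only [List.mem_cons, not_or] at hA
    have h1 : a ≠ y := fun h => hA.1 h.symm
    rw [List.cons_append, List.dropWhile_cons_of_pos (by simp [h1]), ih hA.2]

lemma prv_decomp {n y : ℕ} {A B : List ℕ} (hA : y ∉ A) :
    prv n (A ++ y :: B) y = A.getLastD (n + 1) := by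
  rw [prv, takeWhile_decomp hA]

lemma nxt_decomp {n y : ℕ} {A B : List ℕ} (hA : y ∉ A) :
    nxt n (A ++ y :: B) y = B.headD (n + 1) := by
  rw [nxt, dropWhile_decomp hA, List.tail_cons]

lemma not_mem_left_of_nodup {y : ℕ} {A B : List ℕ} (h : (A ++ y :: B).Nodup) : y ∉ A := by
  intro hy
  exact (List.disjoint_of_nodup_append h) hy List.mem_cons_self

lemma not_mem_right_of_nodup {y : ℕ} {A B : List ℕ} (h : (A ++ y :: B).Nodup) : y ∉ B := by
  have := (List.nodup_append.mp h).2.1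
  exact (List.nodup_cons.mp this).1

lemma getLastD_mem_or {A : List ℕ} {d : ℕ} : A.getLastD d ∈ A ∨ A.getLastD d = d := by
  cases A with
  | nil => right; rfl
  | cons a A =>
    left
    rw [List.getLastD_eq_getLast?, List.getLast?_eq_getLast (l := a :: A) (by simp)]
    simp only [Option.getD_some]
    exact List.getLast_mem _

lemma headD_mem_or {A : List ℕ} {d : ℕ} : A.headD d ∈ A ∨ A.headD d = d := by
  cases A with
  | nil => right; rfl
  | cons a A => left; simp

lemma headD_append_left {A : List ℕ} (B : List ℕ) {d : ℕ} (h : A ≠ []) :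
    (A ++ B).headD d = A.headD d := by
  cases A with
  | nil => exact absurd rfl h
  | cons a A => rfl

lemma getLastD_append_left {A : List ℕ} (B : List ℕ) {d : ℕ} (h : B ≠ []) :
    (A ++ B).getLastD d = B.getLastD d := by
  rw [List.getLastD_eq_getLast?, List.getLastD_eq_getLast?,
    List.getLast?_append_of_ne_nil _ h]

/-! ### Permutation words -/

def Pm (n : ℕ) (w : List ℕ) : Prop := w.Perm (List.range' 1 n)

variable {n : ℕ} {w : List ℕ}

lemma Pm.nodup (h : Pm n w) : w.Nodup := h.nodup_iff.mpr (List.nodup_range' (s := 1) (n := n))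
lemma Pm.length (h : Pm n w) : w.length = n := by simpa using h.length_eq
lemma Pm.mem_iff (h : Pm n w) {y : ℕ} : y ∈ w ↔ 1 ≤ y ∧ y ≤ n := by
  rw [List.Perm.mem_iff h, List.mem_range'_1]; omega

lemma ext_zero : ext n w 0 = n + 1 := rfl
lemma ext_mid (hlen : w.length = n) {i : ℕ} (h1 : 1 ≤ i) (h2 : i ≤ n) :
    ext n w i = w.getD (i - 1) 0 := by
  obtain ⟨j, rfl⟩ : ∃ j, i = j + 1 := ⟨i - 1, by omega⟩
  rw [ext, List.cons_append, List.getD_cons_succ, List.getD_append _ _ _ _ (by omega)]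
  simp
lemma ext_top (hlen : w.length = n) : ext n w (n + 1) = n + 1 := by
  rw [ext, List.cons_append, List.getD_cons_succ, List.getD_append_right _ _ _ _ (by omega),
    hlen]
  simp

lemma ext_le (h : Pm n w) {i : ℕ} (h1 : 1 ≤ i) (h2 : i ≤ n) :
    1 ≤ ext n w i ∧ ext n w i ≤ n := by
  rw [ext_mid h.length h1 h2]
  have hlt : i - 1 < w.length := by rw [h.length]; omega
  rw [List.getD_eq_getElem _ _ hlt]
  have := h.mem_iff.mp (List.getElem_mem hlt)
  omega

lemma pos_decomp (h : Pm n w) {i : ℕ} (h1 : 1 ≤ i) (h2 : i ≤ n) :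
    w = w.take (i - 1) ++ w.getD (i - 1) 0 :: w.drop i := by
  have hlt : i - 1 < w.length := by rw [h.length]; omega
  rw [List.getD_eq_getElem _ _ hlt]
  conv_lhs => rw [← List.take_append_drop (i - 1) w]
  congr 1
  rw [List.drop_eq_getElem_cons hlt]
  congr 2
  omega

lemma pos_mem (h : Pm n w) {i : ℕ} (h1 : 1 ≤ i) (h2 : i ≤ n) : w.getD (i - 1) 0 ∈ w := by
  have hlt : i - 1 < w.length := by rw [h.length]; omega
  rw [List.getD_eq_getElem _ _ hlt]; exact List.getElem_mem hlt

lemma pos_prv (h : Pm n w) {i : ℕ} (h1 : 1 ≤ i) (h2 : i ≤ n) :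
    prv n w (w.getD (i - 1) 0) = ext n w (i - 1) := by
  have hlen := h.length
  have hdec := pos_decomp h h1 h2
  have hnm : w.getD (i - 1) 0 ∉ w.take (i - 1) := not_mem_left_of_nodup (hdec ▸ h.nodup)
  have key := prv_decomp (n := n) (B := w.drop i) hnm
  rw [← hdec] at key
  rw [key]
  rcases Nat.eq_or_lt_of_le h1 with h1' | h1'
  · subst h1'; simp [ext_zero]
  · have h2' : 2 ≤ i := h1'
    have hlt : i - 2 < w.length := by omega
    rw [ext_mid hlen (by omega) (by omega)]
    have : w.take (i - 1) = w.take (i - 2) ++ (w.getD (i - 2) 0 :: []) := by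
      have : i - 1 = (i - 2) + 1 := by omega
      rw [this, List.take_succ, List.getD_eq_getElem _ _ hlt]
      simp [List.getElem?_eq_getElem hlt]
    rw [this, List.getLastD_concat]
    first
    | rfl
    | (congr 1; omega)

lemma pos_nxt (h : Pm n w) {i : ℕ} (h1 : 1 ≤ i) (h2 : i ≤ n) :
    nxt n w (w.getD (i - 1) 0) = ext n w (i + 1) := by
  have hlen := h.length
  have hdec := pos_decomp h h1 h2
  have hnm : w.getD (i - 1) 0 ∉ w.take (i - 1) := not_mem_left_of_nodup (hdec ▸ h.nodup)
  have key := nxt_decomp (n := n) (B := w.drop i) hnm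
  rw [← hdec] at key
  rw [key]
  rcases Nat.eq_or_lt_of_le h2 with h2' | h2'
  · subst h2'
    rw [List.drop_eq_nil_of_le (by omega), ext_top hlen]
    rfl
  · have hlt : i < w.length := by omega
    rw [List.drop_eq_getElem_cons hlt]
    simp only [List.headD_cons]
    rw [ext_mid hlen (by omega) (by omega)]
    have hlt' : i + 1 - 1 < w.length := by omega
    rw [List.getD_eq_getElem _ _ hlt']
    first
    | rfl
    | (congr 1; omega)

/-! ### Letter-indexed statistics -/

def Pk (n : ℕ) (w : List ℕ) : Finset ℕ :=
  (Finset.Icc 1 n).filter (fun y => prv n w y < y ∧ nxt n w y < y)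
def Vl (n : ℕ) (w : List ℕ) : Finset ℕ :=
  (Finset.Icc 1 n).filter (fun y => y < prv n w y ∧ y < nxt n w y)
def DDs (n : ℕ) (w : List ℕ) : Finset ℕ :=
  (Finset.Icc 1 n).filter (fun y => y < prv n w y ∧ nxt n w y < y)
def DAs (n : ℕ) (w : List ℕ) : Finset ℕ :=
  (Finset.Icc 1 n).filter (fun y => prv n w y < y ∧ y < nxt n w y)

lemma prv_ne (h : Pm n w) {y : ℕ} (hy : y ∈ w) : prv n w y ≠ y := by
  obtain ⟨A, B, hd⟩ := List.append_of_mem hy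
  have hnm : y ∉ A := not_mem_left_of_nodup (hd ▸ h.nodup)
  have key := prv_decomp (n := n) (B := B) hnm
  rw [← hd] at key
  rw [key]
  rcases getLastD_mem_or (A := A) (d := n + 1) with hm | he
  · have : A.getLastD (n + 1) ≠ y := fun hc => hnm (hc ▸ hm)
    exact this
  · rw [he]
    have := h.mem_iff.mp hy
    omega

lemma nxt_ne (h : Pm n w) {y : ℕ} (hy : y ∈ w) : nxt n w y ≠ y := by
  obtain ⟨A, B, hd⟩ := List.append_of_mem hy
  have hnm : y ∉ A := not_mem_left_of_nodup (hd ▸ h.nodup)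
  have hnmB : y ∉ B := not_mem_right_of_nodup (hd ▸ h.nodup)
  have key := nxt_decomp (n := n) (B := B) hnm
  rw [← hd] at key
  rw [key]
  rcases headD_mem_or (A := B) (d := n + 1) with hm | he
  · exact fun hc => hnmB (hc ▸ hm)
  · rw [he]
    have := h.mem_iff.mp hy
    omega

lemma filter_card_eq (h : Pm n w) (p : ℕ → ℕ → ℕ → Prop) [∀ a b c, Decidable (p a b c)] :
    ((Finset.Icc 1 n).filter
        (fun i => p (ext n w (i - 1)) (ext n w i) (ext n w (i + 1)))).card =
      ((Finset.Icc 1 n).filter (fun y => p (prv n w y) y (nxt n w y))).card := by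
  apply Finset.card_nbij' (fun i => w.getD (i - 1) 0) (fun y => w.idxOf y + 1)
  · intro i hi
    simp only [Finset.mem_coe, Finset.mem_filter, Finset.mem_Icc] at hi ⊢
    obtain ⟨⟨h1, h2⟩, hp⟩ := hi
    refine ⟨h.mem_iff.mp (pos_mem h h1 h2), ?_⟩
    rw [pos_prv h h1 h2, pos_nxt h h1 h2, ← ext_mid h.length h1 h2]
    exact hp
  · intro y hy
    simp only [Finset.mem_coe, Finset.mem_filter, Finset.mem_Icc] at hy ⊢
    obtain ⟨⟨h1, h2⟩, hp⟩ := hy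
    have hyw : y ∈ w := h.mem_iff.mpr ⟨h1, h2⟩
    have hj : w.idxOf y < w.length := List.idxOf_lt_length_iff.mpr hyw
    have hgd : w.getD (w.idxOf y + 1 - 1) 0 = y := by
      rw [List.getD_eq_getElem _ _ (by omega : w.idxOf y + 1 - 1 < w.length)]
      simp only [Nat.add_sub_cancel]
      exact List.getElem_idxOf hj
    have hi1 : 1 ≤ w.idxOf y + 1 := by omega
    have hi2 : w.idxOf y + 1 ≤ n := by rw [← h.length]; omega
    refine ⟨⟨hi1, hi2⟩, ?_⟩
    have e1 := pos_prv h hi1 hi2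
    have e2 := pos_nxt h hi1 hi2
    rw [hgd] at e1 e2
    have e3 : ext n w (w.idxOf y + 1) = y := by
      rw [ext_mid h.length hi1 hi2, hgd]
    rw [← e1, ← e2, e3]
    exact hp
  · intro i hi
    simp only [Finset.mem_coe, Finset.mem_filter, Finset.mem_Icc] at hi ⊢
    obtain ⟨⟨h1, h2⟩, -⟩ := hi
    have hlt : i - 1 < w.length := by rw [h.length]; omega
    rw [List.getD_eq_getElem _ _ hlt, List.Nodup.idxOf_getElem h.nodup _ hlt]
    omega
  · intro y hy
    simp only [Finset.mem_coe, Finset.mem_filter, Finset.mem_Icc] at hy ⊢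
    have hyw : y ∈ w := h.mem_iff.mpr hy.1
    have hj : w.idxOf y < w.length := List.idxOf_lt_length_iff.mpr hyw
    rw [List.getD_eq_getElem _ _ (by omega : w.idxOf y + 1 - 1 < w.length)]
    simp only [Nat.add_sub_cancel]
    exact List.getElem_idxOf hj

lemma des_eq (h : Pm n w) :
    des n w = ((Finset.Icc 1 n).filter (fun y => nxt n w y < y)).card :=
  filter_card_eq h (fun _ b c => c < b)

lemma peak_eq (h : Pm n w) : peak n w = (Pk n w).card :=
  filter_card_eq h (fun a b c => a < b ∧ c < b)

lemma asc_eq (h : Pm n w) :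
    ((Finset.Icc 1 n).filter (fun i => ext n w i < ext n w (i - 1))).card =
      ((Finset.Icc 1 n).filter (fun y => y < prv n w y)).card :=
  filter_card_eq h (fun a b _ => b < a)

lemma card_filter_split (s : Finset ℕ) (p q : ℕ → Prop) [DecidablePred p] [DecidablePred q] :
    (s.filter p).card =
      (s.filter fun y => p y ∧ q y).card + (s.filter fun y => p y ∧ ¬ q y).card := by
  rw [← Finset.card_union_of_disjoint, ← Finset.filter_or]
  · congr 1
    apply Finset.filter_congr
    intro y _
    constructor
    · intro hp
      by_cases hq : q y
      · exact Or.inl ⟨hp, hq⟩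
      · exact Or.inr ⟨hp, hq⟩
    · rintro (⟨hp, -⟩ | ⟨hp, -⟩) <;> exact hp
  · rw [Finset.disjoint_left]
    intro a ha hb
    simp only [Finset.mem_filter] at ha hb
    exact hb.2.2 ha.2.2

lemma asc_pos (h : Pm n w) (hn : 1 ≤ n) :
    ((Finset.Icc 1 n).filter (fun i => ext n w i < ext n w (i - 1))).card = des n w + 1 := by
  have step1 :
      ((Finset.Icc 1 n).filter (fun i => ext n w i < ext n w (i - 1))).card =
        ((Finset.Icc 0 (n - 1)).filter (fun j => ext n w (j + 1) < ext n w j)).card := by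
    apply Finset.card_nbij' (fun i => i - 1) (fun j => j + 1)
    · intro i hi
      simp only [Finset.mem_coe, Finset.mem_filter, Finset.mem_Icc] at hi ⊢
      obtain ⟨⟨h1, h2⟩, hp⟩ := hi
      have e : i - 1 + 1 = i := by omega
      rw [e]
      exact ⟨⟨by omega, by omega⟩, hp⟩
    · intro j hj
      simp only [Finset.mem_coe, Finset.mem_filter, Finset.mem_Icc] at hj ⊢
      obtain ⟨⟨-, h2⟩, hp⟩ := hj
      have e : j + 1 - 1 = j := by omega
      rw [e]
      exact ⟨⟨by omega, by omega⟩, hp⟩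
    · intro i hi
      simp only [Finset.mem_coe, Finset.mem_filter, Finset.mem_Icc] at hi ⊢
      omega
    · intro j _
      dsimp only
      omega
  rw [step1]
  have hset : Finset.Icc 0 (n - 1) = insert 0 (Finset.Icc 1 (n - 1)) := by
    ext j
    simp only [Finset.mem_Icc, Finset.mem_insert]
    omega
  have h0 : ext n w 1 < ext n w 0 := by
    rw [ext_zero]
    have := (ext_le h le_rfl hn).2
    omega
  rw [hset, Finset.filter_insert, if_pos h0,
    Finset.card_insert_of_notMem (by simp)]
  have hdes : des n w =
      ((Finset.Icc 1 (n - 1)).filter (fun j => ext n w (j + 1) < ext n w j)).card := by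
    rw [des]
    have hset2 : Finset.Icc 1 n = insert n (Finset.Icc 1 (n - 1)) := by
      ext j
      simp only [Finset.mem_Icc, Finset.mem_insert]
      omega
    have hnf : ¬ ext n w (n + 1) < ext n w n := by
      rw [ext_top h.length]
      have := (ext_le h hn le_rfl).2
      omega
    rw [hset2, Finset.filter_insert, if_neg hnf]
  omega

lemma des_split (h : Pm n w) : des n w = (Pk n w).card + (DDs n w).card := by
  rw [des_eq h, card_filter_split (Finset.Icc 1 n) _ (fun y => prv n w y < y)]
  congr 1
  · apply Finset.card_nbij' id id <;> intro y hy <;>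
      simp only [Finset.mem_coe, Finset.mem_filter, Finset.mem_Icc, Pk, id] at hy ⊢ <;> tauto
  · apply Finset.card_nbij' id id <;> intro y hy <;>
      simp only [Finset.mem_coe, Finset.mem_filter, Finset.mem_Icc, DDs, id] at hy ⊢ <;>
      first
      | rfl
      | (have hne := prv_ne h (h.mem_iff.mpr (by omega : 1 ≤ y ∧ y ≤ n)); omega)

lemma vl_count (h : Pm n w) (hn : 1 ≤ n) :
    (Vl n w).card + (DDs n w).card = des n w + 1 := by
  have hasc := asc_pos h hn
  rw [asc_eq h] at hasc
  have hsplit := card_filter_split (Finset.Icc 1 n) (fun y => y < prv n w y)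
    (fun y => nxt n w y < y)
  have eDD : (Finset.filter (fun y => y < prv n w y ∧ nxt n w y < y) (Finset.Icc 1 n)).card
      = (DDs n w).card := rfl
  have eVl : (Finset.filter (fun y => y < prv n w y ∧ ¬ nxt n w y < y) (Finset.Icc 1 n)).card
      = (Vl n w).card := by
    apply Finset.card_nbij' id id <;> intro y hy <;>
      simp only [Finset.mem_coe, Finset.mem_filter, Finset.mem_Icc, Vl, id] at hy ⊢ <;>
      (have hne := nxt_ne h (h.mem_iff.mpr (by omega : 1 ≤ y ∧ y ≤ n)); omega)
  omega

lemma four_count (h : Pm n w) :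
    (Pk n w).card + (Vl n w).card + (DAs n w).card + (DDs n w).card = n := by
  classical
  have htot := Finset.card_filter_add_card_filter_not
    (s := Finset.Icc 1 n) (p := fun y => prv n w y < y)
  have hP := card_filter_split (Finset.Icc 1 n) (fun y => prv n w y < y)
    (fun y => nxt n w y < y)
  have hnP := card_filter_split (Finset.Icc 1 n) (fun y => ¬ prv n w y < y)
    (fun y => nxt n w y < y)
  have e1 : (Finset.filter (fun y => prv n w y < y ∧ nxt n w y < y) (Finset.Icc 1 n)).card
      = (Pk n w).card := rfl
  have e2 : (Finset.filter (fun y => prv n w y < y ∧ ¬ nxt n w y < y) (Finset.Icc 1 n)).card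
      = (DAs n w).card := by
    apply Finset.card_nbij' id id <;> intro y hy <;>
      simp only [Finset.mem_coe, Finset.mem_filter, Finset.mem_Icc, DAs, id] at hy ⊢ <;>
      (have hne := nxt_ne h (h.mem_iff.mpr (by omega : 1 ≤ y ∧ y ≤ n)); omega)
  have e3 : (Finset.filter (fun y => ¬ prv n w y < y ∧ nxt n w y < y) (Finset.Icc 1 n)).card
      = (DDs n w).card := by
    apply Finset.card_nbij' id id <;> intro y hy <;>
      simp only [Finset.mem_coe, Finset.mem_filter, Finset.mem_Icc, DDs, id] at hy ⊢ <;>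
      (have hne := prv_ne h (h.mem_iff.mpr (by omega : 1 ≤ y ∧ y ≤ n)); omega)
  have e4 : (Finset.filter (fun y => ¬ prv n w y < y ∧ ¬ nxt n w y < y) (Finset.Icc 1 n)).card
      = (Vl n w).card := by
    apply Finset.card_nbij' id id <;> intro y hy <;>
      simp only [Finset.mem_coe, Finset.mem_filter, Finset.mem_Icc, Vl, id] at hy ⊢ <;>
      (have hne1 := prv_ne h (h.mem_iff.mpr (by omega : 1 ≤ y ∧ y ≤ n));
       have hne2 := nxt_ne h (h.mem_iff.mpr (by omega : 1 ≤ y ∧ y ≤ n)); omega)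
  have hcard : (Finset.Icc 1 n).card = n := by
    rw [Nat.card_Icc]
    omega
  omega

lemma da_dd_count (h : Pm n w) :
    (DAs n w).card + (DDs n w).card = n - 1 - 2 * (Pk n w).card ∧
      2 * (Pk n w).card ≤ n - 1 := by
  rcases Nat.eq_zero_or_pos n with hn | hn
  · subst hn
    have he : Finset.Icc 1 0 = ∅ := rfl
    simp [DAs, DDs, Pk, he]
  · have h1 := des_split h
    have h2 := vl_count h hn
    have h3 := four_count h
    omega

/-! ### The core hop lemma -/

lemma getLastD_eq_getLast' {l : List ℕ} {d : ℕ} (h : l ≠ []) : l.getLastD d = l.getLast h := by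
  rw [List.getLastD_eq_getLast?, List.getLast?_eq_getLast h]
  rfl

lemma getLastD_mem {l : List ℕ} {d : ℕ} (h : l ≠ []) : l.getLastD d ∈ l := by
  rw [getLastD_eq_getLast' h]
  exact List.getLast_mem h

lemma headD_mem {l : List ℕ} {d : ℕ} (h : l ≠ []) : l.headD d ∈ l := by
  cases l with
  | nil => exact absurd rfl h
  | cons a t => simp

lemma takeWhile_lt_nil {L : List ℕ} {x : ℕ} (h : ∀ z ∈ L.head?, ¬ z < x) :
    L.takeWhile (· < x) = [] := by
  cases L with
  | nil => rfl
  | cons a t =>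
    have := h a (by simp)
    simp [List.takeWhile_cons, this]

lemma dropWhile_lt_self {L : List ℕ} {x : ℕ} (h : ∀ z ∈ L.head?, ¬ z < x) :
    L.dropWhile (· < x) = L := by
  cases L with
  | nil => rfl
  | cons a t =>
    have := h a (by simp)
    simp [List.dropWhile_cons, this]

lemma headD_reverse (l : List ℕ) (d : ℕ) : l.reverse.headD d = l.getLastD d := by
  rw [List.headD_eq_head?, List.head?_reverse, List.getLastD_eq_getLast?]

section core

variable {A m B : List ℕ} {x : ℕ}

lemma perm_uv : (A ++ (x :: (m ++ B))).Perm (A ++ (m ++ (x :: B))) := by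
  apply List.Perm.append_left
  exact (List.perm_middle).symm

lemma phi_u (hm : m ≠ []) (hlt : ∀ z ∈ m, z < x)
    (hA : x < A.getLastD (n + 1)) (hB : x < B.headD (n + 1)) (hxA : x ∉ A) :
    phi n x (A ++ (x :: (m ++ B))) = A ++ (m ++ (x :: B)) := by
  have htw := takeWhile_decomp (B := m ++ B) hxA
  have hdw := dropWhile_decomp (B := m ++ B) hxA
  have hBtw : B.takeWhile (· < x) = [] := by
    apply takeWhile_lt_nil
    intro z hz
    cases B with
    | nil => simp at hz
    | cons b t => simp at hz hB; omega
  have hBdw : B.dropWhile (· < x) = B := by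
    apply dropWhile_lt_self
    intro z hz
    cases B with
    | nil => simp at hz
    | cons b t => simp at hz hB; omega
  have hmB : (m ++ B).headD (n + 1) < x := by
    rw [headD_append_left _ hm]
    exact hlt _ (headD_mem hm)
  simp only [phi, htw, hdw, List.tail_cons]
  rw [if_pos ⟨hA, hmB⟩, List.takeWhile_append_of_pos (by simpa using hlt),
    List.dropWhile_append_of_pos (by simpa using hlt), hBtw, hBdw]
  simp [List.append_assoc]

lemma phi_v (hm : m ≠ []) (hlt : ∀ z ∈ m, z < x)
    (hA : x < A.getLastD (n + 1)) (hB : x < B.headD (n + 1))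
    (hxA : x ∉ A) (hxm : x ∉ m) :
    phi n x (A ++ (m ++ (x :: B))) = A ++ (x :: (m ++ B)) := by
  have hxAm : x ∉ A ++ m := by simp [hxA, hxm]
  have hre : A ++ (m ++ (x :: B)) = (A ++ m) ++ (x :: B) := by simp [List.append_assoc]
  have htw := takeWhile_decomp (B := B) hxAm
  have hdw := dropWhile_decomp (B := B) hxAm
  rw [hre]
  have hprev : (A ++ m).getLastD (n + 1) < x := by
    rw [getLastD_append_left _ hm]
    exact hlt _ (getLastD_mem hm)
  have hArev_tw : A.reverse.takeWhile (· < x) = [] := by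
    apply takeWhile_lt_nil
    intro z hz
    cases hA' : A.reverse with
    | nil => rw [hA'] at hz; simp at hz
    | cons a t =>
      rw [hA'] at hz
      simp only [List.head?_cons, Option.mem_some_iff] at hz
      have hgl : A.getLastD (n + 1) = a := by
        rw [← headD_reverse, hA']
        rfl
      omega
  have hArev_dw : A.reverse.dropWhile (· < x) = A.reverse := by
    apply dropWhile_lt_self
    intro z hz
    cases hA' : A.reverse with
    | nil => rw [hA'] at hz; simp at hz
    | cons a t =>
      rw [hA'] at hz
      simp only [List.head?_cons, Option.mem_some_iff] at hz
      have hgl : A.getLastD (n + 1) = a := by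
        rw [← headD_reverse, hA']
        rfl
      omega
  simp only [phi, htw, hdw, List.tail_cons]
  rw [if_neg (by push_neg; intro hc; omega), if_pos ⟨hprev, hB⟩]
  rw [List.reverse_append, List.takeWhile_append_of_pos (by simpa using fun z hz => hlt z (by simpa using hz)),
    List.dropWhile_append_of_pos (by simpa using fun z hz => hlt z (by simpa using hz))]
  rw [hArev_tw, hArev_dw]
  simp [List.append_assoc]

end core

section core2

variable {A m B : List ℕ} {x : ℕ}

lemma getLastD_ne_nil_eq {l : List ℕ} {d₁ d₂ : ℕ} (h : l ≠ []) :
    l.getLastD d₁ = l.getLastD d₂ := by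
  rw [getLastD_eq_getLast' h, getLastD_eq_getLast' (d := d₂) h]

lemma x_dd_u (hm : m ≠ []) (hlt : ∀ z ∈ m, z < x)
    (hA : x < A.getLastD (n + 1)) (hxA : x ∉ A) :
    x < prv n (A ++ (x :: (m ++ B))) x ∧ nxt n (A ++ (x :: (m ++ B))) x < x := by
  rw [prv_decomp hxA, nxt_decomp hxA, headD_append_left _ hm]
  exact ⟨hA, hlt _ (headD_mem hm)⟩

lemma x_da_v (hm : m ≠ []) (hlt : ∀ z ∈ m, z < x)
    (hB : x < B.headD (n + 1)) (hxA : x ∉ A) (hxm : x ∉ m) :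
    prv n (A ++ (m ++ (x :: B))) x < x ∧ x < nxt n (A ++ (m ++ (x :: B))) x := by
  have hxAm : x ∉ A ++ m := by simp [hxA, hxm]
  have hre : A ++ (m ++ (x :: B)) = (A ++ m) ++ (x :: B) := by simp
  rw [hre, prv_decomp hxAm, nxt_decomp hxAm, getLastD_append_left _ hm]
  exact ⟨hlt _ (getLastD_mem hm), hB⟩

lemma pres (hm : m ≠ []) (hlt : ∀ z ∈ m, z < x)
    (hA : x < A.getLastD (n + 1)) (hB : x < B.headD (n + 1))
    (hnd : (A ++ (x :: (m ++ B))).Nodup) (y : ℕ) (hyx : y ≠ x)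
    (hyu : y ∈ A ++ (x :: (m ++ B))) :
    (prv n (A ++ (x :: (m ++ B))) y < y ↔ prv n (A ++ (m ++ (x :: B))) y < y) ∧
    (nxt n (A ++ (x :: (m ++ B))) y < y ↔ nxt n (A ++ (m ++ (x :: B))) y < y) ∧
    (y < prv n (A ++ (x :: (m ++ B))) y ↔ y < prv n (A ++ (m ++ (x :: B))) y) ∧
    (y < nxt n (A ++ (x :: (m ++ B))) y ↔ y < nxt n (A ++ (m ++ (x :: B))) y) := by
  simp only [List.mem_append, List.mem_cons] at hyu
  rcases hyu with hyA | (hyx' | hym | hyB)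
  · -- y ∈ A
    obtain ⟨A1, A2, rfl⟩ := List.append_of_mem hyA
    have e_u : (A1 ++ y :: A2) ++ (x :: (m ++ B)) =
        A1 ++ (y :: (A2 ++ (x :: (m ++ B)))) := by simp
    have e_v : (A1 ++ y :: A2) ++ (m ++ (x :: B)) =
        A1 ++ (y :: (A2 ++ (m ++ (x :: B)))) := by simp
    have hy1 : y ∉ A1 := not_mem_left_of_nodup (e_u ▸ hnd)
    have pu : prv n ((A1 ++ y :: A2) ++ (x :: (m ++ B))) y = A1.getLastD (n + 1) := by
      rw [e_u]; exact prv_decomp hy1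
    have pv : prv n ((A1 ++ y :: A2) ++ (m ++ (x :: B))) y = A1.getLastD (n + 1) := by
      rw [e_v]; exact prv_decomp hy1
    have nu : nxt n ((A1 ++ y :: A2) ++ (x :: (m ++ B))) y =
        (A2 ++ (x :: (m ++ B))).headD (n + 1) := by
      rw [e_u]; exact nxt_decomp hy1
    have nv : nxt n ((A1 ++ y :: A2) ++ (m ++ (x :: B))) y =
        (A2 ++ (m ++ (x :: B))).headD (n + 1) := by
      rw [e_v]; exact nxt_decomp hy1
    cases A2 with
    | nil =>
      have hxy : x < y := by
        have : (A1 ++ y :: ([] : List ℕ)).getLastD (n + 1) = y := List.getLastD_concat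
        rw [this] at hA
        exact hA
      have hnu : nxt n ((A1 ++ y :: []) ++ (x :: (m ++ B))) y = x := by rw [nu]; rfl
      have hnv : nxt n ((A1 ++ y :: []) ++ (m ++ (x :: B))) y = m.headD (n + 1) := by
        rw [nv]
        simp only [List.nil_append]
        rw [headD_append_left _ hm]
      have hmh : m.headD (n + 1) < x := hlt _ (headD_mem hm)
      refine ⟨by omega, by omega, by omega, by omega⟩
    | cons a t =>
      have hnu : nxt n ((A1 ++ y :: (a :: t)) ++ (x :: (m ++ B))) y = a := by
        rw [nu]; rfl
      have hnv : nxt n ((A1 ++ y :: (a :: t)) ++ (m ++ (x :: B))) y = a := by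
        rw [nv]; rfl
      refine ⟨by omega, by omega, by omega, by omega⟩
  · exact absurd hyx' hyx
  · -- y ∈ m
    obtain ⟨m1, m2, rfl⟩ := List.append_of_mem hym
    have hym' : y < x := hlt y (by simp)
    have e_u : A ++ (x :: ((m1 ++ y :: m2) ++ B)) =
        (A ++ (x :: m1)) ++ (y :: (m2 ++ B)) := by simp
    have e_v : A ++ ((m1 ++ y :: m2) ++ (x :: B)) =
        (A ++ m1) ++ (y :: (m2 ++ (x :: B))) := by simp
    have hy1 : y ∉ A ++ (x :: m1) := not_mem_left_of_nodup (e_u ▸ hnd)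
    have hy2 : y ∉ A ++ m1 := by
      intro hc
      apply hy1
      simp only [List.mem_append, List.mem_cons] at hc ⊢
      tauto
    have pu : prv n (A ++ (x :: ((m1 ++ y :: m2) ++ B))) y =
        (x :: m1).getLastD (n + 1) := by
      rw [e_u, prv_decomp hy1, getLastD_append_left _ (by simp)]
    have pv : prv n (A ++ ((m1 ++ y :: m2) ++ (x :: B))) y =
        (A ++ m1).getLastD (n + 1) := by
      rw [e_v, prv_decomp hy2]
    have nu : nxt n (A ++ (x :: ((m1 ++ y :: m2) ++ B))) y = (m2 ++ B).headD (n + 1) := by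
      rw [e_u, nxt_decomp hy1]
    have nv : nxt n (A ++ ((m1 ++ y :: m2) ++ (x :: B))) y =
        (m2 ++ (x :: B)).headD (n + 1) := by
      rw [e_v, nxt_decomp hy2]
    have hprv : (prv n (A ++ (x :: ((m1 ++ y :: m2) ++ B))) y =
          prv n (A ++ ((m1 ++ y :: m2) ++ (x :: B))) y) ∨
        (y < prv n (A ++ (x :: ((m1 ++ y :: m2) ++ B))) y ∧
          y < prv n (A ++ ((m1 ++ y :: m2) ++ (x :: B))) y) := by
      cases m1 with
      | nil =>
        right
        rw [pu, pv]
        simp only [List.getLastD_cons, List.getLastD_nil, List.append_nil]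
        omega
      | cons c t =>
        left
        rw [pu, pv]
        have h1 : (x :: (c :: t)).getLastD (n + 1) = (c :: t).getLastD (n + 1) :=
          getLastD_append_left (A := [x]) _ (by simp)
        have h2 : (A ++ (c :: t)).getLastD (n + 1) = (c :: t).getLastD (n + 1) :=
          getLastD_append_left _ (by simp)
        rw [h1, h2]
    have hnxt : (nxt n (A ++ (x :: ((m1 ++ y :: m2) ++ B))) y =
          nxt n (A ++ ((m1 ++ y :: m2) ++ (x :: B))) y) ∨
        (y < nxt n (A ++ (x :: ((m1 ++ y :: m2) ++ B))) y ∧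
          y < nxt n (A ++ ((m1 ++ y :: m2) ++ (x :: B))) y) := by
      cases m2 with
      | nil =>
        right
        rw [nu, nv]
        simp only [List.nil_append, List.headD_cons]
        constructor
        · rcases headD_mem_or (A := B) (d := n + 1) with hmem | hdef
          · omega
          · omega
        · omega
      | cons c t =>
        left
        rw [nu, nv]
        rfl
    refine ⟨by omega, by omega, by omega, by omega⟩
  · -- y ∈ B
    obtain ⟨B1, B2, rfl⟩ := List.append_of_mem hyB
    have e_u : A ++ (x :: (m ++ (B1 ++ y :: B2))) =
        (A ++ (x :: (m ++ B1))) ++ (y :: B2) := by simp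
    have e_v : A ++ (m ++ (x :: (B1 ++ y :: B2))) =
        (A ++ (m ++ (x :: B1))) ++ (y :: B2) := by simp
    have hy1 : y ∉ A ++ (x :: (m ++ B1)) := not_mem_left_of_nodup (e_u ▸ hnd)
    have hy2 : y ∉ A ++ (m ++ (x :: B1)) := by
      intro hc
      apply hy1
      simp only [List.mem_append, List.mem_cons] at hc ⊢
      tauto
    have pu : prv n (A ++ (x :: (m ++ (B1 ++ y :: B2)))) y =
        (x :: (m ++ B1)).getLastD (n + 1) := by
      rw [e_u, prv_decomp hy1, getLastD_append_left _ (by simp)]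
    have pv : prv n (A ++ (m ++ (x :: (B1 ++ y :: B2)))) y =
        (m ++ (x :: B1)).getLastD (n + 1) := by
      rw [e_v, prv_decomp hy2, getLastD_append_left _ (by simp)]
    have nu : nxt n (A ++ (x :: (m ++ (B1 ++ y :: B2)))) y = B2.headD (n + 1) := by
      rw [e_u, nxt_decomp hy1]
    have nv : nxt n (A ++ (m ++ (x :: (B1 ++ y :: B2)))) y = B2.headD (n + 1) := by
      rw [e_v, nxt_decomp hy2]
    cases B1 with
    | nil =>
      have hxy : x < y := by
        have : (([] : List ℕ) ++ y :: B2).headD (n + 1) = y := rfl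
        rw [this] at hB
        exact hB
      have hpu : prv n (A ++ (x :: (m ++ (([] : List ℕ) ++ y :: B2)))) y < x := by
        rw [pu]
        simp only [List.append_nil]
        have h1 : (x :: m).getLastD (n + 1) = m.getLastD x := List.getLastD_cons
        rw [h1, getLastD_ne_nil_eq hm (d₂ := 0)]
        have := hlt _ (getLastD_mem hm (d := 0))
        omega
      have hpv : prv n (A ++ (m ++ (x :: (([] : List ℕ) ++ y :: B2)))) y = x := by
        rw [pv]
        exact List.getLastD_concat
      refine ⟨by omega, by omega, by omega, by omega⟩
    | cons c t =>
      have hpu : prv n (A ++ (x :: (m ++ ((c :: t) ++ y :: B2)))) y =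
          (c :: t).getLastD 0 := by
        rw [pu]
        have h1 : (x :: (m ++ (c :: t))).getLastD (n + 1) =
            (m ++ (c :: t)).getLastD (n + 1) := getLastD_append_left (A := [x]) _ (by simp)
        have h2 : (m ++ (c :: t)).getLastD (n + 1) = (c :: t).getLastD (n + 1) :=
          getLastD_append_left _ (by simp)
        rw [h1, h2, getLastD_ne_nil_eq (by simp) (d₂ := 0)]
      have hpv : prv n (A ++ (m ++ (x :: ((c :: t) ++ y :: B2)))) y =
          (c :: t).getLastD 0 := by
        rw [pv]
        have h1 : (m ++ (x :: (c :: t))).getLastD (n + 1) =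
            (x :: (c :: t)).getLastD (n + 1) := getLastD_append_left _ (by simp)
        have h2 : (x :: (c :: t)).getLastD (n + 1) = (c :: t).getLastD (n + 1) :=
          getLastD_append_left (A := [x]) _ (by simp)
        rw [h1, h2, getLastD_ne_nil_eq (by simp) (d₂ := 0)]
      refine ⟨by omega, by omega, by omega, by omega⟩

end core2

/-! ### Hop wrappers -/

lemma dropWhile_head_not' {p : ℕ → Bool} {l : List ℕ} {b : ℕ} {t : List ℕ}
    (h : l.dropWhile p = b :: t) : p b = false := by
  induction l with
  | nil => simp at h
  | cons a s ih =>
    by_cases hp : p a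
    · rw [List.dropWhile_cons_of_pos hp] at h
      exact ih h
    · rw [List.dropWhile_cons_of_neg hp] at h
      cases h
      simpa using hp

lemma getLastD_reverse (l : List ℕ) (d : ℕ) : l.reverse.getLastD d = l.headD d := by
  rw [← headD_reverse, List.reverse_reverse]

lemma w_decomp (h : Pm n w) {x : ℕ} (hx : x ∈ w) :
    w = (w.takeWhile (· ≠ x)) ++ (x :: ((w.dropWhile (· ≠ x)).tail)) := by
  obtain ⟨A, B, hd⟩ := List.append_of_mem hx
  have hnm : x ∉ A := not_mem_left_of_nodup (hd ▸ h.nodup)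
  have h1 := takeWhile_decomp (B := B) hnm
  have h2 := dropWhile_decomp (B := B) hnm
  rw [← hd] at h1 h2
  rw [h1, h2]
  exact hd

lemma mem_Icc_of_mem_DDs {x : ℕ} (hx : x ∈ DDs n w) : x ∈ Finset.Icc 1 n :=
  (Finset.mem_filter.mp hx).1
lemma mem_Icc_of_mem_DAs {x : ℕ} (hx : x ∈ DAs n w) : x ∈ Finset.Icc 1 n :=
  (Finset.mem_filter.mp hx).1

lemma dd_decomp (h : Pm n w) {x : ℕ} (hx : x ∈ DDs n w) :
    ∃ A m B, w = A ++ (x :: (m ++ B)) ∧ m ≠ [] ∧ (∀ z ∈ m, z < x) ∧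
      x < A.getLastD (n + 1) ∧ x < B.headD (n + 1) ∧
      A ++ (m ++ (x :: B)) = phi n x w := by
  obtain ⟨hxI, hprv, hnxt⟩ : x ∈ Finset.Icc 1 n ∧ x < prv n w x ∧ nxt n w x < x := by
    simpa [DDs, Finset.mem_filter] using hx
  simp only [Finset.mem_Icc] at hxI
  have hxw : x ∈ w := h.mem_iff.mpr hxI
  set A := w.takeWhile (· ≠ x) with hAdef
  set r := (w.dropWhile (· ≠ x)).tail with hrdef
  have hw : w = A ++ (x :: r) := w_decomp h hxw
  have hxA : x ∉ A := not_mem_left_of_nodup (hw ▸ h.nodup)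
  have hxr : x ∉ r := not_mem_right_of_nodup (hw ▸ h.nodup)
  have hprv' : x < A.getLastD (n + 1) := by
    have : prv n w x = A.getLastD (n + 1) := by rw [hw]; exact prv_decomp (B := r) hxA
    omega
  have hnxt' : r.headD (n + 1) < x := by
    have : nxt n w x = r.headD (n + 1) := by rw [hw]; exact nxt_decomp (B := r) hxA
    omega
  have hrne : r ≠ [] := by
    intro hc
    rw [hc] at hnxt'
    simp at hnxt'
    omega
  set m := r.takeWhile (· < x) with hmdef
  set B := r.dropWhile (· < x) with hBdef
  have hmB : r = m ++ B := List.takeWhile_append_dropWhile.symm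
  have hmne : m ≠ [] := by
    cases hr : r with
    | nil => exact absurd hr hrne
    | cons a t =>
      have ha : a < x := by
        rw [hr] at hnxt'
        simpa using hnxt'
      rw [hmdef, hr, List.takeWhile_cons_of_pos (by simpa using ha)]
      simp
  have hltm : ∀ z ∈ m, z < x := by
    intro z hz
    have := List.mem_takeWhile_imp hz
    simpa using this
  have hBh : x < B.headD (n + 1) := by
    cases hB : B with
    | nil => simp; omega
    | cons b t =>
      have hble : ¬ b < x := by
        have := dropWhile_head_not' (hBdef ▸ hB)
        simpa using this
      have hbr : b ∈ r := by
        rw [hmB]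
        exact List.mem_append_right m (by rw [hB]; simp)
      have hbne : b ≠ x := fun hc => hxr (hc ▸ hbr)
      simp only [List.headD_cons]
      omega
  refine ⟨A, m, B, by rw [hw, hmB], hmne, hltm, hprv', hBh, ?_⟩
  rw [hw, hmB]
  exact (phi_u hmne hltm hprv' hBh hxA).symm

lemma da_decomp (h : Pm n w) {x : ℕ} (hx : x ∈ DAs n w) :
    ∃ A m B, w = A ++ (m ++ (x :: B)) ∧ m ≠ [] ∧ (∀ z ∈ m, z < x) ∧
      x < A.getLastD (n + 1) ∧ x < B.headD (n + 1) ∧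
      A ++ (x :: (m ++ B)) = phi n x w := by
  obtain ⟨hxI, hprv, hnxt⟩ : x ∈ Finset.Icc 1 n ∧ prv n w x < x ∧ x < nxt n w x := by
    simpa [DAs, Finset.mem_filter] using hx
  simp only [Finset.mem_Icc] at hxI
  have hxw : x ∈ w := h.mem_iff.mpr hxI
  set L := w.takeWhile (· ≠ x) with hLdef
  set r := (w.dropWhile (· ≠ x)).tail with hrdef
  have hw : w = L ++ (x :: r) := w_decomp h hxw
  have hxL : x ∉ L := not_mem_left_of_nodup (hw ▸ h.nodup)
  have hprv' : L.getLastD (n + 1) < x := by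
    have : prv n w x = L.getLastD (n + 1) := by rw [hw]; exact prv_decomp (B := r) hxL
    omega
  have hnxt' : x < r.headD (n + 1) := by
    have : nxt n w x = r.headD (n + 1) := by rw [hw]; exact nxt_decomp (B := r) hxL
    omega
  set A := (L.reverse.dropWhile (· < x)).reverse with hAdef
  set m := (L.reverse.takeWhile (· < x)).reverse with hmdef
  have hAm : A ++ m = L := by
    rw [hAdef, hmdef, ← List.reverse_append, List.takeWhile_append_dropWhile,
      List.reverse_reverse]
  have hLne : L ≠ [] := by
    intro hc
    rw [hc] at hprv'
    simp at hprv'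
    omega
  have hLrne : L.reverse ≠ [] := by simpa using hLne
  have hmne : m ≠ [] := by
    cases hLr : L.reverse with
    | nil => exact absurd hLr hLrne
    | cons a t =>
      have hax : a < x := by
        have : L.getLastD (n + 1) = a := by rw [← headD_reverse, hLr]; rfl
        omega
      rw [hmdef, hLr, List.takeWhile_cons_of_pos (by simpa using hax)]
      simp
  have hltm : ∀ z ∈ m, z < x := by
    intro z hz
    rw [hmdef, List.mem_reverse] at hz
    have := List.mem_takeWhile_imp hz
    simpa using this
  have hA' : x < A.getLastD (n + 1) := by
    rw [hAdef, getLastD_reverse]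
    cases hD : L.reverse.dropWhile (· < x) with
    | nil => simp; omega
    | cons b t =>
      have hble : ¬ b < x := by
        have := dropWhile_head_not' hD
        simpa using this
      have hbmem : b ∈ L := by
        have : b ∈ L.reverse.dropWhile (· < x) := by rw [hD]; simp
        have := (List.dropWhile_sublist _).mem this
        simpa using this
      have hbne : b ≠ x := fun hc => hxL (hc ▸ hbmem)
      simp only [List.headD_cons]
      omega
  refine ⟨A, m, r, ?_, hmne, hltm, hA', hnxt', ?_⟩
  · rw [hw, ← hAm]
    simp
  · have hxm : x ∉ m := fun hc => absurd (hltm x hc) (by omega)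
    have hxA : x ∉ A := fun hc => hxL (hAm ▸ List.mem_append_left m hc)
    have := phi_v (A := A) (m := m) (B := r) hmne hltm hA' hnxt' hxA hxm
    rw [hw, ← hAm]
    rw [← this]
    congr 1
    simp

lemma phi_fix (hdd : ¬(x < prv n w x ∧ nxt n w x < x))
    (hda : ¬(prv n w x < x ∧ x < nxt n w x)) : phi n x w = w := by
  rw [phi]
  split_ifs with h1 h2
  · exact absurd h1 hdd
  · exact absurd h2 hda
  · rfl

lemma dd_hop (h : Pm n w) {x : ℕ} (hx : x ∈ DDs n w) :
    Pm n (phi n x w) ∧ phi n x (phi n x w) = w ∧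
      Pk n (phi n x w) = Pk n w ∧
      DDs n (phi n x w) = (DDs n w).erase x ∧
      DAs n (phi n x w) = insert x (DAs n w) := by
  classical
  obtain ⟨A, m, B, hw, hmne, hltm, hA, hB, hphi⟩ := dd_decomp h hx
  have hxI := mem_Icc_of_mem_DDs hx
  simp only [Finset.mem_Icc] at hxI
  have hxw : x ∈ w := h.mem_iff.mpr hxI
  have hxA : x ∉ A := not_mem_left_of_nodup (hw ▸ h.nodup)
  have hperm : w.Perm (A ++ (m ++ (x :: B))) := hw ▸ perm_uv
  have hPm' : Pm n (phi n x w) := by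
    rw [← hphi]
    exact hperm.symm.trans h
  have hxm : x ∉ m := fun hc => absurd (hltm x hc) (by omega)
  have hundo : phi n x (phi n x w) = w := by
    rw [← hphi, phi_v hmne hltm hA hB hxA hxm, ← hw]
  have hdd_w := x_dd_u (A := A) (m := m) (B := B) hmne hltm hA hxA
  rw [← hw] at hdd_w
  have hda_w' := x_da_v (A := A) (m := m) (B := B) hmne hltm hB hxA hxm
  rw [hphi] at hda_w'
  have hpres : ∀ y, y ≠ x → y ∈ Finset.Icc 1 n →
      ((prv n w y < y ↔ prv n (phi n x w) y < y) ∧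
       (nxt n w y < y ↔ nxt n (phi n x w) y < y) ∧
       (y < prv n w y ↔ y < prv n (phi n x w) y) ∧
       (y < nxt n w y ↔ y < nxt n (phi n x w) y)) := by
    intro y hyx hyI
    simp only [Finset.mem_Icc] at hyI
    have hyu : y ∈ A ++ (x :: (m ++ B)) := by rw [← hw]; exact h.mem_iff.mpr hyI
    have := pres hmne hltm hA hB (hw ▸ h.nodup) y hyx hyu
    rw [← hw, hphi] at this
    exact this
  refine ⟨hPm', hundo, ?_, ?_, ?_⟩
  · ext y
    simp only [Pk, Finset.mem_filter]
    by_cases hyx : y = x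
    · subst hyx
      constructor
      · rintro ⟨-, h1, h2⟩
        omega
      · rintro ⟨-, h1, h2⟩
        omega
    · constructor
      · rintro ⟨hyI, hc1, hc2⟩
        have := hpres y hyx hyI
        exact ⟨hyI, (this.1).mpr hc1, (this.2.1).mpr hc2⟩
      · rintro ⟨hyI, hc1, hc2⟩
        have := hpres y hyx hyI
        exact ⟨hyI, (this.1).mp hc1, (this.2.1).mp hc2⟩
  · ext y
    simp only [DDs, Finset.mem_filter, Finset.mem_erase]
    by_cases hyx : y = x
    · subst hyx
      constructor
      · rintro ⟨-, h1, h2⟩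
        omega
      · rintro ⟨hc, -⟩
        omega
    · constructor
      · rintro ⟨hyI, hc1, hc2⟩
        have := hpres y hyx hyI
        exact ⟨hyx, hyI, (this.2.2.1).mpr hc1, (this.2.1).mpr hc2⟩
      · rintro ⟨-, hyI, hc1, hc2⟩
        have := hpres y hyx hyI
        exact ⟨hyI, (this.2.2.1).mp hc1, (this.2.1).mp hc2⟩
  · ext y
    simp only [DAs, Finset.mem_filter, Finset.mem_insert]
    by_cases hyx : y = x
    · subst hyx
      constructor
      · rintro -
        left; rfl
      · rintro -
        exact ⟨mem_Icc_of_mem_DDs hx, hda_w'.1, hda_w'.2⟩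
    · constructor
      · rintro ⟨hyI, hc1, hc2⟩
        have := hpres y hyx hyI
        right
        exact ⟨hyI, (this.1).mpr hc1, (this.2.2.2).mpr hc2⟩
      · rintro (hc | ⟨hyI, hc1, hc2⟩)
        · exact absurd hc hyx
        · have := hpres y hyx hyI
          exact ⟨hyI, (this.1).mp hc1, (this.2.2.2).mp hc2⟩

lemma da_hop (h : Pm n w) {x : ℕ} (hx : x ∈ DAs n w) :
    Pm n (phi n x w) ∧ phi n x (phi n x w) = w ∧
      Pk n (phi n x w) = Pk n w ∧
      DDs n (phi n x w) = insert x (DDs n w) ∧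
      DAs n (phi n x w) = (DAs n w).erase x := by
  classical
  obtain ⟨A, m, B, hw, hmne, hltm, hA, hB, hphi⟩ := da_decomp h hx
  have hxI := mem_Icc_of_mem_DAs hx
  simp only [Finset.mem_Icc] at hxI
  have hxw : x ∈ w := h.mem_iff.mpr hxI
  have hxm : x ∉ m := fun hc => absurd (hltm x hc) (by omega)
  have hnd_u : (A ++ (x :: (m ++ B))).Nodup := by
    have : (A ++ (m ++ (x :: B))).Nodup := hw ▸ h.nodup
    exact (perm_uv (A := A) (m := m) (B := B) (x := x)).symm.nodup this
  have hxA : x ∉ A := not_mem_left_of_nodup hnd_u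
  have hperm : w.Perm (A ++ (x :: (m ++ B))) :=
    hw ▸ (perm_uv (A := A) (m := m) (B := B) (x := x)).symm
  have hPm' : Pm n (phi n x w) := by
    rw [← hphi]
    exact hperm.symm.trans h
  have hundo : phi n x (phi n x w) = w := by
    rw [← hphi, phi_u hmne hltm hA hB hxA, ← hw]
  have hda_w := x_da_v (A := A) (m := m) (B := B) hmne hltm hB hxA hxm
  rw [← hw] at hda_w
  have hdd_w' := x_dd_u (A := A) (m := m) (B := B) hmne hltm hA hxA
  rw [hphi] at hdd_w'
  have hpres : ∀ y, y ≠ x → y ∈ Finset.Icc 1 n →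
      ((prv n w y < y ↔ prv n (phi n x w) y < y) ∧
       (nxt n w y < y ↔ nxt n (phi n x w) y < y) ∧
       (y < prv n w y ↔ y < prv n (phi n x w) y) ∧
       (y < nxt n w y ↔ y < nxt n (phi n x w) y)) := by
    intro y hyx hyI
    simp only [Finset.mem_Icc] at hyI
    have hyu : y ∈ A ++ (x :: (m ++ B)) := by
      rw [hperm.symm.mem_iff]
      exact h.mem_iff.mpr hyI
    have := pres hmne hltm hA hB hnd_u y hyx hyu
    rw [← hw, hphi] at this
    exact ⟨this.1.symm, this.2.1.symm, this.2.2.1.symm, this.2.2.2.symm⟩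
  refine ⟨hPm', hundo, ?_, ?_, ?_⟩
  · ext y
    simp only [Pk, Finset.mem_filter]
    by_cases hyx : y = x
    · subst hyx
      constructor
      · rintro ⟨-, h1, h2⟩
        omega
      · rintro ⟨-, h1, h2⟩
        omega
    · constructor
      · rintro ⟨hyI, hc1, hc2⟩
        have := hpres y hyx hyI
        exact ⟨hyI, (this.1).mpr hc1, (this.2.1).mpr hc2⟩
      · rintro ⟨hyI, hc1, hc2⟩
        have := hpres y hyx hyI
        exact ⟨hyI, (this.1).mp hc1, (this.2.1).mp hc2⟩
  · ext y
    simp only [DDs, Finset.mem_filter, Finset.mem_insert]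
    by_cases hyx : y = x
    · subst hyx
      constructor
      · rintro -
        left; rfl
      · rintro -
        exact ⟨mem_Icc_of_mem_DAs hx, hdd_w'.1, hdd_w'.2⟩
    · constructor
      · rintro ⟨hyI, hc1, hc2⟩
        have := hpres y hyx hyI
        right
        exact ⟨hyI, (this.2.2.1).mpr hc1, (this.2.1).mpr hc2⟩
      · rintro (hc | ⟨hyI, hc1, hc2⟩)
        · exact absurd hc hyx
        · have := hpres y hyx hyI
          exact ⟨hyI, (this.2.2.1).mp hc1, (this.2.1).mp hc2⟩
  · ext y
    simp only [DAs, Finset.mem_filter, Finset.mem_erase]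
    by_cases hyx : y = x
    · subst hyx
      constructor
      · rintro ⟨-, h1, h2⟩
        omega
      · rintro ⟨hc, -⟩
        omega
    · constructor
      · rintro ⟨hyI, hc1, hc2⟩
        have := hpres y hyx hyI
        exact ⟨hyx, hyI, (this.1).mpr hc1, (this.2.2.2).mpr hc2⟩
      · rintro ⟨-, hyI, hc1, hc2⟩
        have := hpres y hyx hyI
        exact ⟨hyI, (this.1).mp hc1, (this.2.2.2).mp hc2⟩

/-! ### Folding hops -/

def Phi (n : ℕ) (L : List ℕ) (w : List ℕ) : List ℕ := L.foldr (phi n) w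

@[simp] lemma Phi_nil (w : List ℕ) : Phi n [] w = w := rfl
lemma Phi_cons (y : ℕ) (L : List ℕ) (w : List ℕ) :
    Phi n (y :: L) w = phi n y (Phi n L w) := rfl
lemma Phi_append (L1 L2 : List ℕ) (w : List ℕ) :
    Phi n (L1 ++ L2) w = Phi n L1 (Phi n L2 w) := List.foldr_append

section fold

variable {T : Finset (List ℕ)}
variable (hinv : ∀ σ ∈ T, ∀ x ∈ Finset.Icc 1 n, phi n x σ ∈ T)

include hinv

lemma hop_fold_dd : ∀ L : List ℕ, L.Nodup → ∀ w, Pm n w → w ∈ T →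
    (∀ y ∈ L, y ∈ DDs n w) →
    Pm n (Phi n L w) ∧ Phi n L w ∈ T ∧ Pk n (Phi n L w) = Pk n w ∧
      DDs n (Phi n L w) = DDs n w \ L.toFinset ∧
      DAs n (Phi n L w) = DAs n w ∪ L.toFinset ∧
      Phi n L.reverse (Phi n L w) = w := by
  classical
  intro L
  induction L with
  | nil =>
    intro _ w hw hwT _
    simp [Phi_nil]
    exact ⟨hw, hwT⟩
  | cons y L ih =>
    intro hnd w hw hwT hsub
    have hndL : L.Nodup := (List.nodup_cons.mp hnd).2
    have hyL : y ∉ L := (List.nodup_cons.mp hnd).1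
    obtain ⟨h1, h2, h3, h4, h5, h6⟩ :=
      ih hndL w hw hwT (fun z hz => hsub z (List.mem_cons_of_mem _ hz))
    have hyDD : y ∈ DDs n (Phi n L w) := by
      rw [h4, Finset.mem_sdiff]
      exact ⟨hsub y List.mem_cons_self, by simp [hyL]⟩
    obtain ⟨g1, g2, g3, g4, g5⟩ := dd_hop h1 hyDD
    rw [Phi_cons]
    refine ⟨g1, hinv _ h2 _ (mem_Icc_of_mem_DDs hyDD), ?_, ?_, ?_, ?_⟩
    · rw [g3, h3]
    · rw [g4, h4]
      ext z
      simp only [Finset.mem_erase, Finset.mem_sdiff, List.mem_toFinset, List.mem_cons]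
      tauto
    · rw [g5, h5]
      ext z
      simp only [Finset.mem_insert, Finset.mem_union, List.mem_toFinset, List.mem_cons]
      tauto
    · have : (y :: L).reverse = L.reverse ++ [y] := by simp
      rw [this, Phi_append]
      have hy1 : Phi n [y] (phi n y (Phi n L w)) = Phi n L w := by
        rw [Phi_cons, Phi_nil]
        exact g2
      rw [hy1, h6]

lemma hop_fold_da : ∀ L : List ℕ, L.Nodup → ∀ w, Pm n w → w ∈ T →
    (∀ y ∈ L, y ∈ DAs n w) →
    Pm n (Phi n L w) ∧ Phi n L w ∈ T ∧ Pk n (Phi n L w) = Pk n w ∧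
      DDs n (Phi n L w) = DDs n w ∪ L.toFinset ∧
      DAs n (Phi n L w) = DAs n w \ L.toFinset ∧
      Phi n L.reverse (Phi n L w) = w := by
  classical
  intro L
  induction L with
  | nil =>
    intro _ w hw hwT _
    simp [Phi_nil]
    exact ⟨hw, hwT⟩
  | cons y L ih =>
    intro hnd w hw hwT hsub
    have hndL : L.Nodup := (List.nodup_cons.mp hnd).2
    have hyL : y ∉ L := (List.nodup_cons.mp hnd).1
    obtain ⟨h1, h2, h3, h4, h5, h6⟩ :=
      ih hndL w hw hwT (fun z hz => hsub z (List.mem_cons_of_mem _ hz))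
    have hyDA : y ∈ DAs n (Phi n L w) := by
      rw [h5, Finset.mem_sdiff]
      exact ⟨hsub y List.mem_cons_self, by simp [hyL]⟩
    obtain ⟨g1, g2, g3, g4, g5⟩ := da_hop h1 hyDA
    rw [Phi_cons]
    refine ⟨g1, hinv _ h2 _ (mem_Icc_of_mem_DAs hyDA), ?_, ?_, ?_, ?_⟩
    · rw [g3, h3]
    · rw [g4, h4]
      ext z
      simp only [Finset.mem_insert, Finset.mem_union, List.mem_toFinset, List.mem_cons]
      tauto
    · rw [g5, h5]
      ext z
      simp only [Finset.mem_erase, Finset.mem_sdiff, List.mem_toFinset, List.mem_cons]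
      tauto
    · have : (y :: L).reverse = L.reverse ++ [y] := by simp
      rw [this, Phi_append]
      have hy1 : Phi n [y] (phi n y (Phi n L w)) = Phi n L w := by
        rw [Phi_cons, Phi_nil]
        exact g2
      rw [hy1, h6]

end fold

/-! ### Canonicalization -/

def can (n : ℕ) (σ : List ℕ) : List ℕ := Phi n ((DDs n σ).sort (· ≤ ·)) σ
def unhop (n : ℕ) (τ : List ℕ) (S : Finset ℕ) : List ℕ :=
  Phi n ((S.sort (· ≤ ·)).reverse) τ

section canon

variable {T : Finset (List ℕ)}
variable (hinv : ∀ σ ∈ T, ∀ x ∈ Finset.Icc 1 n, phi n x σ ∈ T)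

include hinv

lemma can_facts {σ : List ℕ} (hσT : σ ∈ T) (hσ : Pm n σ) :
    Pm n (can n σ) ∧ can n σ ∈ T ∧ Pk n (can n σ) = Pk n σ ∧
      DDs n (can n σ) = ∅ ∧ DAs n (can n σ) = DAs n σ ∪ DDs n σ ∧
      unhop n (can n σ) (DDs n σ) = σ := by
  classical
  obtain ⟨h1, h2, h3, h4, h5, h6⟩ := hop_fold_dd hinv ((DDs n σ).sort (· ≤ ·))
    (Finset.sort_nodup _ _) σ hσ hσT
    (fun y hy => (Finset.mem_sort _).mp hy)
  rw [Finset.sort_toFinset] at h4 h5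
  rw [Finset.sdiff_self] at h4
  exact ⟨h1, h2, h3, h4, h5, h6⟩

lemma unhop_facts {τ : List ℕ} (hτT : τ ∈ T) (hτ : Pm n τ) (hτdd : DDs n τ = ∅)
    {S : Finset ℕ} (hS : S ⊆ DAs n τ) :
    Pm n (unhop n τ S) ∧ unhop n τ S ∈ T ∧ Pk n (unhop n τ S) = Pk n τ ∧
      DDs n (unhop n τ S) = S ∧ can n (unhop n τ S) = τ := by
  classical
  obtain ⟨h1, h2, h3, h4, h5, h6⟩ := hop_fold_da hinv ((S.sort (· ≤ ·)).reverse)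
    (by rw [List.nodup_reverse]; exact Finset.sort_nodup _ _) τ hτ hτT
    (fun y hy => hS (by simpa using (List.mem_reverse.mp hy)))
  rw [List.toFinset_reverse, Finset.sort_toFinset] at h4 h5
  rw [hτdd, Finset.empty_union] at h4
  refine ⟨h1, h2, h3, h4, ?_⟩
  simp only [can, unhop]
  rw [h4]
  rw [List.reverse_reverse] at h6
  exact h6

end canon

lemma sum_powerset_pow (t : Finset ℕ) (x : ℝ) :
    ∑ S ∈ t.powerset, x ^ S.card = (1 + x) ^ t.card := by
  classical
  have h := Finset.prod_add (fun _ : ℕ => x) (fun _ : ℕ => (1 : ℝ)) t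
  simp only [Finset.prod_const, one_pow, mul_one] at h
  rw [add_comm 1 x, ← h]

theorem descent_polynomial_gamma_nonneg_of_invariant
    (n : ℕ) (T : Finset (List ℕ))
    (hperm : ∀ σ ∈ T, σ.Perm (List.range' 1 n))
    (hinv : ∀ σ ∈ T, ∀ x ∈ Finset.Icc 1 n, phi n x σ ∈ T) (x : ℝ) :
    ∑ σ ∈ T, x ^ des n σ =
      ∑ i ∈ Finset.range ((n - 1) / 2 + 1),
        ((2 : ℝ) ^ (2 * i) / 2 ^ (n - 1) *
            (T.filter (fun σ => peak n σ = i)).card) *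
          x ^ i * (1 + x) ^ (n - 1 - 2 * i) := by
  classical
  have hPm : ∀ σ ∈ T, Pm n σ := hperm
  set C : Finset (List ℕ) := T.filter (fun τ => DDs n τ = ∅) with hC
  have hmaps : ∀ σ ∈ T, can n σ ∈ C := by
    intro σ hσ
    obtain ⟨h1, h2, h3, h4, h5, h6⟩ := can_facts hinv hσ (hPm σ hσ)
    exact Finset.mem_filter.mpr ⟨h2, h4⟩
  have hCmem : ∀ τ ∈ C, τ ∈ T ∧ Pm n τ ∧ DDs n τ = ∅ := by
    intro τ hτ
    have := Finset.mem_filter.mp hτ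
    exact ⟨this.1, hPm τ this.1, this.2⟩
  have hPk_fiber : ∀ τ ∈ C, ∀ σ ∈ T, can n σ = τ → Pk n σ = Pk n τ := by
    intro τ hτ σ hσ hcanσ
    obtain ⟨h1, h2, h3, h4, h5, h6⟩ := can_facts hinv hσ (hPm σ hσ)
    rw [← hcanσ, h3]
  have hpeak_fiber : ∀ τ ∈ C, ∀ σ ∈ T, can n σ = τ → peak n σ = peak n τ := by
    intro τ hτ σ hσ hcanσ
    rw [peak_eq (hPm σ hσ), peak_eq (hCmem τ hτ).2.1, hPk_fiber τ hτ σ hσ hcanσ]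
  have hDAcard : ∀ τ ∈ C, (DAs n τ).card = n - 1 - 2 * peak n τ := by
    intro τ hτ
    obtain ⟨hτT, hτPm, hτdd⟩ := hCmem τ hτ
    have hda := (da_dd_count hτPm).1
    have hdd0 : (DDs n τ).card = 0 := by rw [hτdd]; rfl
    rw [peak_eq hτPm]
    omega
  have hbij : ∀ τ ∈ C, ∀ (f : List ℕ → ℝ) (g : Finset ℕ → ℝ),
      (∀ σ ∈ T.filter (fun σ => can n σ = τ), f σ = g (DDs n σ)) →
      ∑ σ ∈ T.filter (fun σ => can n σ = τ), f σ = ∑ S ∈ (DAs n τ).powerset, g S := by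
    intro τ hτ f g hfg
    obtain ⟨hτT, hτPm, hτdd⟩ := hCmem τ hτ
    apply Finset.sum_nbij' (fun σ => DDs n σ) (fun S => unhop n τ S)
    · intro σ hσ
      obtain ⟨hσT, hcanσ⟩ := Finset.mem_filter.mp hσ
      obtain ⟨h1, h2, h3, h4, h5, h6⟩ := can_facts hinv hσT (hPm σ hσT)
      rw [Finset.mem_powerset, ← hcanσ, h5]
      exact Finset.subset_union_right
    · intro S hS
      obtain ⟨h1, h2, h3, h4, h5⟩ :=
        unhop_facts hinv hτT hτPm hτdd (Finset.mem_powerset.mp hS)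
      exact Finset.mem_filter.mpr ⟨h2, h5⟩
    · intro σ hσ
      obtain ⟨hσT, hcanσ⟩ := Finset.mem_filter.mp hσ
      obtain ⟨h1, h2, h3, h4, h5, h6⟩ := can_facts hinv hσT (hPm σ hσT)
      rw [← hcanσ]
      exact h6
    · intro S hS
      exact (unhop_facts hinv hτT hτPm hτdd (Finset.mem_powerset.mp hS)).2.2.2.1
    · exact hfg
  have hLHS : ∑ σ ∈ T, x ^ des n σ =
      ∑ τ ∈ C, x ^ peak n τ * (1 + x) ^ (n - 1 - 2 * peak n τ) := by
    rw [← Finset.sum_fiberwise_of_maps_to hmaps (fun σ => x ^ des n σ)]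
    apply Finset.sum_congr rfl
    intro τ hτ
    obtain ⟨hτT, hτPm, hτdd⟩ := hCmem τ hτ
    have inner : ∑ σ ∈ T.filter (fun σ => can n σ = τ), x ^ des n σ =
        ∑ S ∈ (DAs n τ).powerset, x ^ ((Pk n τ).card + S.card) := by
      apply hbij τ hτ
      intro σ hσ
      obtain ⟨hσT, hcanσ⟩ := Finset.mem_filter.mp hσ
      rw [des_split (hPm σ hσT), hPk_fiber τ hτ σ hσT hcanσ]
    rw [inner]
    have : ∀ S ∈ (DAs n τ).powerset,
        x ^ ((Pk n τ).card + S.card) = x ^ (Pk n τ).card * x ^ S.card := by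
      intro S _
      rw [pow_add]
    rw [Finset.sum_congr rfl this, ← Finset.mul_sum, sum_powerset_pow,
      hDAcard τ hτ, ← peak_eq hτPm]
  rw [hLHS]
  have hpeak_le : ∀ τ ∈ C, peak n τ ∈ Finset.range ((n - 1) / 2 + 1) := by
    intro τ hτ
    obtain ⟨hτT, hτPm, hτdd⟩ := hCmem τ hτ
    have := (da_dd_count hτPm).2
    rw [Finset.mem_range, peak_eq hτPm]
    omega
  rw [← Finset.sum_fiberwise_of_maps_to hpeak_le
    (fun τ => x ^ peak n τ * (1 + x) ^ (n - 1 - 2 * peak n τ))]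
  apply Finset.sum_congr rfl
  intro i hi
  have h2i : 2 * i ≤ n - 1 := by
    rw [Finset.mem_range] at hi
    omega
  -- inner sum is constant
  have hconst : ∑ τ ∈ C.filter (fun τ => peak n τ = i),
      x ^ peak n τ * (1 + x) ^ (n - 1 - 2 * peak n τ) =
      ((C.filter (fun τ => peak n τ = i)).card : ℝ) *
        (x ^ i * (1 + x) ^ (n - 1 - 2 * i)) := by
    rw [Finset.sum_congr rfl (fun τ hτ => ?_), Finset.sum_const, nsmul_eq_mul]
    have hpi : peak n τ = i := (Finset.mem_filter.mp hτ).2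
    rw [hpi]
  rw [hconst]
  -- count the fibers
  have hTcount : (T.filter (fun σ => peak n σ = i)).card =
      (C.filter (fun τ => peak n τ = i)).card * 2 ^ (n - 1 - 2 * i) := by
    rw [Finset.card_eq_sum_card_fiberwise
      (f := can n) (t := C) (fun σ hσ => hmaps σ (Finset.mem_filter.mp hσ).1)]
    have hterm : ∀ τ ∈ C,
        ((T.filter (fun σ => peak n σ = i)).filter (fun σ => can n σ = τ)).card =
          if peak n τ = i then 2 ^ (n - 1 - 2 * i) else 0 := by
      intro τ hτ
      obtain ⟨hτT, hτPm, hτdd⟩ := hCmem τ hτ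
      by_cases hpi : peak n τ = i
      · rw [if_pos hpi]
        have hset : (T.filter (fun σ => peak n σ = i)).filter (fun σ => can n σ = τ) =
            T.filter (fun σ => can n σ = τ) := by
          ext σ
          simp only [Finset.mem_filter]
          constructor
          · rintro ⟨⟨ha, -⟩, hc⟩
            exact ⟨ha, hc⟩
          · rintro ⟨ha, hc⟩
            exact ⟨⟨ha, by rw [hpeak_fiber τ hτ σ ha hc, hpi]⟩, hc⟩
        rw [hset]
        have hcard : (T.filter (fun σ => can n σ = τ)).card = (DAs n τ).powerset.card := by
          apply Finset.card_nbij' (fun σ => DDs n σ) (fun S => unhop n τ S)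
          · intro σ hσ
            obtain ⟨hσT, hcanσ⟩ := Finset.mem_filter.mp hσ
            obtain ⟨h1, h2, h3, h4, h5, h6⟩ := can_facts hinv hσT (hPm σ hσT)
            rw [Finset.mem_coe, Finset.mem_powerset, ← hcanσ, h5]
            exact Finset.subset_union_right
          · intro S hS
            obtain ⟨h1, h2, h3, h4, h5⟩ :=
              unhop_facts hinv hτT hτPm hτdd (Finset.mem_powerset.mp hS)
            exact Finset.mem_filter.mpr ⟨h2, h5⟩
          · intro σ hσ
            obtain ⟨hσT, hcanσ⟩ := Finset.mem_filter.mp hσ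
            obtain ⟨h1, h2, h3, h4, h5, h6⟩ := can_facts hinv hσT (hPm σ hσT)
            rw [← hcanσ]
            exact h6
          · intro S hS
            exact (unhop_facts hinv hτT hτPm hτdd (Finset.mem_powerset.mp hS)).2.2.2.1
        rw [hcard, Finset.card_powerset, hDAcard τ hτ, hpi]
      · rw [if_neg hpi, Finset.card_eq_zero]
        ext σ
        simp only [Finset.mem_filter, Finset.notMem_empty, iff_false, not_and]
        rintro ⟨hσT, hpk⟩ hcan
        exact hpi (by rw [← hpeak_fiber τ hτ σ hσT hcan, hpk])
    rw [Finset.sum_congr rfl hterm, ← Finset.sum_filter, Finset.sum_const,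
      smul_eq_mul, mul_comm]
  rw [hTcount]
  have hpow : (2 : ℝ) ^ (2 * i) * 2 ^ (n - 1 - 2 * i) = 2 ^ (n - 1) := by
    rw [← pow_add]
    congr 1
    omega
  have hne : (2 : ℝ) ^ (n - 1) ≠ 0 := by positivity
  have hcoeff : (2 : ℝ) ^ (2 * i) / 2 ^ (n - 1) *
      ((((C.filter (fun τ => peak n τ = i)).card * 2 ^ (n - 1 - 2 * i) : ℕ)) : ℝ) =
      ((C.filter (fun τ => peak n τ = i)).card : ℝ) := by
    push_cast
    rw [div_mul_eq_mul_div, div_eq_iff hne]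
    rw [← hpow]
    ring
  rw [hcoeff]
  ring
end

section
/- For any permutation π ∈ S_n, the orbit of π under the Foata–Strehl action satisfies Σ_{σ ∈ Orb(π)} x^{des(σ)} = x^{peak(π)} (1+x)^{n-1-2·peak(π)}. -/
/-- The orbit of the word `w` under the `ℤ₂ⁿ`-action generated by the commuting
involutions `φₓ`, `x ∈ [n]`. -/
def Orb (n : ℕ) (w : List ℕ) : Set (List ℕ) :=
  {σ | ∃ l : List ℕ, (∀ x ∈ l, x ∈ Finset.Icc 1 n) ∧ σ = l.foldr (phi n) w}

namespace FS

lemma takeWhile_first (p : ℕ → Bool) (a : List ℕ) (y : ℕ) (b : List ℕ)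
    (ha : ∀ z ∈ a, p z = true) (hy : p y = false) :
    (a ++ y :: b).takeWhile p = a := by
  induction a with
  | nil => simp [List.takeWhile_cons, hy]
  | cons c t ih =>
      have hc := ha c (by simp)
      simp only [List.cons_append, List.takeWhile_cons, hc, if_true]
      rw [ih (fun z hz => ha z (by simp [hz]))]

lemma dropWhile_first (p : ℕ → Bool) (a : List ℕ) (y : ℕ) (b : List ℕ)
    (ha : ∀ z ∈ a, p z = true) (hy : p y = false) :
    (a ++ y :: b).dropWhile p = y :: b := by
  induction a with
  | nil => simp [List.dropWhile_cons, hy]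
  | cons c t ih =>
      have hc := ha c (by simp)
      simp only [List.cons_append, List.dropWhile_cons, hc, if_true]
      exact ih (fun z hz => ha z (by simp [hz]))

lemma takeWhile_append_head (p : ℕ → Bool) (u v : List ℕ)
    (hv : ∀ h ∈ v.head?, p h = false) :
    (u ++ v).takeWhile p = u.takeWhile p := by
  induction u with
  | nil =>
      cases v with
      | nil => simp
      | cons h t => simp [List.takeWhile_cons, hv h rfl]
  | cons c t ih =>
      by_cases hc : p c = true
      · simp [List.takeWhile_cons, hc, ih]
      · simp only [Bool.not_eq_true] at hc
        simp [List.takeWhile_cons, hc]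

lemma dropWhile_append_head (p : ℕ → Bool) (u v : List ℕ)
    (hv : ∀ h ∈ v.head?, p h = false) :
    (u ++ v).dropWhile p = u.dropWhile p ++ v := by
  induction u with
  | nil =>
      cases v with
      | nil => simp
      | cons h t => simp [List.dropWhile_cons, hv h rfl]
  | cons c t ih =>
      by_cases hc : p c = true
      · simp [List.dropWhile_cons, hc, ih]
      · simp only [Bool.not_eq_true] at hc
        simp [List.dropWhile_cons, hc]

lemma mem_decomp {y : ℕ} {u : List ℕ} (hu : u.Nodup) (hy : y ∈ u) :
    ∃ a b, u = a ++ y :: b ∧ y ∉ a ∧ y ∉ b := by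
  obtain ⟨a, b, rfl⟩ := List.append_of_mem hy
  have h1 := List.nodup_append'.mp hu
  refine ⟨a, b, rfl, ?_, ?_⟩
  · intro h
    exact h1.2.2 h (by simp)
  · exact (List.nodup_cons.mp h1.2.1).1

lemma getLastD_append (u v : List ℕ) (d : ℕ) (hv : v ≠ []) :
    (u ++ v).getLastD d = v.getLastD d := by
  rw [List.getLastD_eq_getLast?, List.getLastD_eq_getLast?, List.getLast?_append]
  cases e : v.getLast? with
  | none => exact absurd (List.getLast?_eq_none_iff.mp e) hv
  | some z => simp [e]

lemma headD_append (u v : List ℕ) (d : ℕ) (hu : u ≠ []) :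
    (u ++ v).headD d = u.headD d := by
  cases u with
  | nil => simp at hu
  | cons h t => simp

lemma getLastD_mem_or (a : List ℕ) (d : ℕ) : a.getLastD d = d ∨ a.getLastD d ∈ a := by
  cases a with
  | nil => left; rfl
  | cons h t =>
      right
      rw [List.getLastD_eq_getLast?, List.getLast?_eq_getLast (l := h :: t) (by simp)]
      simp [List.getLast_mem]

lemma headD_mem_or (a : List ℕ) (d : ℕ) : a.headD d = d ∨ a.headD d ∈ a := by
  cases a with
  | nil => left; rfl
  | cons h t => right; simp

/-- the letter before `y` (with boundary `n+1`). -/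
def Prv (n : ℕ) (w : List ℕ) (y : ℕ) : ℕ := (w.takeWhile (· ≠ y)).getLastD (n+1)

/-- the letter after `y` (with boundary `n+1`). -/
def Nxt (n : ℕ) (w : List ℕ) (y : ℕ) : ℕ := ((w.dropWhile (· ≠ y)).tail).headD (n+1)

lemma takeWhile_ne_first {y : ℕ} (a b : List ℕ) (ha : y ∉ a) :
    (a ++ y :: b).takeWhile (· ≠ y) = a := by
  refine takeWhile_first _ a y b (fun z hz => ?_) (by simp)
  simp only [decide_eq_true_eq]
  exact fun e => ha (e ▸ hz)

lemma dropWhile_ne_first {y : ℕ} (a b : List ℕ) (ha : y ∉ a) :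
    (a ++ y :: b).dropWhile (· ≠ y) = y :: b := by
  refine dropWhile_first _ a y b (fun z hz => ?_) (by simp)
  simp only [decide_eq_true_eq]
  exact fun e => ha (e ▸ hz)

lemma Prv_decomp (n y : ℕ) (a b : List ℕ) (ha : y ∉ a) :
    Prv n (a ++ y :: b) y = a.getLastD (n+1) := by
  rw [Prv, takeWhile_ne_first a b ha]

lemma Nxt_decomp (n y : ℕ) (a b : List ℕ) (ha : y ∉ a) :
    Nxt n (a ++ y :: b) y = b.headD (n+1) := by
  rw [Nxt, dropWhile_ne_first a b ha]; rfl

/-- validity: `σ` is a permutation of `1..n`. -/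
def Valid (n : ℕ) (σ : List ℕ) : Prop := σ.Perm (List.range' 1 n)

lemma Valid.nodup {n σ} (h : Valid n σ) : σ.Nodup := h.nodup_iff.mpr (List.nodup_range' (s := 1) (n := n))

lemma Valid.length {n σ} (h : Valid n σ) : σ.length = n := by
  simpa using h.length_eq

lemma Valid.mem_iff {n σ} (h : Valid n σ) {y : ℕ} : y ∈ σ ↔ 1 ≤ y ∧ y ≤ n := by
  rw [List.Perm.mem_iff h, List.mem_range'_1]; omega

lemma Valid.le_n {n σ} (h : Valid n σ) {y : ℕ} (hy : y ∈ σ) : 1 ≤ y ∧ y ≤ n :=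
  (Valid.mem_iff h).mp hy

lemma Prv_ne {n σ y} (h : Valid n σ) (hy : y ∈ σ) : Prv n σ y ≠ y := by
  obtain ⟨a, b, rfl, ha, hb⟩ := mem_decomp h.nodup hy
  rw [Prv_decomp n y a b ha]
  rcases getLastD_mem_or a (n+1) with e | e
  · rw [e]; have := (h.le_n hy).2; omega
  · exact fun e' => ha (e' ▸ e)

lemma Nxt_ne {n σ y} (h : Valid n σ) (hy : y ∈ σ) : Nxt n σ y ≠ y := by
  obtain ⟨a, b, rfl, ha, hb⟩ := mem_decomp h.nodup hy
  rw [Nxt_decomp n y a b ha]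
  rcases headD_mem_or b (n+1) with e | e
  · rw [e]; have := (h.le_n hy).2; omega
  · exact fun e' => hb (e' ▸ e)

/-- double descent -/
def IsDD (n : ℕ) (σ : List ℕ) (x : ℕ) : Prop := x < Prv n σ x ∧ Nxt n σ x < x
/-- double ascent -/
def IsDA (n : ℕ) (σ : List ℕ) (x : ℕ) : Prop := Prv n σ x < x ∧ x < Nxt n σ x
/-- peak -/
def IsPk (n : ℕ) (σ : List ℕ) (x : ℕ) : Prop := Prv n σ x < x ∧ Nxt n σ x < x
/-- valley -/
def IsVl (n : ℕ) (σ : List ℕ) (x : ℕ) : Prop := x < Prv n σ x ∧ x < Nxt n σ x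

lemma all_takeWhile (p : ℕ → Bool) (u : List ℕ) (h : ∀ z ∈ u, p z = true) :
    u.takeWhile p = u := List.takeWhile_eq_self_iff.mpr h

lemma all_dropWhile (p : ℕ → Bool) (u : List ℕ) (h : ∀ z ∈ u, p z = true) :
    u.dropWhile p = [] := List.dropWhile_eq_nil_iff.mpr h

lemma nodup_parts {l r : List ℕ} {x : ℕ} (h : (l ++ x :: r).Nodup) :
    x ∉ l ∧ x ∉ r ∧ l.Nodup ∧ r.Nodup ∧ ∀ y ∈ l, y ∉ r := by
  have h1 := List.nodup_append'.mp h
  have h2 := List.nodup_cons.mp h1.2.1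
  refine ⟨fun hx => h1.2.2 hx (by simp), h2.1, h1.1, h2.2, fun y hy hyr => h1.2.2 hy (by simp [hyr])⟩

lemma phi_eq_ite (n x : ℕ) (σ : List ℕ) :
    phi n x σ =
      if x < (σ.takeWhile (· ≠ x)).getLastD (n+1) ∧
          ((σ.dropWhile (· ≠ x)).tail).headD (n+1) < x then
        σ.takeWhile (· ≠ x) ++ ((σ.dropWhile (· ≠ x)).tail).takeWhile (· < x)
          ++ x :: ((σ.dropWhile (· ≠ x)).tail).dropWhile (· < x)
      else if (σ.takeWhile (· ≠ x)).getLastD (n+1) < x ∧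
          x < ((σ.dropWhile (· ≠ x)).tail).headD (n+1) then
        ((σ.takeWhile (· ≠ x)).reverse.dropWhile (· < x)).reverse
          ++ x :: (((σ.takeWhile (· ≠ x)).reverse.takeWhile (· < x)).reverse
            ++ (σ.dropWhile (· ≠ x)).tail)
      else σ := rfl

lemma Prv_eq_decomp {n x : ℕ} {l r : List ℕ} (hxl : x ∉ l) :
    Prv n (l ++ x :: r) x = l.getLastD (n+1) := Prv_decomp n x l r hxl

lemma Nxt_eq_decomp {n x : ℕ} {l r : List ℕ} (hxl : x ∉ l) :
    Nxt n (l ++ x :: r) x = r.headD (n+1) := Nxt_decomp n x l r hxl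

lemma phi_of_dd {n x : ℕ} {l r : List ℕ} (hxl : x ∉ l)
    (hdd : IsDD n (l ++ x :: r) x) :
    phi n x (l ++ x :: r) = l ++ r.takeWhile (· < x) ++ x :: r.dropWhile (· < x) := by
  rw [phi_eq_ite, takeWhile_ne_first l r hxl, dropWhile_ne_first l r hxl]
  simp only [List.tail_cons]
  refine if_pos ?_
  obtain ⟨h1, h2⟩ := hdd
  rw [Prv_eq_decomp hxl] at h1
  rw [Nxt_eq_decomp hxl] at h2
  exact ⟨h1, h2⟩

lemma phi_of_da {n x : ℕ} {l r : List ℕ} (hxl : x ∉ l)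
    (hda : IsDA n (l ++ x :: r) x) :
    phi n x (l ++ x :: r) =
      (l.reverse.dropWhile (· < x)).reverse ++ x :: ((l.reverse.takeWhile (· < x)).reverse ++ r) := by
  rw [phi_eq_ite, takeWhile_ne_first l r hxl, dropWhile_ne_first l r hxl]
  simp only [List.tail_cons]
  obtain ⟨h1, h2⟩ := hda
  rw [Prv_eq_decomp hxl] at h1
  rw [Nxt_eq_decomp hxl] at h2
  exact (if_neg (by omega)).trans (if_pos ⟨h1, h2⟩)

lemma phi_of_fix {n x : ℕ} {σ : List ℕ} (h : IsPk n σ x ∨ IsVl n σ x) :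
    phi n x σ = σ := by
  rw [phi_eq_ite]
  rcases h with ⟨h1, h2⟩ | ⟨h1, h2⟩ <;>
    [ (rw [Prv] at h1; rw [Nxt] at h2); (rw [Prv] at h1; rw [Nxt] at h2)] <;>
    rw [if_neg (by omega), if_neg (by omega)]

lemma getLastD_mem {a : List ℕ} (h : a ≠ []) (d : ℕ) : a.getLastD d ∈ a := by
  cases a with
  | nil => exact absurd rfl h
  | cons c t =>
      rw [List.getLastD_eq_getLast?, List.getLast?_eq_getLast (l := c :: t) (by simp)]
      exact List.getLast_mem _

lemma takeWhile_all_append (p : ℕ → Bool) (u v : List ℕ) (h : ∀ z ∈ u, p z = true) :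
    (u ++ v).takeWhile p = u ++ v.takeWhile p := by
  induction u with
  | nil => simp
  | cons c t ih =>
      simp only [List.cons_append, List.takeWhile_cons, h c (by simp), if_true]
      rw [ih (fun z hz => h z (by simp [hz]))]

lemma dropWhile_all_append (p : ℕ → Bool) (u v : List ℕ) (h : ∀ z ∈ u, p z = true) :
    (u ++ v).dropWhile p = v.dropWhile p := by
  induction u with
  | nil => simp
  | cons c t ih =>
      simp only [List.cons_append, List.dropWhile_cons, h c (by simp), if_true]
      exact ih (fun z hz => h z (by simp [hz]))

theorem dd_main {n x : ℕ} {l r : List ℕ} (h : Valid n (l ++ x :: r)) (hxl : x ∉ l)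
    (hdd : IsDD n (l ++ x :: r) x) :
    (phi n x (l ++ x :: r)).Perm (l ++ x :: r)
    ∧ IsDA n (phi n x (l ++ x :: r)) x
    ∧ phi n x (phi n x (l ++ x :: r)) = l ++ x :: r
    ∧ ∀ y ∈ l ++ x :: r, y ≠ x →
        ((y < Prv n (phi n x (l ++ x :: r)) y ↔ y < Prv n (l ++ x :: r) y) ∧
         (y < Nxt n (phi n x (l ++ x :: r)) y ↔ y < Nxt n (l ++ x :: r) y)) := by
  have hmemx : x ∈ l ++ x :: r := by simp
  have hx1 : 1 ≤ x := (h.le_n hmemx).1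
  have hxn : x ≤ n := (h.le_n hmemx).2
  obtain ⟨hxl', hxr, hlnd, hrnd, hdisj⟩ := nodup_parts h.nodup
  have hP : x < l.getLastD (n+1) := by
    have := hdd.1; rwa [Prv_eq_decomp hxl] at this
  have hN : r.headD (n+1) < x := by
    have := hdd.2; rwa [Nxt_eq_decomp hxl] at this
  set r₁ := r.takeWhile (· < x) with hr1def
  set r₂ := r.dropWhile (· < x) with hr2def
  have hr : r₁ ++ r₂ = r := List.takeWhile_append_dropWhile
  have hr1lt : ∀ z ∈ r₁, z < x := fun z hz => by simpa using List.mem_takeWhile_imp hz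
  have hr1ne : r₁ ≠ [] := by
    cases r with
    | nil => simp at hN; omega
    | cons q t =>
        simp only [List.headD_cons] at hN
        rw [hr1def]
        simp [List.takeWhile_cons, hN]
  have hr1sub : ∀ z ∈ r₁, z ∈ r := fun z hz => (List.takeWhile_sublist _).subset hz
  have hr2sub : ∀ z ∈ r₂, z ∈ r := fun z hz => (List.dropWhile_sublist _).subset hz
  have hr2head : ∀ s ∈ r₂.head?, x < s := by
    intro s e
    have h1 := List.head?_dropWhile_not (fun z => decide (z < x)) r
    rw [← hr2def] at h1
    rw [e] at h1
    simp only [decide_eq_false_iff_not, not_lt] at h1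
    have hs : s ∈ r := hr2sub s (List.mem_of_mem_head? e)
    have : s ≠ x := fun e' => hxr (e' ▸ hs)
    omega
  have hxr1 : x ∉ r₁ := fun hx => hxr (hr1sub x hx)
  have hxr2 : x ∉ r₂ := fun hx => hxr (hr2sub x hx)
  have hdisj12 : ∀ z ∈ r₂, z ∉ r₁ := by
    have : (r₁ ++ r₂).Nodup := by rw [hr]; exact hrnd
    intro z hz2 hz1
    exact (List.nodup_append'.mp this).2.2 hz1 hz2
  have hphi : phi n x (l ++ x :: r) = l ++ r₁ ++ x :: r₂ := phi_of_dd hxl hdd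
  rw [hphi]
  have ht : r₁.getLastD (n+1) < x := hr1lt _ (getLastD_mem hr1ne _)
  have hperm : (l ++ r₁ ++ x :: r₂).Perm (l ++ x :: r) := by
    have h1 : (r₁ ++ x :: r₂).Perm (x :: (r₁ ++ r₂)) := List.perm_middle
    have h2 := h1.append_left l
    rw [← List.append_assoc, hr] at h2
    exact h2
  have hxlr1 : x ∉ l ++ r₁ := by simp [hxl, hxr1]
  have hassoc : l ++ r₁ ++ x :: r₂ = (l ++ r₁) ++ x :: r₂ := rfl
  have hPrv' : Prv n (l ++ r₁ ++ x :: r₂) x = r₁.getLastD (n+1) := by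
    rw [hassoc, Prv_eq_decomp hxlr1, getLastD_append l r₁ _ hr1ne]
  have hNxt'gt : x < Nxt n (l ++ r₁ ++ x :: r₂) x := by
    rw [hassoc, Nxt_eq_decomp hxlr1]
    cases e : r₂ with
    | nil => simp; omega
    | cons s t => simpa using hr2head s (by rw [e]; rfl)
  have hda' : IsDA n (l ++ r₁ ++ x :: r₂) x := ⟨by rw [hPrv']; omega, hNxt'gt⟩
  have hltake : l.reverse.takeWhile (· < x) = [] := by
    cases e : l.reverse with
    | nil => rfl
    | cons c t =>
        have h0 : l.getLast? = some c := by rw [← List.head?_reverse, e]; rfl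
        have hc : l.getLastD (n+1) = c := by rw [List.getLastD_eq_getLast?, h0]; rfl
        have : ¬ (c < x) := by omega
        simp [List.takeWhile_cons, this]
  have hldrop : l.reverse.dropWhile (· < x) = l.reverse := by
    cases e : l.reverse with
    | nil => rfl
    | cons c t =>
        have h0 : l.getLast? = some c := by rw [← List.head?_reverse, e]; rfl
        have hc : l.getLastD (n+1) = c := by rw [List.getLastD_eq_getLast?, h0]; rfl
        have : ¬ (c < x) := by omega
        simp [List.dropWhile_cons, this]
  have hinv : phi n x (l ++ r₁ ++ x :: r₂) = l ++ x :: r := by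
    rw [hassoc, phi_of_da hxlr1 (hassoc ▸ hda')]
    have hrev : (l ++ r₁).reverse = r₁.reverse ++ l.reverse := by simp
    have hallrev : ∀ z ∈ r₁.reverse, (fun z => decide (z < x)) z = true := by
      intro z hz
      simp only [decide_eq_true_eq]
      exact hr1lt z (by simpa using hz)
    have h1 : (l ++ r₁).reverse.takeWhile (· < x) = r₁.reverse := by
      rw [hrev, takeWhile_all_append _ _ _ hallrev, hltake, List.append_nil]
    have h2 : (l ++ r₁).reverse.dropWhile (· < x) = l.reverse := by
      rw [hrev, dropWhile_all_append _ _ _ hallrev, hldrop]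
    rw [h1, h2]
    simp [hr]
  refine ⟨hperm, hda', hinv, ?_⟩
  intro y hy hyx
  have hyn : y ≤ n := (h.le_n hy).2
  have hmem : y ∈ l ∨ y ∈ r := by
    rcases List.mem_append.mp hy with h1 | h1
    · exact Or.inl h1
    · rcases List.mem_cons.mp h1 with e | h2
      · exact absurd e hyx
      · exact Or.inr h2
  rcases hmem with hyl | hyr'
  · -- y ∈ l
    obtain ⟨a, b, rfl, hya, hyb⟩ := mem_decomp hlnd hyl
    have e1 : (a ++ y :: b) ++ r₁ ++ x :: r₂ = a ++ y :: (b ++ (r₁ ++ x :: r₂)) := by simp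
    have e2 : (a ++ y :: b) ++ x :: r = a ++ y :: (b ++ x :: r) := by simp
    rw [e1, e2, Prv_decomp n y _ _ hya, Prv_decomp n y _ _ hya,
      Nxt_decomp n y _ _ hya, Nxt_decomp n y _ _ hya]
    refine ⟨Iff.rfl, ?_⟩
    cases b with
    | cons c t => simp
    | nil =>
        simp only [List.nil_append]
        have hylast : (a ++ y :: ([] : List ℕ)).getLastD (n+1) = y := List.getLastD_concat
        rw [hylast] at hP
        cases e : r₁ with
        | nil => exact absurd e hr1ne
        | cons q t =>
            have hq : q < x := hr1lt q (by rw [e]; simp)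
            simp only [List.cons_append, List.headD_cons]
            constructor <;> intro <;> omega
  · -- y ∈ r
    rw [← hr] at hyr'
    have hynl : y ∉ l := fun hc => hdisj y hc (by rw [← hr]; exact hyr')
    rcases List.mem_append.mp hyr' with hy1 | hy2
    · -- y ∈ r₁
      have hylt : y < x := hr1lt y hy1
      obtain ⟨a, b, hab, hya, hyb⟩ := mem_decomp (hrnd.sublist (List.takeWhile_sublist _)) hy1
      rw [← hr1def] at hab
      have hynotla : y ∉ l ++ x :: a := by
        simp only [List.mem_append, List.mem_cons]; push_neg; exact ⟨hynl, hyx, hya⟩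
      have hynotla' : y ∉ l ++ a := by
        simp only [List.mem_append]; push_neg; exact ⟨hynl, hya⟩
      have e1 : l ++ r₁ ++ x :: r₂ = (l ++ a) ++ y :: (b ++ x :: r₂) := by rw [hab]; simp
      have e2 : l ++ x :: r = (l ++ x :: a) ++ y :: (b ++ r₂) := by rw [← hr, hab]; simp
      rw [e1, e2, Prv_decomp n y _ _ hynotla', Prv_decomp n y _ _ hynotla,
        Nxt_decomp n y _ _ hynotla', Nxt_decomp n y _ _ hynotla]
      constructor
      · cases a with
        | nil =>
            simp only [List.append_nil]
            have : (l ++ x :: ([] : List ℕ)).getLastD (n+1) = x := List.getLastD_concat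
            rw [this]
            constructor <;> intro <;> omega
        | cons c t =>
            rw [getLastD_append l (c :: t) _ (by simp),
              show l ++ x :: c :: t = (l ++ [x]) ++ (c :: t) by simp,
              getLastD_append (l ++ [x]) (c :: t) _ (by simp)]
      · cases b with
        | cons c t => simp
        | nil =>
            simp only [List.nil_append]
            cases e : r₂ with
            | nil => simp; omega
            | cons s t =>
                have hs : x < s := hr2head s (by rw [e]; rfl)
                simp only [List.headD_cons]
                constructor <;> intro <;> omega
    · -- y ∈ r₂
      have hynr1 : y ∉ r₁ := hdisj12 y hy2
      obtain ⟨a, b, hab, hya, hyb⟩ := mem_decomp (hrnd.sublist (List.dropWhile_sublist _)) hy2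
      rw [← hr2def] at hab
      have hynot1 : y ∉ l ++ r₁ ++ x :: a := by
        simp only [List.mem_append, List.mem_cons]; push_neg
        exact ⟨⟨hynl, hynr1⟩, hyx, hya⟩
      have hynot2 : y ∉ l ++ x :: (r₁ ++ a) := by
        simp only [List.mem_append, List.mem_cons]; push_neg
        exact ⟨hynl, hyx, hynr1, hya⟩
      have e1 : l ++ r₁ ++ x :: r₂ = (l ++ r₁ ++ x :: a) ++ y :: b := by rw [hab]; simp
      have e2 : l ++ x :: r = (l ++ x :: (r₁ ++ a)) ++ y :: b := by rw [← hr, hab]; simp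
      rw [e1, e2, Prv_decomp n y _ _ hynot1, Prv_decomp n y _ _ hynot2,
        Nxt_decomp n y _ _ hynot1, Nxt_decomp n y _ _ hynot2]
      refine ⟨?_, Iff.rfl⟩
      cases a with
      | nil =>
          have hy0 : x < y := by
            refine hr2head y ?_
            rw [hab]; rfl
          have v1 : (l ++ r₁ ++ x :: ([] : List ℕ)).getLastD (n+1) = x := List.getLastD_concat
          have v2 : (l ++ x :: (r₁ ++ ([] : List ℕ))).getLastD (n+1) = r₁.getLastD (n+1) := by
            rw [List.append_nil,
              show l ++ x :: r₁ = (l ++ [x]) ++ r₁ by simp,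
              getLastD_append (l ++ [x]) r₁ _ hr1ne]
          rw [v1, v2]
          constructor <;> intro <;> omega
      | cons c t =>
          rw [show l ++ r₁ ++ x :: c :: t = (l ++ r₁ ++ [x]) ++ (c :: t) by simp,
            getLastD_append (l ++ r₁ ++ [x]) (c :: t) _ (by simp),
            show l ++ x :: (r₁ ++ c :: t) = (l ++ x :: r₁) ++ (c :: t) by simp,
            getLastD_append (l ++ x :: r₁) (c :: t) _ (by simp)]

lemma getLastD_reverse_headD (u : List ℕ) (d : ℕ) : (u.reverse).getLastD d = u.headD d := by
  rw [List.getLastD_eq_getLast?, List.getLast?_reverse, List.headD_eq_head?]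

lemma sigma_decomp {σ : List ℕ} {x : ℕ} (hx : x ∈ σ) :
    ∃ l r, σ = l ++ x :: r ∧ x ∉ l := by
  refine ⟨σ.takeWhile (· ≠ x), (σ.dropWhile (· ≠ x)).tail, ?_, ?_⟩
  · have hne : σ.dropWhile (· ≠ x) ≠ [] := by
      intro e
      have : x ∈ σ.takeWhile (· ≠ x) := by
        have := (List.takeWhile_append_dropWhile (p := fun z => decide (z ≠ x)) : _ = σ)
        rw [e, List.append_nil] at this
        rw [this]; exact hx
      simpa using List.mem_takeWhile_imp this
    cases e : σ.dropWhile (· ≠ x) with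
    | nil => exact absurd e hne
    | cons c t =>
        have h1 := List.head?_dropWhile_not (fun z => decide (z ≠ x)) σ
        rw [e] at h1
        simp only [List.head?_cons] at h1
        have hc : c = x := by simpa using h1
        conv_lhs => rw [← (List.takeWhile_append_dropWhile (p := fun z => decide (z ≠ x)) : _ = σ), e]
        rw [hc]
        rfl
  · intro hc
    simpa using List.mem_takeWhile_imp hc

theorem da_main {n x : ℕ} {σ : List ℕ} (h : Valid n σ) (hx : x ∈ σ) (hda : IsDA n σ x) :
    (phi n x σ).Perm σ ∧ IsDD n (phi n x σ) x ∧ phi n x (phi n x σ) = σ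
    ∧ ∀ y ∈ σ, y ≠ x →
        ((y < Prv n (phi n x σ) y ↔ y < Prv n σ y) ∧
         (y < Nxt n (phi n x σ) y ↔ y < Nxt n σ y)) := by
  have hx1 : 1 ≤ x := (h.le_n hx).1
  have hxn : x ≤ n := (h.le_n hx).2
  obtain ⟨l, r, rfl, hxl⟩ := sigma_decomp hx
  obtain ⟨hxl', hxr, hlnd, hrnd, hdisj⟩ := nodup_parts h.nodup
  have hP : l.getLastD (n+1) < x := by
    have := hda.1; rwa [Prv_eq_decomp hxl] at this
  have hN : x < r.headD (n+1) := by
    have := hda.2; rwa [Nxt_eq_decomp hxl] at this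
  set l₁ := (l.reverse.takeWhile (· < x)).reverse with hl1def
  set l₂ := (l.reverse.dropWhile (· < x)).reverse with hl2def
  have hl : l = l₂ ++ l₁ := by
    rw [hl1def, hl2def, ← List.reverse_append, List.takeWhile_append_dropWhile,
      List.reverse_reverse]
  have hl1lt : ∀ z ∈ l₁, z < x := by
    intro z hz
    rw [hl1def, List.mem_reverse] at hz
    simpa using List.mem_takeWhile_imp hz
  have hl1sub : ∀ z ∈ l₁, z ∈ l := fun z hz => by
    rw [hl] ; exact List.mem_append.mpr (Or.inr hz)
  have hl2sub : ∀ z ∈ l₂, z ∈ l := fun z hz => by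
    rw [hl] ; exact List.mem_append.mpr (Or.inl hz)
  have hlne : l ≠ [] := by
    intro e; rw [e] at hP; simp at hP; omega
  have hl1ne : l₁ ≠ [] := by
    cases e : l.reverse with
    | nil => exact absurd (by simpa using e) hlne
    | cons c t =>
        have h0 : l.getLast? = some c := by rw [← List.head?_reverse, e]; rfl
        have hc : l.getLastD (n+1) = c := by rw [List.getLastD_eq_getLast?, h0]; rfl
        have hcx : c < x := by omega
        rw [hl1def, e]
        simp [List.takeWhile_cons, hcx]
  have hτdef : phi n x (l ++ x :: r) = l₂ ++ x :: (l₁ ++ r) := by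
    rw [phi_of_da hxl hda, ← hl1def, ← hl2def]
  have hxl2 : x ∉ l₂ := fun hc => hxl (hl2sub x hc)
  have hxl1 : x ∉ l₁ := fun hc => hxl (hl1sub x hc)
  have hpermτ : (l₂ ++ x :: (l₁ ++ r)).Perm (l ++ x :: r) := by
    have h1 : (x :: (l₁ ++ r)).Perm (l₁ ++ x :: r) := List.perm_middle.symm
    have h2 := h1.append_left l₂
    rw [hl]
    simpa [List.append_assoc] using h2
  have hvalτ : Valid n (l₂ ++ x :: (l₁ ++ r)) := hpermτ.trans h
  have hl2last : x < l₂.getLastD (n+1) := by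
    rw [hl2def, getLastD_reverse_headD]
    cases e2 : l.reverse.dropWhile (· < x) with
    | nil => simp; omega
    | cons d u =>
        have h1 := List.head?_dropWhile_not (fun z => decide (z < x)) l.reverse
        rw [e2] at h1
        simp only [List.head?_cons] at h1
        have hd : ¬ d < x := by simpa using h1
        have hdl : d ∈ l := by
          have hmm : d ∈ l.reverse.dropWhile (· < x) := by rw [e2]; simp
          have := (List.dropWhile_sublist _).subset hmm
          simpa using this
        have hdx : d ≠ x := fun e' => hxl (e' ▸ hdl)
        simp only [List.headD_cons]
        omega
  have hddτ : IsDD n (l₂ ++ x :: (l₁ ++ r)) x := by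
    constructor
    · rw [Prv_eq_decomp hxl2]; exact hl2last
    · rw [Nxt_eq_decomp hxl2]
      cases e : l₁ with
      | nil => exact absurd e hl1ne
      | cons c t =>
          have : c < x := hl1lt c (by rw [e]; simp)
          simpa using this
  have hmain := dd_main (l := l₂) (r := l₁ ++ r) hvalτ hxl2 hddτ
  have hback : phi n x (l₂ ++ x :: (l₁ ++ r)) = l ++ x :: r := by
    rw [phi_of_dd hxl2 hddτ]
    have h1 : (l₁ ++ r).takeWhile (· < x) = l₁ ++ r.takeWhile (· < x) :=
      takeWhile_all_append _ _ _ (fun z hz => by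
        simp only [decide_eq_true_eq]; exact hl1lt z hz)
    have h2 : (l₁ ++ r).dropWhile (· < x) = r.dropWhile (· < x) :=
      dropWhile_all_append _ _ _ (fun z hz => by
        simp only [decide_eq_true_eq]; exact hl1lt z hz)
    have h3 : r.takeWhile (· < x) = [] := by
      cases e : r with
      | nil => rfl
      | cons c t =>
          rw [e] at hN
          simp only [List.headD_cons] at hN
          have : ¬ c < x := by omega
          simp [List.takeWhile_cons, this]
    have h4 : r.dropWhile (· < x) = r := by
      cases e : r with
      | nil => rfl
      | cons c t =>
          rw [e] at hN
          simp only [List.headD_cons] at hN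
          have : ¬ c < x := by omega
          simp [List.dropWhile_cons, this]
    rw [h1, h2, h3, h4, List.append_nil, hl]
  rw [hτdef]
  obtain ⟨hm1, hm2, hm3, hm4⟩ := hmain
  rw [hback] at hm1 hm2 hm3 hm4
  refine ⟨hpermτ, hddτ, hback, ?_⟩
  intro y hy hyx
  have hyτ : y ∈ l₂ ++ x :: (l₁ ++ r) := hpermτ.mem_iff.mpr hy
  have := hm4 y hyτ hyx
  exact ⟨(this.1).symm, (this.2).symm⟩

lemma type_four {n : ℕ} {σ : List ℕ} {x : ℕ} (h : Valid n σ) (hx : x ∈ σ) :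
    IsDD n σ x ∨ IsDA n σ x ∨ IsPk n σ x ∨ IsVl n σ x := by
  have h1 := Prv_ne h hx
  have h2 := Nxt_ne h hx
  unfold IsDD IsDA IsPk IsVl
  omega

theorem phi_main {n x : ℕ} {σ : List ℕ} (h : Valid n σ) (hx1 : 1 ≤ x) (hxn : x ≤ n) :
    (phi n x σ).Perm σ ∧ phi n x (phi n x σ) = σ ∧
    (∀ y ∈ σ, y ≠ x →
      ((y < Prv n (phi n x σ) y ↔ y < Prv n σ y) ∧
       (y < Nxt n (phi n x σ) y ↔ y < Nxt n σ y))) ∧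
    (IsDD n σ x → IsDA n (phi n x σ) x) ∧
    (IsDA n σ x → IsDD n (phi n x σ) x) ∧
    ((IsPk n σ x ∨ IsVl n σ x) → phi n x σ = σ) := by
  have hx : x ∈ σ := (Valid.mem_iff h).mpr ⟨hx1, hxn⟩
  rcases type_four h hx with hT | hT | hT | hT
  · obtain ⟨l, r, rfl, hxl⟩ := sigma_decomp hx
    obtain ⟨p1, p2, p3, p4⟩ := dd_main h hxl hT
    refine ⟨p1, p3, p4, fun _ => p2, fun hc => ?_, fun hc => ?_⟩
    · exfalso; have := hc.1; have := hT.1; omega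
    · exfalso; rcases hc with hc | hc
      · have := hc.1; have := hT.1; omega
      · have := hc.2; have := hT.2; omega
  · obtain ⟨p1, p2, p3, p4⟩ := da_main h hx hT
    refine ⟨p1, p3, p4, fun hc => ?_, fun _ => p2, fun hc => ?_⟩
    · exfalso; have := hc.1; have := hT.1; omega
    · exfalso; rcases hc with hc | hc
      · have := hc.2; have := hT.2; omega
      · have := hc.1; have := hT.1; omega
  · have he : phi n x σ = σ := phi_of_fix (Or.inl hT)
    refine ⟨by rw [he], by rw [he, he], fun y hy hyx => by rw [he]; exact ⟨Iff.rfl, Iff.rfl⟩,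
      fun hc => ?_, fun hc => ?_, fun _ => he⟩
    · exfalso; have := hc.1; have := hT.1; omega
    · exfalso; have := hc.2; have := hT.2; omega
  · have he : phi n x σ = σ := phi_of_fix (Or.inr hT)
    refine ⟨by rw [he], by rw [he, he], fun y hy hyx => by rw [he]; exact ⟨Iff.rfl, Iff.rfl⟩,
      fun hc => ?_, fun hc => ?_, fun _ => he⟩
    · exfalso; have := hc.2; have := hT.2; omega
    · exfalso; have := hc.1; have := hT.1; omega

instance (n : ℕ) (σ : List ℕ) (x : ℕ) : Decidable (IsPk n σ x) :=
  inferInstanceAs (Decidable (Prv n σ x < x ∧ Nxt n σ x < x))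
instance (n : ℕ) (σ : List ℕ) (x : ℕ) : Decidable (IsDD n σ x) :=
  inferInstanceAs (Decidable (x < Prv n σ x ∧ Nxt n σ x < x))
instance (n : ℕ) (σ : List ℕ) (x : ℕ) : Decidable (IsDA n σ x) :=
  inferInstanceAs (Decidable (Prv n σ x < x ∧ x < Nxt n σ x))
instance (n : ℕ) (σ : List ℕ) (x : ℕ) : Decidable (IsVl n σ x) :=
  inferInstanceAs (Decidable (x < Prv n σ x ∧ x < Nxt n σ x))

/-- peak letters -/
def pkF (n : ℕ) (σ : List ℕ) : Finset ℕ := (Finset.Icc 1 n).filter (fun y => IsPk n σ y)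
/-- double-descent letters -/
def ddF (n : ℕ) (σ : List ℕ) : Finset ℕ := (Finset.Icc 1 n).filter (fun y => IsDD n σ y)
/-- free letters -/
def freeF (n : ℕ) (σ : List ℕ) : Finset ℕ :=
  (Finset.Icc 1 n).filter (fun y => IsDD n σ y ∨ IsDA n σ y)

lemma type_iff {n : ℕ} {σ σ' : List ℕ} {y : ℕ} (hv : Valid n σ) (hv' : Valid n σ')
    (hy : y ∈ σ) (hy' : y ∈ σ')
    (h1 : y < Prv n σ' y ↔ y < Prv n σ y) (h2 : y < Nxt n σ' y ↔ y < Nxt n σ y) :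
    (IsPk n σ' y ↔ IsPk n σ y) ∧ (IsDD n σ' y ↔ IsDD n σ y) ∧
    (IsDA n σ' y ↔ IsDA n σ y) ∧ (IsVl n σ' y ↔ IsVl n σ y) := by
  have := Prv_ne hv hy
  have := Nxt_ne hv hy
  have := Prv_ne hv' hy'
  have := Nxt_ne hv' hy'
  unfold IsPk IsDD IsDA IsVl
  omega

theorem phi_step {n x : ℕ} {σ : List ℕ} (h : Valid n σ) (hx1 : 1 ≤ x) (hxn : x ≤ n) :
    Valid n (phi n x σ) ∧ pkF n (phi n x σ) = pkF n σ ∧ freeF n (phi n x σ) = freeF n σ ∧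
    (IsDD n σ x → ddF n (phi n x σ) = (ddF n σ).erase x) ∧
    (IsDA n σ x → ddF n (phi n x σ) = insert x (ddF n σ)) ∧
    ((IsPk n σ x ∨ IsVl n σ x) → phi n x σ = σ) ∧
    phi n x (phi n x σ) = σ := by
  have hx : x ∈ σ := (Valid.mem_iff h).mpr ⟨hx1, hxn⟩
  obtain ⟨p1, p2, p3, p4, p5, p6⟩ := phi_main h hx1 hxn
  have hv' : Valid n (phi n x σ) := p1.trans h
  have hiff : ∀ y, y ∈ Finset.Icc 1 n → y ≠ x →
      ((IsPk n (phi n x σ) y ↔ IsPk n σ y) ∧ (IsDD n (phi n x σ) y ↔ IsDD n σ y) ∧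
       (IsDA n (phi n x σ) y ↔ IsDA n σ y) ∧ (IsVl n (phi n x σ) y ↔ IsVl n σ y)) := by
    intro y hyI hyx
    rw [Finset.mem_Icc] at hyI
    have hy : y ∈ σ := (Valid.mem_iff h).mpr hyI
    have hy' : y ∈ phi n x σ := p1.mem_iff.mpr hy
    obtain ⟨q1, q2⟩ := p3 y hy hyx
    exact type_iff h hv' hy hy' q1 q2
  have hxtype : (IsDD n σ x → ¬ IsPk n (phi n x σ) x ∧ ¬ IsDD n (phi n x σ) x ∧
      (IsDD n (phi n x σ) x ∨ IsDA n (phi n x σ) x)) ∧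
      (IsDA n σ x → ¬ IsPk n (phi n x σ) x ∧ IsDD n (phi n x σ) x) := by
    constructor
    · intro hdd
      have hda' := p4 hdd
      exact ⟨fun hc => by have := hc.2; have := hda'.2; omega,
        fun hc => by have := hc.1; have := hda'.1; omega, Or.inr hda'⟩
    · intro hda
      have hdd' := p5 hda
      exact ⟨fun hc => by have := hc.1; have := hdd'.1; omega, hdd'⟩
  refine ⟨hv', ?_, ?_, ?_, ?_, p6, p2⟩
  · ext y
    simp only [pkF, Finset.mem_filter]
    by_cases hyx : y = x
    · subst hyx
      rcases type_four h hx with hT | hT | hT | hT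
      · constructor
        · rintro ⟨h1, h2⟩; exact absurd h2 (hxtype.1 hT).1
        · rintro ⟨h1, h2⟩; exfalso; have := h2.1; have := hT.1; omega
      · constructor
        · rintro ⟨h1, h2⟩; exact absurd h2 (hxtype.2 hT).1
        · rintro ⟨h1, h2⟩; exfalso; have := h2.2; have := hT.2; omega
      · rw [p6 (Or.inl hT)]
      · rw [p6 (Or.inr hT)]
    · constructor
      · rintro ⟨h1, h2⟩; exact ⟨h1, ((hiff y h1 hyx).1).mp h2⟩
      · rintro ⟨h1, h2⟩; exact ⟨h1, ((hiff y h1 hyx).1).mpr h2⟩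
  · ext y
    simp only [freeF, Finset.mem_filter]
    by_cases hyx : y = x
    · subst hyx
      rcases type_four h hx with hT | hT | hT | hT
      · constructor
        · rintro ⟨h1, _⟩; exact ⟨h1, Or.inl hT⟩
        · rintro ⟨h1, _⟩; exact ⟨h1, (hxtype.1 hT).2.2⟩
      · constructor
        · rintro ⟨h1, _⟩; exact ⟨h1, Or.inr hT⟩
        · rintro ⟨h1, _⟩; exact ⟨h1, Or.inl ((hxtype.2 hT).2)⟩
      · rw [p6 (Or.inl hT)]
      · rw [p6 (Or.inr hT)]
    · constructor
      · rintro ⟨h1, h2⟩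
        refine ⟨h1, ?_⟩
        rcases h2 with h2 | h2
        · exact Or.inl (((hiff y h1 hyx).2.1).mp h2)
        · exact Or.inr (((hiff y h1 hyx).2.2.1).mp h2)
      · rintro ⟨h1, h2⟩
        refine ⟨h1, ?_⟩
        rcases h2 with h2 | h2
        · exact Or.inl (((hiff y h1 hyx).2.1).mpr h2)
        · exact Or.inr (((hiff y h1 hyx).2.2.1).mpr h2)
  · intro hdd
    ext y
    simp only [ddF, Finset.mem_filter, Finset.mem_erase]
    by_cases hyx : y = x
    · subst hyx
      constructor
      · rintro ⟨h1, h2⟩; exact absurd h2 (hxtype.1 hdd).2.1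
      · rintro ⟨hne, _⟩; exact absurd rfl hne
    · constructor
      · rintro ⟨h1, h2⟩; exact ⟨hyx, h1, ((hiff y h1 hyx).2.1).mp h2⟩
      · rintro ⟨_, h1, h2⟩; exact ⟨h1, ((hiff y h1 hyx).2.1).mpr h2⟩
  · intro hda
    ext y
    simp only [ddF, Finset.mem_filter, Finset.mem_insert]
    by_cases hyx : y = x
    · subst hyx
      constructor
      · rintro ⟨h1, h2⟩; exact Or.inl rfl
      · rintro _; exact ⟨Finset.mem_Icc.mpr ⟨hx1, hxn⟩, (hxtype.2 hda).2⟩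
    · constructor
      · rintro ⟨h1, h2⟩; exact Or.inr ⟨h1, ((hiff y h1 hyx).2.1).mp h2⟩
      · rintro (e | ⟨h1, h2⟩)
        · exact absurd e hyx
        · exact ⟨h1, ((hiff y h1 hyx).2.1).mpr h2⟩

lemma headD_lt {P : List ℕ} {x d : ℕ} (hne : P ≠ []) (hall : ∀ z ∈ P, z < x) :
    P.headD d < x := by
  cases P with
  | nil => exact absurd rfl hne
  | cons c t => exact hall c (by simp)

lemma headD_append_ne {a : List ℕ} (b : List ℕ) (d : ℕ) (h : a ≠ []) :
    (a ++ b).headD d = a.headD d := by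
  cases a with
  | nil => exact absurd rfl h
  | cons c t => simp

lemma takeWhile_eq_nil_head (p : ℕ → Bool) (v : List ℕ)
    (h : ∀ s ∈ v.head?, p s = false) : v.takeWhile p = [] := by
  cases v with
  | nil => rfl
  | cons c t => simp [List.takeWhile_cons, h c rfl]

lemma dropWhile_eq_self_head (p : ℕ → Bool) (v : List ℕ)
    (h : ∀ s ∈ v.head?, p s = false) : v.dropWhile p = v := by
  cases v with
  | nil => rfl
  | cons c t => simp [List.dropWhile_cons, h c rfl]

theorem comm_dd_ordered {n x y : ℕ} {l r : List ℕ}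
    (h : Valid n (l ++ x :: r)) (hxl : x ∉ l) (hyr : y ∈ r)
    (hx : IsDD n (l ++ x :: r) x) (hy : IsDD n (l ++ x :: r) y) :
    phi n x (phi n y (l ++ x :: r)) = phi n y (phi n x (l ++ x :: r)) := by
  have hmemx : x ∈ l ++ x :: r := by simp
  have hxn : x ≤ n := (h.le_n hmemx).2
  have hmemy : y ∈ l ++ x :: r := by simp [hyr]
  have hyn : y ≤ n := (h.le_n hmemy).2
  obtain ⟨hxl', hxr, hlnd, hrnd, hdisj⟩ := nodup_parts h.nodup
  have hyx : y ≠ x := fun e => hxr (e ▸ hyr)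
  have hynl : y ∉ l := fun hc => hdisj y hc hyr
  have hP : x < l.getLastD (n+1) := by
    have := hx.1; rwa [Prv_eq_decomp hxl] at this
  have hN : r.headD (n+1) < x := by
    have := hx.2; rwa [Nxt_eq_decomp hxl] at this
  set r₁ := r.takeWhile (· < x) with hr1def
  set r₂ := r.dropWhile (· < x) with hr2def
  have hr : r₁ ++ r₂ = r := List.takeWhile_append_dropWhile
  have hr1lt : ∀ z ∈ r₁, z < x := fun z hz => by simpa using List.mem_takeWhile_imp hz
  have hr1ne : r₁ ≠ [] := by
    cases r with
    | nil => simp at hN; omega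
    | cons q t =>
        simp only [List.headD_cons] at hN
        rw [hr1def]; simp [List.takeWhile_cons, hN]
  have hr1sub : ∀ z ∈ r₁, z ∈ r := fun z hz => (List.takeWhile_sublist _).subset hz
  have hr2sub : ∀ z ∈ r₂, z ∈ r := fun z hz => (List.dropWhile_sublist _).subset hz
  have hr2head : ∀ s ∈ r₂.head?, x < s := by
    intro s e
    have h1 := List.head?_dropWhile_not (fun z => decide (z < x)) r
    rw [← hr2def, e] at h1
    simp only [decide_eq_false_iff_not, not_lt] at h1
    have hs : s ∈ r := hr2sub s (List.mem_of_mem_head? e)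
    have : s ≠ x := fun e' => hxr (e' ▸ hs)
    omega
  have hr2headd : ∀ s ∈ r₂.head?, (fun z => decide (z < x)) s = false := by
    intro s e
    have := hr2head s e
    simp only [decide_eq_false_iff_not, not_lt]; omega
  have htwr2 : r₂.takeWhile (· < x) = [] := takeWhile_eq_nil_head _ _ hr2headd
  have hdwr2 : r₂.dropWhile (· < x) = r₂ := dropWhile_eq_self_head _ _ hr2headd
  have hdisj12 : ∀ z ∈ r₂, z ∉ r₁ := by
    have hnd : (r₁ ++ r₂).Nodup := by rw [hr]; exact hrnd
    intro z hz2 hz1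
    exact (List.nodup_append'.mp hnd).2.2 hz1 hz2
  have ht : r₁.getLastD (n+1) < x := hr1lt _ (getLastD_mem hr1ne _)
  have hphix : phi n x (l ++ x :: r) = l ++ r₁ ++ x :: r₂ := phi_of_dd hxl hx
  rw [← hr] at hyr
  rcases List.mem_append.mp hyr with hyB | hyA
  · -- CASE B : y ∈ r₁
    have hylx : y < x := hr1lt y hyB
    obtain ⟨c, d, hcd, hyc, hyd⟩ := mem_decomp (hrnd.sublist (List.takeWhile_sublist _)) hyB
    rw [← hr1def] at hcd
    have hclt : ∀ z ∈ c, z < x := fun z hz => hr1lt z (by rw [hcd]; simp [hz])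
    have hdlt : ∀ z ∈ d, z < x := fun z hz => hr1lt z (by rw [hcd]; simp [hz])
    have hync : y ∉ l ++ x :: c := by
      simp only [List.mem_append, List.mem_cons]; push_neg; exact ⟨hynl, hyx, hyc⟩
    have eσy : l ++ x :: r = (l ++ x :: c) ++ y :: (d ++ r₂) := by rw [← hr, hcd]; simp
    have hyP : y < (l ++ x :: c).getLastD (n+1) := by
      have h0 := hy.1; rw [eσy, Prv_decomp n y _ _ hync] at h0; exact h0
    have hyN : (d ++ r₂).headD (n+1) < y := by
      have h0 := hy.2; rw [eσy, Nxt_decomp n y _ _ hync] at h0; exact h0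
    have hdne : d ≠ [] := by
      intro e
      rw [e, List.nil_append] at hyN
      cases e2 : r₂ with
      | nil => rw [e2] at hyN; simp at hyN; omega
      | cons s t =>
          rw [e2] at hyN
          simp only [List.headD_cons] at hyN
          have := hr2head s (by rw [e2]; rfl)
          omega
    have hdh : d.headD (n+1) < y := by rwa [headD_append_ne _ _ hdne] at hyN
    set d₁ := d.takeWhile (· < y) with hd1def
    set d₂ := d.dropWhile (· < y) with hd2def
    have hd1sub : ∀ z ∈ d₁, z ∈ d := fun z hz => (List.takeWhile_sublist _).subset hz
    have hd2sub : ∀ z ∈ d₂, z ∈ d := fun z hz => (List.dropWhile_sublist _).subset hz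
    have hr2nlty : ∀ s ∈ r₂.head?, (fun z => decide (z < y)) s = false := by
      intro s e
      have := hr2head s e
      simp only [decide_eq_false_iff_not, not_lt]; omega
    have htw1 : (d ++ r₂).takeWhile (· < y) = d₁ := by
      rw [takeWhile_append_head _ _ _ hr2nlty, hd1def]
    have hdw1 : (d ++ r₂).dropWhile (· < y) = d₂ ++ r₂ := by
      rw [dropWhile_append_head _ _ _ hr2nlty, hd2def]
    have hyddB : IsDD n ((l ++ x :: c) ++ y :: (d ++ r₂)) y := by rw [← eσy]; exact hy
    have hphiy : phi n y (l ++ x :: r) = (l ++ x :: c) ++ d₁ ++ y :: (d₂ ++ r₂) := by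
      rw [eσy, phi_of_dd hync hyddB, htw1, hdw1]
    have eρ : (l ++ x :: c) ++ d₁ ++ y :: (d₂ ++ r₂) = l ++ x :: ((c ++ d₁ ++ y :: d₂) ++ r₂) := by
      simp
    have hPall : ∀ z ∈ c ++ d₁ ++ y :: d₂, z < x := by
      intro z hz
      simp only [List.mem_append, List.mem_cons] at hz
      rcases hz with (hz | hz) | hz | hz
      · exact hclt z hz
      · exact hdlt z (hd1sub z hz)
      · omega
      · exact hdlt z (hd2sub z hz)
    have hPalld : ∀ z ∈ c ++ d₁ ++ y :: d₂, (fun z => decide (z < x)) z = true := by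
      intro z hz; simpa using hPall z hz
    have hPne : (c ++ d₁ ++ y :: d₂) ≠ [] := by simp
    have hxddρ : IsDD n (l ++ x :: ((c ++ d₁ ++ y :: d₂) ++ r₂)) x := by
      constructor
      · rw [Prv_eq_decomp hxl]; exact hP
      · rw [Nxt_eq_decomp hxl, headD_append_ne _ _ hPne]
        exact headD_lt hPne hPall
    have htwx : ((c ++ d₁ ++ y :: d₂) ++ r₂).takeWhile (· < x) = c ++ d₁ ++ y :: d₂ := by
      rw [takeWhile_all_append _ _ _ hPalld, htwr2, List.append_nil]
    have hdwx : ((c ++ d₁ ++ y :: d₂) ++ r₂).dropWhile (· < x) = r₂ := by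
      rw [dropWhile_all_append _ _ _ hPalld, hdwr2]
    have side1 : phi n x (phi n y (l ++ x :: r)) = l ++ (c ++ d₁ ++ y :: d₂) ++ x :: r₂ := by
      rw [hphiy, eρ, phi_of_dd hxl hxddρ, htwx, hdwx]
    have eτ : l ++ r₁ ++ x :: r₂ = (l ++ c) ++ y :: (d ++ x :: r₂) := by rw [hcd]; simp
    have hyncτ : y ∉ l ++ c := by
      simp only [List.mem_append]; push_neg; exact ⟨hynl, hyc⟩
    have hyddτ : IsDD n ((l ++ c) ++ y :: (d ++ x :: r₂)) y := by
      constructor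
      · rw [Prv_decomp n y _ _ hyncτ]
        cases e : c with
        | nil =>
            rw [e] at hyP
            have hv : (l ++ x :: ([] : List ℕ)).getLastD (n+1) = x := List.getLastD_concat
            rw [hv] at hyP
            simp only [List.append_nil]
            omega
        | cons c0 ct =>
            rw [e] at hyP
            rw [show l ++ x :: c0 :: ct = (l ++ [x]) ++ (c0 :: ct) by simp,
              getLastD_append (l ++ [x]) (c0 :: ct) _ (by simp)] at hyP
            rw [getLastD_append l (c0 :: ct) _ (by simp)]
            exact hyP
      · rw [Nxt_decomp n y _ _ hyncτ, headD_append_ne _ _ hdne]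
        exact hdh
    have hxnlty : ∀ s ∈ (x :: r₂).head?, (fun z => decide (z < y)) s = false := by
      intro s e
      simp only [List.head?_cons, Option.mem_def, Option.some.injEq] at e
      subst e
      simp only [decide_eq_false_iff_not, not_lt]; omega
    have htw2 : (d ++ x :: r₂).takeWhile (· < y) = d₁ := by
      rw [takeWhile_append_head _ _ _ hxnlty, hd1def]
    have hdw2 : (d ++ x :: r₂).dropWhile (· < y) = d₂ ++ x :: r₂ := by
      rw [dropWhile_append_head _ _ _ hxnlty, hd2def]
    have side2 : phi n y (phi n x (l ++ x :: r)) = (l ++ c) ++ d₁ ++ y :: (d₂ ++ x :: r₂) := by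
      rw [hphix, eτ, phi_of_dd hyncτ hyddτ, htw2, hdw2]
    rw [side1, side2]
    simp
  · -- CASE A : y ∈ r₂
    have hynr1 : y ∉ r₁ := hdisj12 y hyA
    obtain ⟨a, b, hab, hya, hyb⟩ := mem_decomp (hrnd.sublist (List.dropWhile_sublist _)) hyA
    rw [← hr2def] at hab
    have hyna : y ∉ l ++ x :: (r₁ ++ a) := by
      simp only [List.mem_append, List.mem_cons]; push_neg
      exact ⟨hynl, hyx, hynr1, hya⟩
    have eσy : l ++ x :: r = (l ++ x :: (r₁ ++ a)) ++ y :: b := by rw [← hr, hab]; simp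
    have hyP : y < (l ++ x :: (r₁ ++ a)).getLastD (n+1) := by
      have h0 := hy.1; rw [eσy, Prv_decomp n y _ _ hyna] at h0; exact h0
    have hyN : b.headD (n+1) < y := by
      have h0 := hy.2; rw [eσy, Nxt_decomp n y _ _ hyna] at h0; exact h0
    have hane : a ≠ [] := by
      intro e
      rw [e] at hyP
      rw [show l ++ x :: (r₁ ++ ([] : List ℕ)) = (l ++ [x]) ++ r₁ by simp,
        getLastD_append (l ++ [x]) r₁ _ hr1ne] at hyP
      have hxy : x < y := by
        refine hr2head y ?_
        rw [hab, e]; rfl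
      omega
    have ha_head : ∀ s ∈ a.head?, x < s := by
      intro s e
      refine hr2head s ?_
      rw [hab]
      cases a with
      | nil => exact absurd rfl hane
      | cons a0 t => simpa using e
    have hyPa : y < a.getLastD (n+1) := by
      rwa [show l ++ x :: (r₁ ++ a) = (l ++ x :: r₁) ++ a by simp,
        getLastD_append (l ++ x :: r₁) a _ hane] at hyP
    set b₁ := b.takeWhile (· < y) with hb1def
    set b₂ := b.dropWhile (· < y) with hb2def
    have hyddA : IsDD n ((l ++ x :: (r₁ ++ a)) ++ y :: b) y := by rw [← eσy]; exact hy
    have hphiy : phi n y (l ++ x :: r) = (l ++ x :: (r₁ ++ a)) ++ b₁ ++ y :: b₂ := by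
      rw [eσy, phi_of_dd hyna hyddA, ← hb1def, ← hb2def]
    have eρ : (l ++ x :: (r₁ ++ a)) ++ b₁ ++ y :: b₂
        = l ++ x :: (r₁ ++ (a ++ b₁ ++ y :: b₂)) := by simp
    have hvhead : ∀ s ∈ (a ++ b₁ ++ y :: b₂).head?, (fun z => decide (z < x)) s = false := by
      intro s e
      cases a with
      | nil => exact absurd rfl hane
      | cons a0 t =>
          simp only [List.cons_append, List.head?_cons, Option.mem_def, Option.some.injEq] at e
          subst e
          have := ha_head a0 (by simp)
          simp only [decide_eq_false_iff_not, not_lt]; omega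
    have hxddρ : IsDD n (l ++ x :: (r₁ ++ (a ++ b₁ ++ y :: b₂))) x := by
      constructor
      · rw [Prv_eq_decomp hxl]; exact hP
      · rw [Nxt_eq_decomp hxl, headD_append_ne _ _ hr1ne]
        exact headD_lt hr1ne hr1lt
    have hr1alld : ∀ z ∈ r₁, (fun z => decide (z < x)) z = true := by
      intro z hz; simpa using hr1lt z hz
    have htwx : (r₁ ++ (a ++ b₁ ++ y :: b₂)).takeWhile (· < x) = r₁ := by
      rw [takeWhile_all_append _ _ _ hr1alld, takeWhile_eq_nil_head _ _ hvhead,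
        List.append_nil]
    have hdwx : (r₁ ++ (a ++ b₁ ++ y :: b₂)).dropWhile (· < x) = a ++ b₁ ++ y :: b₂ := by
      rw [dropWhile_all_append _ _ _ hr1alld, dropWhile_eq_self_head _ _ hvhead]
    have side1 : phi n x (phi n y (l ++ x :: r)) = l ++ r₁ ++ x :: (a ++ b₁ ++ y :: b₂) := by
      rw [hphiy, eρ, phi_of_dd hxl hxddρ, htwx, hdwx]
    have eτ : l ++ r₁ ++ x :: r₂ = (l ++ r₁ ++ x :: a) ++ y :: b := by rw [hab]; simp
    have hynaτ : y ∉ l ++ r₁ ++ x :: a := by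
      simp only [List.mem_append, List.mem_cons]; push_neg
      exact ⟨⟨hynl, hynr1⟩, hyx, hya⟩
    have hyddτ : IsDD n ((l ++ r₁ ++ x :: a) ++ y :: b) y := by
      constructor
      · rw [Prv_decomp n y _ _ hynaτ,
          show l ++ r₁ ++ x :: a = (l ++ r₁ ++ [x]) ++ a by simp,
          getLastD_append (l ++ r₁ ++ [x]) a _ hane]
        exact hyPa
      · rw [Nxt_decomp n y _ _ hynaτ]
        exact hyN
    have side2 : phi n y (phi n x (l ++ x :: r)) = (l ++ r₁ ++ x :: a) ++ b₁ ++ y :: b₂ := by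
      rw [hphix, eτ, phi_of_dd hynaτ hyddτ, ← hb1def, ← hb2def]
    rw [side1, side2]
    simp

theorem comm_dd {n x y : ℕ} {σ : List ℕ} (h : Valid n σ) (hxm : x ∈ σ) (hym : y ∈ σ)
    (hxy : x ≠ y) (hx : IsDD n σ x) (hy : IsDD n σ y) :
    phi n x (phi n y σ) = phi n y (phi n x σ) := by
  obtain ⟨l, r, rfl, hxl⟩ := sigma_decomp hxm
  have hmem : y ∈ l ∨ y ∈ r := by
    rcases List.mem_append.mp hym with h1 | h1
    · exact Or.inl h1
    · rcases List.mem_cons.mp h1 with e | h2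
      · exact absurd e.symm hxy
      · exact Or.inr h2
  rcases hmem with hyl | hyr
  · obtain ⟨a, b, hab, hya, hyb⟩ := mem_decomp ((nodup_parts h.nodup).2.2.1) hyl
    have e : l ++ x :: r = a ++ y :: (b ++ x :: r) := by rw [hab]; simp
    have hxin : x ∈ b ++ x :: r := by simp
    rw [e] at h hx hy ⊢
    exact (comm_dd_ordered h hya hxin hy hx).symm
  · exact comm_dd_ordered h hxl hyr hx hy

theorem dance_lemma {n x y : ℕ} {σ : List ℕ} (h : Valid n σ)
    (hx1 : 1 ≤ x) (hxn : x ≤ n) (hy1 : 1 ≤ y) (hyn : y ≤ n)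
    (E : phi n x σ = phi n y (phi n x (phi n y σ))) :
    phi n x (phi n y σ) = phi n y (phi n x σ) := by
  have hvy : Valid n (phi n y σ) := ((phi_main h hy1 hyn).1).trans h
  have hvxy : Valid n (phi n x (phi n y σ)) := ((phi_main hvy hx1 hxn).1).trans hvy
  have hinv := (phi_main hvxy hy1 hyn).2.1
  rw [E, hinv]

theorem comm_fix {n x y : ℕ} {σ : List ℕ} (h : Valid n σ)
    (hx1 : 1 ≤ x) (hxn : x ≤ n) (hy1 : 1 ≤ y) (hyn : y ≤ n) (hxy : x ≠ y)
    (hyT : IsPk n σ y ∨ IsVl n σ y) :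
    phi n x (phi n y σ) = phi n y (phi n x σ) := by
  obtain ⟨px1, px2, px3, px4, px5, px6⟩ := phi_main h hx1 hxn
  obtain ⟨py1, py2, py3, py4, py5, py6⟩ := phi_main h hy1 hyn
  have hym : y ∈ σ := (Valid.mem_iff h).mpr ⟨hy1, hyn⟩
  rw [py6 hyT]
  have hvx : Valid n (phi n x σ) := px1.trans h
  have hty := type_iff h hvx hym (px1.mem_iff.mpr hym)
    (px3 y hym (Ne.symm hxy)).1 (px3 y hym (Ne.symm hxy)).2
  have hT' : IsPk n (phi n x σ) y ∨ IsVl n (phi n x σ) y := by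
    rcases hyT with hT | hT
    · exact Or.inl ((hty.1).mpr hT)
    · exact Or.inr ((hty.2.2.2).mpr hT)
  rw [phi_of_fix hT']

theorem comm_dd_da {n x y : ℕ} {σ : List ℕ} (h : Valid n σ)
    (hx1 : 1 ≤ x) (hxn : x ≤ n) (hy1 : 1 ≤ y) (hyn : y ≤ n) (hxy : x ≠ y)
    (hx : IsDD n σ x) (hy : IsDA n σ y) :
    phi n x (phi n y σ) = phi n y (phi n x σ) := by
  obtain ⟨py1, py2, py3, py4, py5, py6⟩ := phi_main h hy1 hyn
  have hxm : x ∈ σ := (Valid.mem_iff h).mpr ⟨hx1, hxn⟩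
  have hym : y ∈ σ := (Valid.mem_iff h).mpr ⟨hy1, hyn⟩
  have hvy : Valid n (phi n y σ) := py1.trans h
  have hx_in_y : x ∈ phi n y σ := py1.mem_iff.mpr hxm
  have htx := type_iff h hvy hxm hx_in_y (py3 x hxm hxy).1 (py3 x hxm hxy).2
  have hyddτ : IsDD n (phi n y σ) y := py5 hy
  have hxddτ : IsDD n (phi n y σ) x := (htx.2.1).mpr hx
  have hc := comm_dd hvy hx_in_y (py1.mem_iff.mpr hym) hxy hxddτ hyddτ
  rw [py2] at hc
  exact dance_lemma h hx1 hxn hy1 hyn hc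

theorem comm_da_da {n x y : ℕ} {σ : List ℕ} (h : Valid n σ)
    (hx1 : 1 ≤ x) (hxn : x ≤ n) (hy1 : 1 ≤ y) (hyn : y ≤ n) (hxy : x ≠ y)
    (hx : IsDA n σ x) (hy : IsDA n σ y) :
    phi n x (phi n y σ) = phi n y (phi n x σ) := by
  obtain ⟨py1, py2, py3, py4, py5, py6⟩ := phi_main h hy1 hyn
  have hxm : x ∈ σ := (Valid.mem_iff h).mpr ⟨hx1, hxn⟩
  have hym : y ∈ σ := (Valid.mem_iff h).mpr ⟨hy1, hyn⟩
  have hvy : Valid n (phi n y σ) := py1.trans h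
  have hx_in_y : x ∈ phi n y σ := py1.mem_iff.mpr hxm
  have htx := type_iff h hvy hxm hx_in_y (py3 x hxm hxy).1 (py3 x hxm hxy).2
  have hyddτ : IsDD n (phi n y σ) y := py5 hy
  have hxdaτ : IsDA n (phi n y σ) x := (htx.2.2.1).mpr hx
  have hc := comm_dd_da hvy hy1 hyn hx1 hxn (Ne.symm hxy) hyddτ hxdaτ
  rw [py2] at hc
  exact dance_lemma h hx1 hxn hy1 hyn hc.symm

theorem comm_phi {n x y : ℕ} {σ : List ℕ} (h : Valid n σ)
    (hx1 : 1 ≤ x) (hxn : x ≤ n) (hy1 : 1 ≤ y) (hyn : y ≤ n) :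
    phi n x (phi n y σ) = phi n y (phi n x σ) := by
  by_cases hxy : x = y
  · rw [hxy]
  have hxm : x ∈ σ := (Valid.mem_iff h).mpr ⟨hx1, hxn⟩
  have hym : y ∈ σ := (Valid.mem_iff h).mpr ⟨hy1, hyn⟩
  rcases type_four h hym with hyT | hyT | hyT | hyT
  rotate_left 2
  · exact comm_fix h hx1 hxn hy1 hyn hxy (Or.inl hyT)
  · exact comm_fix h hx1 hxn hy1 hyn hxy (Or.inr hyT)
  all_goals rcases type_four h hxm with hxT | hxT | hxT | hxT
  · exact comm_dd h hxm hym hxy hxT hyT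
  · exact (comm_dd_da h hy1 hyn hx1 hxn (Ne.symm hxy) hyT hxT).symm
  · exact (comm_fix h hy1 hyn hx1 hxn (Ne.symm hxy) (Or.inl hxT)).symm
  · exact (comm_fix h hy1 hyn hx1 hxn (Ne.symm hxy) (Or.inr hxT)).symm
  · exact comm_dd_da h hx1 hxn hy1 hyn hxy hxT hyT
  · exact comm_da_da h hx1 hxn hy1 hyn hxy hxT hyT
  · exact (comm_fix h hy1 hyn hx1 hxn (Ne.symm hxy) (Or.inl hxT)).symm
  · exact (comm_fix h hy1 hyn hx1 hxn (Ne.symm hxy) (Or.inr hxT)).symm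

lemma ddF_mem {n : ℕ} {σ : List ℕ} {x : ℕ} (hx : x ∈ ddF n σ) :
    1 ≤ x ∧ x ≤ n ∧ IsDD n σ x := by
  have := Finset.mem_filter.mp hx
  have hI := Finset.mem_Icc.mp this.1
  exact ⟨hI.1, hI.2, this.2⟩

open Classical in
noncomputable def can (n : ℕ) (σ : List ℕ) : List ℕ :=
  if h : Valid n σ ∧ (ddF n σ).Nonempty then
    can n (phi n ((ddF n σ).min' h.2) σ)
  else σ
termination_by (ddF n σ).card
decreasing_by
  obtain ⟨hv, hne⟩ := h
  have hm := (ddF n σ).min'_mem hne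
  obtain ⟨h1, h2, h3⟩ := ddF_mem hm
  rw [(phi_step hv h1 h2).2.2.2.1 h3]
  exact Finset.card_erase_lt_of_mem hm

lemma can_of_neg {n : ℕ} {σ : List ℕ} (h : ¬ (Valid n σ ∧ (ddF n σ).Nonempty)) :
    can n σ = σ := by
  rw [can, dif_neg h]

lemma can_of_empty {n : ℕ} {σ : List ℕ} (h : ddF n σ = ∅) : can n σ = σ :=
  can_of_neg (by rw [h]; rintro ⟨-, ⟨z, hz⟩⟩; exact absurd hz (Finset.notMem_empty z))

lemma can_step {n : ℕ} {σ : List ℕ} (h1 : Valid n σ) (h2 : (ddF n σ).Nonempty) :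
    can n σ = can n (phi n ((ddF n σ).min' h2) σ) := by
  rw [can, dif_pos ⟨h1, h2⟩]

lemma min'_erase_eq {S : Finset ℕ} {x : ℕ} (hx : x ∈ S) (hne : (S.erase x).Nonempty)
    (hne' : S.Nonempty) (h : x ≠ S.min' hne') :
    (S.erase x).min' hne = S.min' hne' := by
  apply le_antisymm
  · exact Finset.min'_le _ _ (Finset.mem_erase.mpr ⟨Ne.symm h, S.min'_mem hne'⟩)
  · exact Finset.le_min' _ _ _ (fun y hy => Finset.min'_le _ _ (Finset.mem_of_mem_erase hy))

lemma can_phi_dd {n : ℕ} : ∀ k : ℕ, ∀ σ : List ℕ, Valid n σ → (ddF n σ).card ≤ k →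
    ∀ x ∈ ddF n σ, can n (phi n x σ) = can n σ := by
  intro k
  induction k with
  | zero =>
      intro σ hv hcard x hx
      have : 0 < (ddF n σ).card := Finset.card_pos.mpr ⟨x, hx⟩
      omega
  | succ k ih =>
      intro σ hv hcard x hx
      obtain ⟨hx1, hxn, hxdd⟩ := ddF_mem hx
      have hne : (ddF n σ).Nonempty := ⟨x, hx⟩
      have hm := (ddF n σ).min'_mem hne
      obtain ⟨hm1, hmn, hmdd⟩ := ddF_mem hm
      have hcs : can n σ = can n (phi n ((ddF n σ).min' hne) σ) := can_step hv hne
      by_cases hxm : x = (ddF n σ).min' hne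
      · rw [hcs, hxm]
      · have stepm := phi_step hv hm1 hmn
        have hvm : Valid n (phi n ((ddF n σ).min' hne) σ) := stepm.1
        have he : ddF n (phi n ((ddF n σ).min' hne) σ) = (ddF n σ).erase ((ddF n σ).min' hne) :=
          stepm.2.2.2.1 hmdd
        have hxm' : x ∈ ddF n (phi n ((ddF n σ).min' hne) σ) := by
          rw [he]; exact Finset.mem_erase.mpr ⟨hxm, hx⟩
        have hcard' : (ddF n (phi n ((ddF n σ).min' hne) σ)).card ≤ k := by
          rw [he, Finset.card_erase_of_mem hm]; omega
        have h1 := ih _ hvm hcard' x hxm'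
        have hcomm : phi n x (phi n ((ddF n σ).min' hne) σ)
            = phi n ((ddF n σ).min' hne) (phi n x σ) := comm_phi hv hx1 hxn hm1 hmn
        have stepx := phi_step hv hx1 hxn
        have hvx : Valid n (phi n x σ) := stepx.1
        have hex : ddF n (phi n x σ) = (ddF n σ).erase x := stepx.2.2.2.1 hxdd
        have hnex : (ddF n (phi n x σ)).Nonempty := by
          rw [hex]
          exact ⟨(ddF n σ).min' hne, Finset.mem_erase.mpr ⟨Ne.symm hxm, hm⟩⟩
        have hmm2 : (ddF n (phi n x σ)).min' hnex ∈ (ddF n σ).erase x := by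
          rw [← hex]; exact Finset.min'_mem _ hnex
        have hminx : (ddF n (phi n x σ)).min' hnex = (ddF n σ).min' hne :=
          le_antisymm
            (Finset.min'_le _ _ (by rw [hex]; exact Finset.mem_erase.mpr ⟨Ne.symm hxm, hm⟩))
            (Finset.min'_le _ _ (Finset.mem_of_mem_erase hmm2))
        have hstep2 : can n (phi n x σ)
            = can n (phi n ((ddF n σ).min' hne) (phi n x σ)) := by
          have := can_step hvx hnex
          rwa [hminx] at this
        rw [hstep2, ← hcomm, h1, hcs]

lemma can_phi {n x : ℕ} {σ : List ℕ} (h : Valid n σ) (hx1 : 1 ≤ x) (hxn : x ≤ n) :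
    can n (phi n x σ) = can n σ := by
  have hxm : x ∈ σ := (Valid.mem_iff h).mpr ⟨hx1, hxn⟩
  obtain ⟨p1, p2, p3, p4, p5, p6⟩ := phi_main h hx1 hxn
  rcases type_four h hxm with hT | hT | hT | hT
  · exact can_phi_dd (ddF n σ).card σ h le_rfl x
      (Finset.mem_filter.mpr ⟨Finset.mem_Icc.mpr ⟨hx1, hxn⟩, hT⟩)
  · have hv' : Valid n (phi n x σ) := p1.trans h
    have hdd' : IsDD n (phi n x σ) x := p5 hT
    have := can_phi_dd (ddF n (phi n x σ)).card (phi n x σ) hv' le_rfl x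
      (Finset.mem_filter.mpr ⟨Finset.mem_Icc.mpr ⟨hx1, hxn⟩, hdd'⟩)
    rw [p2] at this
    exact this.symm
  · rw [p6 (Or.inl hT)]
  · rw [p6 (Or.inr hT)]

lemma orb_closed {n x : ℕ} {w σ : List ℕ} (hx : x ∈ Finset.Icc 1 n) (hσ : σ ∈ Orb n w) :
    phi n x σ ∈ Orb n w := by
  obtain ⟨l, hl, rfl⟩ := hσ
  exact ⟨x :: l, by
    intro z hz
    rcases List.mem_cons.mp hz with e | hz'
    · exact e ▸ hx
    · exact hl z hz', rfl⟩

lemma orb_self (n : ℕ) (w : List ℕ) : w ∈ Orb n w := ⟨[], by simp, rfl⟩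

lemma orb_props {n : ℕ} {w : List ℕ} (hw : Valid n w) :
    ∀ σ ∈ Orb n w, Valid n σ ∧ pkF n σ = pkF n w ∧ freeF n σ = freeF n w ∧
      can n σ = can n w := by
  rintro σ ⟨l, hl, rfl⟩
  induction l with
  | nil => exact ⟨hw, rfl, rfl, rfl⟩
  | cons x t ih =>
      have hxt := hl x (by simp)
      rw [Finset.mem_Icc] at hxt
      have ih' := ih (fun z hz => hl z (by simp [hz]))
      obtain ⟨hv, hpk, hfree, hcan⟩ := ih'
      have step := phi_step hv hxt.1 hxt.2
      simp only [List.foldr_cons]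
      exact ⟨step.1, step.2.1.trans hpk, step.2.2.1.trans hfree,
        (can_phi hv hxt.1 hxt.2).trans hcan⟩

lemma eq_of_can_ddF {n : ℕ} : ∀ k : ℕ, ∀ σ τ : List ℕ, Valid n σ → Valid n τ →
    (ddF n σ).card ≤ k → can n σ = can n τ → ddF n σ = ddF n τ → σ = τ := by
  intro k
  induction k with
  | zero =>
      intro σ τ hσ hτ hcard hcan hdd
      have h1 : ddF n σ = ∅ := Finset.card_eq_zero.mp (by omega)
      have h2 : ddF n τ = ∅ := by rw [← hdd]; exact h1
      rw [← can_of_empty h1, ← can_of_empty h2, hcan]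
  | succ k ih =>
      intro σ τ hσ hτ hcard hcan hdd
      rcases Finset.eq_empty_or_nonempty (ddF n σ) with he | hne
      · have h2 : ddF n τ = ∅ := by rw [← hdd]; exact he
        rw [← can_of_empty he, ← can_of_empty h2, hcan]
      · have hneτ : (ddF n τ).Nonempty := by rw [← hdd]; exact hne
        obtain ⟨m, hm⟩ := hne
        have hmτmem : m ∈ ddF n τ := by rw [← hdd]; exact hm
        obtain ⟨hm1, hmn, hmdd⟩ := ddF_mem hm
        obtain ⟨-, -, hmddτ⟩ := ddF_mem hmτmem
        have stepσ := phi_step hσ hm1 hmn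
        have stepτ := phi_step hτ hm1 hmn
        have hcan' : can n (phi n m σ) = can n (phi n m τ) := by
          rw [can_phi hσ hm1 hmn, can_phi hτ hm1 hmn, hcan]
        have hdd' : ddF n (phi n m σ) = ddF n (phi n m τ) := by
          rw [stepσ.2.2.2.1 hmdd, stepτ.2.2.2.1 hmddτ, hdd]
        have hcard' : (ddF n (phi n m σ)).card ≤ k := by
          rw [stepσ.2.2.2.1 hmdd, Finset.card_erase_of_mem hm]; omega
        have heq := ih _ _ stepσ.1 stepτ.1 hcard' hcan' hdd'
        have e1 : phi n m (phi n m σ) = σ := stepσ.2.2.2.2.2.2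
        have e2 : phi n m (phi n m τ) = τ := stepτ.2.2.2.2.2.2
        rw [← e1, ← e2, heq]

lemma orb_can_mem {n : ℕ} {w : List ℕ} (hw : Valid n w) :
    ∀ k : ℕ, ∀ σ, σ ∈ Orb n w → Valid n σ → (ddF n σ).card ≤ k →
      can n σ ∈ Orb n w ∧ ddF n (can n σ) = ∅ ∧ Valid n (can n σ) := by
  intro k
  induction k with
  | zero =>
      intro σ hσ hv hcard
      have h1 : ddF n σ = ∅ := Finset.card_eq_zero.mp (by omega)
      rw [can_of_empty h1]
      exact ⟨hσ, h1, hv⟩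
  | succ k ih =>
      intro σ hσ hv hcard
      rcases Finset.eq_empty_or_nonempty (ddF n σ) with he | hne
      · rw [can_of_empty he]; exact ⟨hσ, he, hv⟩
      · have hm := (ddF n σ).min'_mem hne
        obtain ⟨hm1, hmn, hmdd⟩ := ddF_mem hm
        have step := phi_step hv hm1 hmn
        have hcs := can_step hv hne
        rw [hcs]
        refine ih _ (orb_closed (Finset.mem_Icc.mpr ⟨hm1, hmn⟩) hσ) step.1 ?_
        rw [step.2.2.2.1 hmdd, Finset.card_erase_of_mem hm]
        omega

lemma exists_orb_ddF {n : ℕ} {w : List ℕ} (hw : Valid n w) :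
    ∀ S : Finset ℕ, S ⊆ freeF n w → ∃ σ, σ ∈ Orb n w ∧ Valid n σ ∧ ddF n σ = S := by
  intro S
  induction S using Finset.induction_on with
  | empty =>
      intro _
      obtain ⟨h1, h2, h3⟩ := orb_can_mem hw (ddF n w).card w (orb_self n w) hw le_rfl
      exact ⟨can n w, h1, h3, h2⟩
  | @insert a S haS ihS =>
      intro hsub
      obtain ⟨σ, hσorb, hσv, hσdd⟩ := ihS (fun z hz => hsub (Finset.mem_insert_of_mem hz))
      have hafree : a ∈ freeF n w := hsub (Finset.mem_insert_self a S)
      have hfree_eq := (orb_props hw σ hσorb).2.2.1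
      have hafreeσ : a ∈ freeF n σ := by rw [hfree_eq]; exact hafree
      have hmf := Finset.mem_filter.mp hafreeσ
      have hI := Finset.mem_Icc.mp hmf.1
      have hada : IsDA n σ a := by
        rcases hmf.2 with hdd | hda
        · exfalso
          have : a ∈ ddF n σ := Finset.mem_filter.mpr ⟨hmf.1, hdd⟩
          rw [hσdd] at this
          exact haS this
        · exact hda
      have step := phi_step hσv hI.1 hI.2
      refine ⟨phi n a σ, orb_closed hmf.1 hσorb, step.1, ?_⟩
      rw [step.2.2.2.2.1 hada, hσdd]

lemma headD_drop (l : List ℕ) (k d : ℕ) : (l.drop k).headD d = l.getD k d := by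
  rcases Nat.lt_or_ge k l.length with hlt | hge
  · rw [List.drop_eq_getElem_cons hlt, List.getD_eq_getElem _ _ hlt]; rfl
  · rw [List.drop_eq_nil_of_le hge, List.getD_eq_default _ _ hge]; rfl

lemma getLastD_take {l : List ℕ} {j d : ℕ} (h1 : 1 ≤ j) (h2 : j ≤ l.length) :
    (l.take j).getLastD d = l.getD (j-1) d := by
  obtain ⟨k, rfl⟩ : ∃ k, j = k + 1 := ⟨j - 1, by omega⟩
  have hk : k < l.length := by omega
  rw [List.take_succ, List.getElem?_eq_getElem hk]
  simp only [Option.toList_some]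
  rw [List.getLastD_concat, Nat.add_sub_cancel, List.getD_eq_getElem _ _ hk]

lemma ext_eval {n : ℕ} {σ : List ℕ} (h : Valid n σ) {i : ℕ} (h1 : 1 ≤ i) (h2 : i ≤ n) :
    ext n σ i = σ.getD (i-1) 0 := by
  unfold ext
  have hlen : σ.length = n := h.length
  rw [List.getD_append _ _ _ i (by simp only [List.length_cons, hlen]; omega)]
  obtain ⟨k, rfl⟩ : ∃ k, i = k + 1 := ⟨i - 1, by omega⟩
  rw [List.getD_cons_succ, Nat.add_sub_cancel]

lemma ext_zero (n : ℕ) (σ : List ℕ) : ext n σ 0 = n + 1 := rfl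

lemma ext_top {n : ℕ} {σ : List ℕ} (h : Valid n σ) : ext n σ (n+1) = n + 1 := by
  unfold ext
  rw [List.getD_append_right _ _ _ _ (by simp [h.length])]
  simp [h.length]

lemma ext_mem {n : ℕ} {σ : List ℕ} (h : Valid n σ) {i : ℕ} (h1 : 1 ≤ i) (h2 : i ≤ n) :
    ext n σ i ∈ σ := by
  rw [ext_eval h h1 h2]
  have : i - 1 < σ.length := by rw [h.length]; omega
  rw [List.getD_eq_getElem _ _ this]
  exact List.getElem_mem this

lemma prv_pos {n : ℕ} {σ : List ℕ} (h : Valid n σ) {i : ℕ} (h1 : 1 ≤ i) (h2 : i ≤ n) :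
    Prv n σ (ext n σ i) = ext n σ (i-1) ∧ Nxt n σ (ext n σ i) = ext n σ (i+1) := by
  have hlen := h.length
  have hjlt : i - 1 < σ.length := by omega
  have hext : ext n σ i = σ[i-1] := by
    rw [ext_eval h h1 h2, List.getD_eq_getElem _ _ hjlt]
  set y := σ[i-1] with hy
  have hdecomp : σ = σ.take (i-1) ++ y :: σ.drop (i-1+1) := by
    conv_lhs => rw [← List.take_append_drop (i-1) σ]
    rw [List.drop_eq_getElem_cons hjlt]
  have hnotin : y ∉ σ.take (i-1) := by
    intro hc
    have hnd : (σ.take (i-1) ++ y :: σ.drop (i-1+1)).Nodup := by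
      rw [← hdecomp]; exact h.nodup
    exact (nodup_parts hnd).1 hc
  constructor
  · rw [hext]
    conv_lhs => rw [hdecomp]
    rw [Prv_decomp n y _ _ hnotin]
    rcases Nat.eq_zero_or_pos (i-1) with hj0 | hjpos
    · rw [hj0, List.take_zero, ext_zero]; rfl
    · rw [getLastD_take hjpos (by omega), ext_eval h (by omega) (by omega)]
      have hlt1 : i - 1 - 1 < σ.length := by omega
      rw [List.getD_eq_getElem _ _ hlt1, List.getD_eq_getElem _ _ hlt1]
  · rw [hext]
    conv_lhs => rw [hdecomp]
    rw [Nxt_decomp n y _ _ hnotin, headD_drop]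
    rcases Nat.lt_or_ge (i-1+1) σ.length with hlt | hge
    · rw [ext_eval h (by omega) (by omega), List.getD_eq_getElem _ _ hlt,
        List.getD_eq_getElem _ _ (show i + 1 - 1 < σ.length by omega)]
      congr 1
      omega
    · have hin : i = n := by omega
      rw [List.getD_eq_default _ _ hge, hin, ext_top h]

theorem pos_to_letter {n : ℕ} {σ : List ℕ} (h : Valid n σ)
    (P : ℕ → ℕ → ℕ → Prop) [∀ a b c, Decidable (P a b c)] :
    ((Finset.Icc 1 n).filter
        (fun i => P (ext n σ (i-1)) (ext n σ i) (ext n σ (i+1)))).card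
      = ((Finset.Icc 1 n).filter (fun y => P (Prv n σ y) y (Nxt n σ y))).card := by
  have hlen := h.length
  refine Finset.card_bij (fun i _ => ext n σ i) ?_ ?_ ?_
  · intro i hi
    obtain ⟨hiI, hiP⟩ := Finset.mem_filter.mp hi
    rw [Finset.mem_Icc] at hiI
    have hm : ext n σ i ∈ σ := ext_mem h hiI.1 hiI.2
    obtain ⟨e1, e2⟩ := prv_pos h hiI.1 hiI.2
    refine Finset.mem_filter.mpr ⟨Finset.mem_Icc.mpr ((Valid.mem_iff h).mp hm), ?_⟩
    rw [e1, e2]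
    exact hiP
  · intro i hi i' hi' he
    obtain ⟨hiI, -⟩ := Finset.mem_filter.mp hi
    obtain ⟨hiI', -⟩ := Finset.mem_filter.mp hi'
    rw [Finset.mem_Icc] at hiI hiI'
    rw [ext_eval h hiI.1 hiI.2, ext_eval h hiI'.1 hiI'.2,
      List.getD_eq_getElem _ _ (show i - 1 < σ.length by omega),
      List.getD_eq_getElem _ _ (show i' - 1 < σ.length by omega)] at he
    have := (h.nodup.getElem_inj_iff).mp he
    omega
  · intro y hy
    obtain ⟨hyI, hyP⟩ := Finset.mem_filter.mp hy
    rw [Finset.mem_Icc] at hyI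
    have hym : y ∈ σ := (Valid.mem_iff h).mpr hyI
    obtain ⟨k, hk, hky⟩ := List.mem_iff_getElem.mp hym
    have hke : ext n σ (k+1) = y := by
      rw [ext_eval h (by omega) (by omega), Nat.add_sub_cancel,
        List.getD_eq_getElem _ _ hk, hky]
    refine ⟨k+1, ?_, hke⟩
    obtain ⟨e1, e2⟩ := prv_pos h (show 1 ≤ k+1 by omega) (show k+1 ≤ n by omega)
    refine Finset.mem_filter.mpr ⟨Finset.mem_Icc.mpr ⟨by omega, by omega⟩, ?_⟩
    rw [hke] at e1 e2
    rw [hke, ← e1, ← e2]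
    exact hyP

theorem shift_count {n : ℕ} {σ : List ℕ} (h : Valid n σ) (hn : 1 ≤ n) :
    ((Finset.Icc 1 n).filter (fun i => ext n σ i < ext n σ (i-1))).card
      = ((Finset.Icc 1 n).filter (fun i => ext n σ (i+1) < ext n σ i)).card + 1 := by
  set A := (Finset.Icc 1 n).filter (fun i => ext n σ i < ext n σ (i-1)) with hA
  set B := (Finset.Icc 1 n).filter (fun i => ext n σ (i+1) < ext n σ i) with hB
  have hext_le : ∀ i, 1 ≤ i → i ≤ n → ext n σ i ≤ n := by
    intro i p q
    exact ((Valid.mem_iff h).mp (ext_mem h p q)).2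
  have h1A : 1 ∈ A := by
    rw [hA]
    refine Finset.mem_filter.mpr ⟨Finset.mem_Icc.mpr ⟨le_rfl, hn⟩, ?_⟩
    show ext n σ 1 < ext n σ 0
    rw [ext_zero]
    have := hext_le 1 le_rfl hn
    omega
  have hbij : (A.erase 1).card = B.card := by
    refine Finset.card_bij (fun i _ => i - 1) ?_ ?_ ?_
    · intro i hi
      obtain ⟨hne, hi'⟩ := Finset.mem_erase.mp hi
      obtain ⟨hiI, hiP⟩ := Finset.mem_filter.mp hi'
      rw [Finset.mem_Icc] at hiI
      have hi2 : 2 ≤ i := by omega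
      refine Finset.mem_filter.mpr ⟨Finset.mem_Icc.mpr ⟨by omega, by omega⟩, ?_⟩
      have e : i - 1 + 1 = i := by omega
      rw [e]
      exact hiP
    · intro i hi i' hi' he
      obtain ⟨-, hi1⟩ := Finset.mem_erase.mp hi
      obtain ⟨-, hi1'⟩ := Finset.mem_erase.mp hi'
      have := (Finset.mem_Icc.mp (Finset.mem_filter.mp hi1).1).1
      have := (Finset.mem_Icc.mp (Finset.mem_filter.mp hi1').1).1
      omega
    · intro j hj
      obtain ⟨hjI, hjP⟩ := Finset.mem_filter.mp hj
      rw [Finset.mem_Icc] at hjI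
      have hjn : j ≠ n := by
        intro e
        rw [e, ext_top h] at hjP
        have := hext_le n hn le_rfl
        omega
      refine ⟨j+1, ?_, by omega⟩
      refine Finset.mem_erase.mpr ⟨by omega, ?_⟩
      refine Finset.mem_filter.mpr ⟨Finset.mem_Icc.mpr ⟨by omega, by omega⟩, ?_⟩
      have e : j + 1 - 1 = j := by omega
      rw [e]
      exact hjP
  have := Finset.card_erase_add_one h1A
  omega

theorem count_lemma {n : ℕ} {σ : List ℕ} (h : Valid n σ) :
    des n σ = (pkF n σ).card + (ddF n σ).card ∧
    peak n σ = (pkF n σ).card ∧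
    (1 ≤ n → n = (freeF n σ).card + 2 * (pkF n σ).card + 1) := by
  have hdes : des n σ
      = ((Finset.Icc 1 n).filter (fun y => Nxt n σ y < y)).card := by
    unfold des
    exact pos_to_letter h (fun a b c => c < b)
  have hpeak : peak n σ = (pkF n σ).card := by
    unfold peak pkF
    exact pos_to_letter h (fun a b c => a < b ∧ c < b)
  have hsplit : ∀ (p q : ℕ → Prop), ∀ (_ : DecidablePred p) (_ : DecidablePred q),
      ((Finset.Icc 1 n).filter p).card
        = ((Finset.Icc 1 n).filter (fun y => p y ∧ q y)).card
          + ((Finset.Icc 1 n).filter (fun y => p y ∧ ¬ q y)).card := by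
    intro p q hp hq
    rw [← Finset.filter_filter, ← Finset.filter_filter]
    exact (Finset.card_filter_add_card_filter_not q).symm
  have hne : ∀ y ∈ Finset.Icc 1 n, Prv n σ y ≠ y ∧ Nxt n σ y ≠ y := by
    intro y hy
    rw [Finset.mem_Icc] at hy
    have hym : y ∈ σ := (Valid.mem_iff h).mpr hy
    exact ⟨Prv_ne h hym, Nxt_ne h hym⟩
  -- cards
  have cLsplit := hsplit (fun y => y < Prv n σ y) (fun y => Nxt n σ y < y)
    inferInstance inferInstance
  have cRsplit := hsplit (fun y => Nxt n σ y < y) (fun y => y < Prv n σ y)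
    inferInstance inferInstance
  have cNLsplit := hsplit (fun y => ¬ (y < Prv n σ y)) (fun y => Nxt n σ y < y)
    inferInstance inferInstance
  have cFsplit := hsplit (fun y => IsDD n σ y ∨ IsDA n σ y) (fun y => IsDD n σ y)
    inferInstance inferInstance
  -- identifications
  have eDD1 : (Finset.Icc 1 n).filter (fun y => y < Prv n σ y ∧ Nxt n σ y < y) = ddF n σ :=
    Finset.filter_congr (fun y hy => Iff.rfl)
  have eDD2 : (Finset.Icc 1 n).filter (fun y => Nxt n σ y < y ∧ y < Prv n σ y) = ddF n σ :=
    Finset.filter_congr (fun y hy => by unfold IsDD; tauto)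
  have eVL : (Finset.Icc 1 n).filter (fun y => y < Prv n σ y ∧ ¬ (Nxt n σ y < y))
      = (Finset.Icc 1 n).filter (fun y => IsVl n σ y) :=
    Finset.filter_congr (fun y hy => by
      have := hne y hy; unfold IsVl; omega)
  have ePK : (Finset.Icc 1 n).filter (fun y => Nxt n σ y < y ∧ ¬ (y < Prv n σ y)) = pkF n σ :=
    Finset.filter_congr (fun y hy => by
      have := hne y hy; unfold IsPk; omega)
  have ePK2 : (Finset.Icc 1 n).filter (fun y => ¬ (y < Prv n σ y) ∧ Nxt n σ y < y) = pkF n σ :=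
    Finset.filter_congr (fun y hy => by
      have := hne y hy; unfold IsPk; omega)
  have eDA : (Finset.Icc 1 n).filter (fun y => ¬ (y < Prv n σ y) ∧ ¬ (Nxt n σ y < y))
      = (Finset.Icc 1 n).filter (fun y => IsDA n σ y) :=
    Finset.filter_congr (fun y hy => by
      have := hne y hy; unfold IsDA; omega)
  have eF1 : (Finset.Icc 1 n).filter (fun y => (IsDD n σ y ∨ IsDA n σ y) ∧ IsDD n σ y)
      = ddF n σ :=
    Finset.filter_congr (fun y hy => by tauto)
  have eF2 : (Finset.Icc 1 n).filter (fun y => (IsDD n σ y ∨ IsDA n σ y) ∧ ¬ IsDD n σ y)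
      = (Finset.Icc 1 n).filter (fun y => IsDA n σ y) :=
    Finset.filter_congr (fun y hy => by
      unfold IsDD IsDA; omega)
  rw [eDD1, eVL] at cLsplit
  rw [eDD2, ePK] at cRsplit
  rw [ePK2, eDA] at cNLsplit
  rw [eF1, eF2] at cFsplit
  have hLR : ((Finset.Icc 1 n).filter (fun y => y < Prv n σ y)).card
      + ((Finset.Icc 1 n).filter (fun y => ¬ (y < Prv n σ y))).card = n := by
    rw [Finset.card_filter_add_card_filter_not, Nat.card_Icc]
    omega
  have hRdes : des n σ = (pkF n σ).card + (ddF n σ).card := by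
    rw [hdes, cRsplit]; omega
  refine ⟨hRdes, hpeak, fun hn => ?_⟩
  -- the +1 identity
  have e1 := pos_to_letter h (fun a b c => b < a)
  have e2 := pos_to_letter h (fun a b c => c < b)
  have hshift : ((Finset.Icc 1 n).filter (fun y => y < Prv n σ y)).card
      = ((Finset.Icc 1 n).filter (fun y => Nxt n σ y < y)).card + 1 := by
    rw [← e1, ← e2]
    exact shift_count h hn
  have hfree : (freeF n σ).card
      = (ddF n σ).card + ((Finset.Icc 1 n).filter (fun y => IsDA n σ y)).card := by
    unfold freeF
    rw [cFsplit]
  rw [hdes] at hRdes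
  omega

end FS


open Classical in
theorem foata_strehl_orbit_descent_polynomial
    (n : ℕ) (w : List ℕ) (hw : w.Perm (List.range' 1 n)) (x : ℝ) :
    ∑ σ ∈ (List.range' 1 n).permutations.toFinset.filter (fun σ => σ ∈ Orb n w),
        x ^ des n σ =
      x ^ peak n w * (1 + x) ^ (n - 1 - 2 * peak n w) := by
  have hwv : FS.Valid n w := hw
  rcases Nat.eq_zero_or_pos n with hn0 | hn
  · subst hn0
    have hw0 : w = [] := by
      have h0 : List.range' 1 0 = [] := rfl
      rw [h0] at hw
      exact hw.eq_nil
    subst hw0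
    have h0 : List.range' 1 0 = ([] : List ℕ) := rfl
    rw [h0]
    have h1 : ([] : List ℕ).permutations.toFinset = {([] : List ℕ)} := by
      simp
    rw [h1, Finset.filter_singleton, if_pos (FS.orb_self 0 []), Finset.sum_singleton]
    have hIcc : Finset.Icc 1 0 = (∅ : Finset ℕ) := Finset.Icc_eq_empty (by omega)
    have hdes0 : des 0 ([] : List ℕ) = 0 := by
      unfold des; rw [hIcc]; simp
    have hpk0 : peak 0 ([] : List ℕ) = 0 := by
      unfold peak; rw [hIcc]; simp
    rw [hdes0, hpk0]
    norm_num
  · obtain ⟨hdesw, hpeakw, hcountw⟩ := FS.count_lemma hwv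
    have hcnt := hcountw hn
    have hsum : ∑ σ ∈ (List.range' 1 n).permutations.toFinset.filter
          (fun σ => σ ∈ Orb n w), x ^ des n σ
        = ∑ S ∈ (FS.freeF n w).powerset, x ^ ((FS.pkF n w).card + S.card) := by
      refine Finset.sum_bij (fun σ _ => FS.ddF n σ) ?_ ?_ ?_ ?_
      · intro σ hσ
        obtain ⟨hσp, hσo⟩ := Finset.mem_filter.mp hσ
        have hprops := FS.orb_props hwv σ hσo
        refine Finset.mem_powerset.mpr ?_
        intro y hy
        have hyf : y ∈ FS.freeF n σ := by
          obtain ⟨h1, h2⟩ := Finset.mem_filter.mp hy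
          exact Finset.mem_filter.mpr ⟨h1, Or.inl h2⟩
        rwa [hprops.2.2.1] at hyf
      · intro σ hσ τ hτ he
        obtain ⟨hσp, hσo⟩ := Finset.mem_filter.mp hσ
        obtain ⟨hτp, hτo⟩ := Finset.mem_filter.mp hτ
        have hσv : FS.Valid n σ := List.mem_permutations.mp (List.mem_toFinset.mp hσp)
        have hτv : FS.Valid n τ := List.mem_permutations.mp (List.mem_toFinset.mp hτp)
        refine FS.eq_of_can_ddF (FS.ddF n σ).card σ τ hσv hτv le_rfl ?_ he
        rw [(FS.orb_props hwv σ hσo).2.2.2, (FS.orb_props hwv τ hτo).2.2.2]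
      · intro S hS
        obtain ⟨σ, ho, hv, hdd⟩ := FS.exists_orb_ddF hwv S (Finset.mem_powerset.mp hS)
        exact ⟨σ, Finset.mem_filter.mpr
          ⟨List.mem_toFinset.mpr (List.mem_permutations.mpr hv), ho⟩, hdd⟩
      · intro σ hσ
        obtain ⟨hσp, hσo⟩ := Finset.mem_filter.mp hσ
        have hσv : FS.Valid n σ := List.mem_permutations.mp (List.mem_toFinset.mp hσp)
        obtain ⟨hdesσ, -, -⟩ := FS.count_lemma hσv
        rw [hdesσ, (FS.orb_props hwv σ hσo).2.1]
    rw [hsum]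
    have hpow : ∀ S ∈ (FS.freeF n w).powerset,
        x ^ ((FS.pkF n w).card + S.card)
          = x ^ (FS.pkF n w).card * x ^ S.card := fun S _ => pow_add x _ _
    rw [Finset.sum_congr rfl hpow, ← Finset.mul_sum]
    have hbin : ∑ S ∈ (FS.freeF n w).powerset, x ^ S.card
        = (1 + x) ^ (FS.freeF n w).card := by
      have hp := Finset.prod_add (fun _ : ℕ => x) (fun _ : ℕ => (1:ℝ)) (FS.freeF n w)
      simp only [Finset.prod_const, one_pow, mul_one] at hp
      rw [← hp, add_comm]
    rw [hbin, hpeakw]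
    have hexp : (FS.freeF n w).card = n - 1 - 2 * (FS.pkF n w).card := by omega
    rw [hexp]
end
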